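/- arXiv:2409.07719 — 3 statements merged into one kernel-verified Lean document; each statement's English description precedes it below -/
import Mathlib

section
/- There exist a constant C > 0 and an integer k_0 such that for all k ≥ k_0, setting r = k − ⌈√(2k·log k)⌉ and B(r,k) = 2^{−(r+k−1)}·Σ_{m=0}^{k−1} C(r+k−1, m) (the probability that a Binomial(r+k−1, 1/2) random variable is at most k−1), one has (r·B(r,k) − r·C(2r−1, r)/2^{2r−1})/k ≥ 1 − √(2·log k / k) − C/√k. Here log denotes the natural logarithm and C(·,·) the binomial coefficient. -/
open Finset Real


private lemma aux_centralBinom_le (M : ℕ) :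
    (Nat.centralBinom M : ℝ) ≤ (4:ℝ) ^ M / Real.sqrt (2 * M + 1) := by
  induction M with
  | zero => simp [Nat.centralBinom]
  | succ M ih =>
    have hkey : ((M : ℝ) + 1) * (Nat.centralBinom (M + 1) : ℝ)
        = 2 * (2 * (M:ℝ) + 1) * (Nat.centralBinom M : ℝ) := by
      exact_mod_cast congrArg (fun x : ℕ => (x : ℝ)) (Nat.succ_mul_centralBinom_succ M)
    have ha0 : (0:ℝ) < Real.sqrt (2 * (M:ℝ) + 1) := Real.sqrt_pos.2 (by positivity)
    have hb0 : (0:ℝ) < Real.sqrt (2 * ((M:ℝ)+1) + 1) := Real.sqrt_pos.2 (by positivity)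
    set a := Real.sqrt (2 * (M:ℝ) + 1) with ha_def
    set b := Real.sqrt (2 * ((M:ℝ)+1) + 1) with hb_def
    have ha2 : a ^ 2 = 2 * (M:ℝ) + 1 := Real.sq_sqrt (by positivity)
    have hb2 : b ^ 2 = 2 * (M:ℝ) + 3 := by
      rw [hb_def, Real.sq_sqrt (by positivity)]; ring
    have hab : a * b ≤ 2 * (M:ℝ) + 2 := by
      nlinarith [mul_pos ha0 hb0, sq_nonneg (a*b)]
    have ihb : (Nat.centralBinom M : ℝ) * a ≤ (4:ℝ) ^ M := by
      calc (Nat.centralBinom M : ℝ) * a ≤ ((4:ℝ)^M / a) * a :=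
            mul_le_mul_of_nonneg_right ih ha0.le
        _ = (4:ℝ)^M := div_mul_cancel₀ _ ha0.ne'
    have hgoal : (Nat.centralBinom (M+1) : ℝ) * b ≤ (4:ℝ)^(M+1) := by
      have hM1 : (0:ℝ) < (M:ℝ) + 1 := by positivity
      have hcb0 : (0:ℝ) ≤ (Nat.centralBinom M : ℝ) := Nat.cast_nonneg _
      have h1 : ((M:ℝ)+1) * ((Nat.centralBinom (M+1) : ℝ) * b)
          = 2 * (Nat.centralBinom M : ℝ) * a * (a * b) := by
        linear_combination b * hkey - 2 * (Nat.centralBinom M : ℝ) * b * ha2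
      have h2 : 2 * (Nat.centralBinom M : ℝ) * a * (a * b)
          ≤ 2 * (Nat.centralBinom M : ℝ) * a * (2 * M + 2) := by
        apply mul_le_mul_of_nonneg_left hab
        positivity
      have h3 : 2 * (Nat.centralBinom M : ℝ) * a * (2 * M + 2)
          = ((M:ℝ)+1) * (4 * ((Nat.centralBinom M : ℝ) * a)) := by ring
      have h4 : ((M:ℝ)+1) * (4 * ((Nat.centralBinom M : ℝ) * a))
          ≤ ((M:ℝ)+1) * (4:ℝ)^(M+1) := by
        apply mul_le_mul_of_nonneg_left _ hM1.le
        calc 4 * ((Nat.centralBinom M : ℝ) * a) ≤ 4 * (4:ℝ)^M := by linarith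
          _ = (4:ℝ)^(M+1) := by ring
      have := le_of_mul_le_mul_left (by linarith : ((M:ℝ)+1) * ((Nat.centralBinom (M+1) : ℝ) * b) ≤ ((M:ℝ)+1) * (4:ℝ)^(M+1)) hM1
      exact this
    have hfin : (Nat.centralBinom (M+1) : ℝ) ≤ (4:ℝ)^(M+1) / b := (le_div_iff₀ hb0).2 hgoal
    convert hfin using 3
    push_cast; ring

private lemma aux_choose_half_le (n : ℕ) :
    (n.choose (n / 2) : ℝ) ≤ (2:ℝ) ^ n / Real.sqrt ((n:ℝ) + 1) := by
  rcases Nat.even_or_odd n with ⟨M, hM⟩ | ⟨M, hM⟩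
  · subst hM
    have h1 : (M + M) / 2 = M := by omega
    rw [h1]
    have h2 : (M+M).choose M = Nat.centralBinom M := by rw [Nat.centralBinom]; congr 1; omega
    rw [h2]
    calc (Nat.centralBinom M : ℝ) ≤ (4:ℝ)^M / Real.sqrt (2*M+1) := aux_centralBinom_le M
      _ = (2:ℝ)^(M+M) / Real.sqrt ((M:ℝ)+M+1) := by
          congr 1
          · rw [show (4:ℝ) = 2^2 by norm_num, ← pow_mul]; congr 1; omega
          · congr 1; push_cast; ring
      _ = (2:ℝ)^(M+M) / Real.sqrt (((M+M:ℕ):ℝ)+1) := by push_cast; ring_nf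
  · subst hM
    have h1 : (2*M + 1) / 2 = M := by omega
    rw [h1]
    have h2 : 2 * (2*M+1).choose M = Nat.centralBinom (M+1) := by
      rw [Nat.centralBinom]
      have h3 : 2*(M+1) = (2*M+1) + 1 := by omega
      rw [h3]
      have h4 : (2*M+1).choose (M+1) = (2*M+1).choose M := by
        rw [← Nat.choose_symm (by omega : M + 1 ≤ 2*M+1)]; congr 1; omega
      rw [Nat.choose_succ_succ]
      simp only [Nat.succ_eq_add_one]
      omega
    have h2R : ((2*M+1).choose M : ℝ) = (Nat.centralBinom (M+1) : ℝ) / 2 := by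
      have := congrArg (fun x : ℕ => (x:ℝ)) h2
      push_cast at this; linarith
    rw [h2R]
    have hb := aux_centralBinom_le (M+1)
    push_cast at hb
    have hle : Real.sqrt (((2*M+1:ℕ):ℝ)+1) ≤ Real.sqrt (2*((M:ℝ)+1)+1) := by
      apply Real.sqrt_le_sqrt; push_cast; linarith
    have hsp : (0:ℝ) < Real.sqrt (((2*M+1:ℕ):ℝ)+1) := Real.sqrt_pos.2 (by positivity)
    have hsp2 : (0:ℝ) < Real.sqrt (2*((M:ℝ)+1)+1) := Real.sqrt_pos.2 (by positivity)
    calc (Nat.centralBinom (M+1) : ℝ) / 2 ≤ ((4:ℝ)^(M+1) / Real.sqrt (2*((M:ℝ)+1)+1)) / 2 := by linarith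
      _ = ((4:ℝ)^(M+1)/2) / Real.sqrt (2*((M:ℝ)+1)+1) := by ring
      _ ≤ ((4:ℝ)^(M+1)/2) / Real.sqrt (((2*M+1:ℕ):ℝ)+1) := by
          apply div_le_div_of_nonneg_left _ hsp hle
          positivity
      _ = (2:ℝ)^(2*M+1) / Real.sqrt (((2*M+1:ℕ):ℝ)+1) := by
          congr 1
          rw [show (4:ℝ) = 2^2 by norm_num, ← pow_mul]
          rw [show 2*(M+1) = (2*M+1)+1 by omega, pow_succ]
          ring

private lemma aux_choose_eq (n m : ℕ) :
    (n.choose (m + 1) : ℝ) = (n.choose m : ℝ) * (((n - m : ℕ) : ℝ) / ((m:ℝ) + 1)) := by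
  have hid : (n.choose (m + 1) : ℝ) * ((m:ℝ) + 1) = (n.choose m : ℝ) * ((n - m : ℕ) : ℝ) := by
    exact_mod_cast congrArg (fun x : ℕ => (x:ℝ)) (Nat.choose_succ_right_eq n m)
  have hm0 : (0:ℝ) < (m:ℝ) + 1 := by positivity
  field_simp
  linarith

private lemma aux_decay (n a : ℕ) (h : n ≤ 2 * a) (t : ℕ) :
    (n.choose (a + t) : ℝ) ≤ (n.choose a : ℝ) * Real.exp (-(t : ℝ)^2 / ((a : ℝ) + t)) := by
  induction t with
  | zero => simp
  | succ t ih =>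
    have hch : (n.choose (a + t + 1) : ℝ)
        = (n.choose (a + t) : ℝ) * (((n - (a + t) : ℕ) : ℝ) / (((a + t : ℕ):ℝ) + 1)) :=
      aux_choose_eq n (a + t)
    have hd0 : (0:ℝ) < (a:ℝ) + t + 1 := by positivity
    have hcc : (((a + t : ℕ):ℝ) + 1) = (a:ℝ) + t + 1 := by push_cast; ring
    have hratio : ((n - (a + t) : ℕ) : ℝ) / ((a:ℝ) + t + 1)
        ≤ Real.exp (-(2 * (t:ℝ) + 1) / ((a:ℝ) + t + 1)) := by
      by_cases hc : a + t + 1 ≤ n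
      · have hcast : ((n - (a+t) : ℕ) : ℝ) = (n:ℝ) - (a:ℝ) - (t:ℝ) := by
          have h5 : (n - (a+t) : ℕ) + (a + t) = n := Nat.sub_add_cancel (by omega)
          have h6 := congrArg (fun x : ℕ => (x:ℝ)) h5
          push_cast at h6; linarith
        have h2a : (n:ℝ) ≤ 2 * (a:ℝ) := by exact_mod_cast h
        have h6 : ((n - (a+t) : ℕ) : ℝ) / ((a:ℝ) + t + 1) ≤ ((a:ℝ) - t) / ((a:ℝ) + t + 1) := by
          gcongr
          linarith
        have h7 : ((a:ℝ) - t) / ((a:ℝ) + t + 1) = -(2*(t:ℝ)+1)/((a:ℝ)+t+1) + 1 := by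
          field_simp
          ring
        calc ((n - (a+t) : ℕ) : ℝ) / ((a:ℝ) + t + 1) ≤ ((a:ℝ) - t) / ((a:ℝ) + t + 1) := h6
          _ = -(2*(t:ℝ)+1)/((a:ℝ)+t+1) + 1 := h7
          _ ≤ Real.exp (-(2 * (t:ℝ) + 1) / ((a:ℝ) + t + 1)) := Real.add_one_le_exp _
      · have h0 : n - (a+t) = 0 := by omega
        rw [h0]
        simp only [Nat.cast_zero, zero_div]
        positivity
    have hexpstep : Real.exp (-(t:ℝ)^2 / ((a:ℝ) + t)) * Real.exp (-(2 * (t:ℝ) + 1) / ((a:ℝ) + t + 1))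
        ≤ Real.exp (-((t:ℝ)+1)^2 / ((a:ℝ) + t + 1)) := by
      rw [← Real.exp_add]
      apply Real.exp_le_exp.2
      rcases Nat.eq_zero_or_pos (a + t) with h0 | hpos
      · have ha0 : a = 0 := by omega
        have ht0 : t = 0 := by omega
        subst ha0; subst ht0; norm_num
      · have hat : (0:ℝ) < (a:ℝ) + t := by
          have : (0:ℝ) < ((a + t : ℕ):ℝ) := by exact_mod_cast hpos
          push_cast at this; linarith
        have hmono : (t:ℝ)^2 / ((a:ℝ) + t + 1) ≤ (t:ℝ)^2 / ((a:ℝ) + t) :=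
          div_le_div_of_nonneg_left (by positivity) hat (by linarith)
        have hsplit : -((t:ℝ)+1)^2 / ((a:ℝ) + t + 1)
            = -(t:ℝ)^2 / ((a:ℝ)+t+1) + -(2 * (t:ℝ) + 1) / ((a:ℝ) + t + 1) := by
          field_simp
          ring
        rw [hsplit]
        have : -(t:ℝ)^2 / ((a:ℝ)+t) ≤ -(t:ℝ)^2/((a:ℝ)+t+1) := by
          rw [neg_div, neg_div]
          linarith
        linarith
    have hgoal : (n.choose (a + t + 1) : ℝ)
        ≤ (n.choose a : ℝ) * Real.exp (-((t:ℝ)+1)^2 / ((a:ℝ) + t + 1)) := by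
      rw [hch, hcc]
      calc (n.choose (a + t) : ℝ) * (((n - (a + t) : ℕ) : ℝ) / ((a:ℝ) + t + 1))
          ≤ ((n.choose a : ℝ) * Real.exp (-(t : ℝ)^2 / ((a : ℝ) + t)))
            * Real.exp (-(2 * (t:ℝ) + 1) / ((a:ℝ) + t + 1)) := by
            apply mul_le_mul ih hratio (by positivity) (by positivity)
        _ = (n.choose a : ℝ) * (Real.exp (-(t : ℝ)^2 / ((a : ℝ) + t))
            * Real.exp (-(2 * (t:ℝ) + 1) / ((a:ℝ) + t + 1))) := by ring
        _ ≤ (n.choose a : ℝ) * Real.exp (-((t:ℝ)+1)^2 / ((a:ℝ) + t + 1)) :=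
            mul_le_mul_of_nonneg_left hexpstep (Nat.cast_nonneg _)
    have heq : a + (t + 1) = a + t + 1 := rfl
    rw [heq]
    convert hgoal using 3 <;> push_cast <;> ring

private lemma aux_choose_eq' (n m : ℕ) :
    (n.choose (m + 1) : ℝ) = (n.choose m : ℝ) * (((n - m : ℕ) : ℝ) / ((m:ℝ) + 1)) := by
  have hid : (n.choose (m + 1) : ℝ) * ((m:ℝ) + 1) = (n.choose m : ℝ) * ((n - m : ℕ) : ℝ) := by
    exact_mod_cast congrArg (fun x : ℕ => (x:ℝ)) (Nat.choose_succ_right_eq n m)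
  have hm0 : (0:ℝ) < (m:ℝ) + 1 := by positivity
  field_simp
  linarith

private lemma aux_tail (n k : ℕ) (h1 : k ≤ n) (h2 : n ≤ 2 * k) :
    (∑ m ∈ Finset.Ico k (n + 1), (n.choose m : ℝ))
      ≤ (n.choose k : ℝ) * (((k:ℝ) + 1) / (2 * (k:ℝ) + 1 - n)) := by
  have hk1 : (0:ℝ) < (k:ℝ) + 1 := by positivity
  have hkn : (k:ℝ) ≤ n := by exact_mod_cast h1
  have hn2k : (n:ℝ) ≤ 2 * k := by exact_mod_cast h2
  set q : ℝ := ((n:ℝ) - k) / ((k:ℝ) + 1) with hq_def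
  have hq0 : 0 ≤ q := div_nonneg (by linarith) hk1.le
  have hq1 : q < 1 := by
    rw [hq_def, div_lt_one hk1]
    linarith
  have hgeom : ∀ j : ℕ, (n.choose (k + j) : ℝ) ≤ (n.choose k : ℝ) * q ^ j := by
    intro j
    induction j with
    | zero => simp
    | succ j ih =>
      have hch : (n.choose (k + j + 1) : ℝ)
          = (n.choose (k + j) : ℝ) * (((n - (k + j) : ℕ) : ℝ) / (((k + j : ℕ):ℝ) + 1)) :=
        aux_choose_eq' n (k + j)
      have hr : ((n - (k + j) : ℕ) : ℝ) / (((k + j : ℕ):ℝ) + 1) ≤ q := by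
        rw [hq_def]
        apply div_le_div₀ (by linarith)
        · calc ((n - (k + j) : ℕ) : ℝ) ≤ ((n - k : ℕ) : ℝ) := by
                exact_mod_cast Nat.sub_le_sub_left (Nat.le_add_right k j) n
            _ = (n:ℝ) - k := by
                have := Nat.sub_add_cancel h1
                have h6 := congrArg (fun x : ℕ => (x:ℝ)) this
                push_cast at h6; linarith
        · exact hk1
        · push_cast; linarith
      have heq : k + (j + 1) = k + j + 1 := rfl
      rw [heq, hch]
      calc (n.choose (k + j) : ℝ) * (((n - (k + j) : ℕ) : ℝ) / (((k + j : ℕ):ℝ) + 1))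
          ≤ ((n.choose k : ℝ) * q ^ j) * q := by
            apply mul_le_mul ih hr (by positivity) (by positivity)
        _ = (n.choose k : ℝ) * q ^ (j + 1) := by ring
  rw [Finset.sum_Ico_eq_sum_range]
  have hsum : ∑ j ∈ Finset.range (n + 1 - k), (n.choose (k + j) : ℝ)
      ≤ (n.choose k : ℝ) * ∑ j ∈ Finset.range (n + 1 - k), q ^ j := by
    rw [Finset.mul_sum]
    exact Finset.sum_le_sum fun j _ => hgeom j
  have h1q0 : (0:ℝ) < 1 - q := by linarith
  have hgs : ∑ j ∈ Finset.range (n + 1 - k), q ^ j ≤ 1 / (1 - q) := by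
    rw [geom_sum_eq hq1.ne]
    have e : (q ^ (n + 1 - k) - 1) / (q - 1) = (1 - q ^ (n + 1 - k)) / (1 - q) := by
      rw [← neg_div_neg_eq, neg_sub, neg_sub]
    rw [e]
    have hqp : 0 ≤ q ^ (n + 1 - k) := by positivity
    gcongr
    linarith
  have hfin : (n.choose k : ℝ) * ∑ j ∈ Finset.range (n + 1 - k), q ^ j
      ≤ (n.choose k : ℝ) * (1 / (1 - q)) :=
    mul_le_mul_of_nonneg_left hgs (Nat.cast_nonneg _)
  have h1q : 1 - q = (2 * (k:ℝ) + 1 - n) / ((k:ℝ) + 1) := by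
    rw [hq_def]
    field_simp
    ring
  have he : 1 / (1 - q) = ((k:ℝ) + 1) / (2 * (k:ℝ) + 1 - n) := by
    rw [h1q, one_div_div]
  rw [he] at hfin
  exact hsum.trans hfin

set_option maxHeartbeats 1000000 in
/-- There exist `C > 0` and `k₀` such that for all `k ≥ k₀`, with
`r = k − ⌈√(2k·log k)⌉` and `B(r,k) = 2^{−(r+k−1)}·Σ_{m=0}^{k−1} C(r+k−1, m)`,
`(r·B(r,k) − r·C(2r−1,r)/2^{2r−1})/k ≥ 1 − √(2·log k / k) − C/√k`. -/
theorem competitive_ratio_lower_bound_large_k :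
    ∃ (C : ℝ) (k₀ : ℕ), 0 < C ∧ ∀ k : ℕ, k₀ ≤ k →
      let r : ℕ := k - ⌈Real.sqrt (2 * k * Real.log k)⌉₊
      let B : ℝ := (∑ m ∈ Finset.range k, (Nat.choose (r + k - 1) m : ℝ)) / 2 ^ (r + k - 1)
      ((r : ℝ) * B - (r : ℝ) * (Nat.choose (2 * r - 1) r : ℝ) / 2 ^ (2 * r - 1)) / (k : ℝ)
        ≥ 1 - Real.sqrt (2 * Real.log k / k) - C / Real.sqrt k := by
  refine ⟨5, 4096, by norm_num, ?_⟩
  intro k hk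
  intro r B
  set s : ℕ := ⌈Real.sqrt (2 * k * Real.log k)⌉₊ with hs_def
  have hr_def : r = k - s := rfl
  have hkR : (4096:ℝ) ≤ (k:ℝ) := by exact_mod_cast hk
  have hk0 : (0:ℝ) < (k:ℝ) := by linarith
  have hek : Real.exp 1 ≤ (k:ℝ) := by
    have := Real.exp_one_lt_d9
    linarith
  have hlog1 : 1 ≤ Real.log k := (Real.le_log_iff_exp_le hk0).2 hek
  have hsqrtk64 : (64:ℝ) ≤ Real.sqrt k := by
    have h := Real.sqrt_le_sqrt hkR
    rwa [show (4096:ℝ) = 64^2 by norm_num, Real.sqrt_sq (by norm_num : (0:ℝ) ≤ 64)] at h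
  have hsq : Real.sqrt k ^ 2 = (k:ℝ) := Real.sq_sqrt hk0.le
  have hsqrt_pos : (0:ℝ) < Real.sqrt k := by linarith
  have hlog_le : Real.log k ≤ 2 * Real.sqrt k := by
    have h1 : Real.log (Real.sqrt k) ≤ Real.sqrt k - 1 := Real.log_le_sub_one_of_pos hsqrt_pos
    have h2 : Real.log (Real.sqrt k) = Real.log k / 2 := Real.log_sqrt hk0.le
    linarith
  set x : ℝ := Real.sqrt (2 * k * Real.log k) with hx_def
  have hx0 : 0 ≤ x := Real.sqrt_nonneg _
  have hx_sq : x ^ 2 = 2 * k * Real.log k := Real.sq_sqrt (by positivity)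
  have hx_ub : x ≤ (k:ℝ)/2 - 1 := by
    have h1 : 2 * (k:ℝ) * Real.log k ≤ ((k:ℝ)/2 - 1)^2 := by
      have e2 : (k:ℝ) = Real.sqrt k ^ 2 := hsq.symm
      set L := Real.log (k:ℝ) with hLdef
      rw [e2]
      nlinarith [hlog_le, hsqrtk64, hsqrt_pos,
        mul_le_mul_of_nonneg_left hlog_le (by positivity : (0:ℝ) ≤ 2 * Real.sqrt k ^ 2),
        mul_nonneg (by linarith : (0:ℝ) ≤ Real.sqrt k - 64)
          (by positivity : (0:ℝ) ≤ Real.sqrt k ^ 3),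
        mul_nonneg (by linarith : (0:ℝ) ≤ 12 * Real.sqrt k - 1) (sq_nonneg (Real.sqrt k))]
    calc x ≤ Real.sqrt (((k:ℝ)/2 - 1)^2) := Real.sqrt_le_sqrt h1
      _ = (k:ℝ)/2 - 1 := Real.sqrt_sq (by linarith)
  have hs_lb : x ≤ (s:ℝ) := Nat.le_ceil x
  have hs_ub : (s:ℝ) ≤ x + 1 := (Nat.ceil_lt_add_one hx0).le
  have hs_half : (s:ℝ) ≤ (k:ℝ)/2 := by linarith
  have hx_lb : Real.sqrt k ≤ x := by
    apply Real.sqrt_le_sqrt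
    nlinarith [mul_le_mul_of_nonneg_left hlog1 (by linarith : (0:ℝ) ≤ 2*(k:ℝ))]
  have hs64 : (64:ℝ) ≤ (s:ℝ) := by linarith
  have hsk_lt : s < k := by
    have h : (s:ℝ) < (k:ℝ) := by linarith
    exact_mod_cast h
  have hs64n : 64 ≤ s := by exact_mod_cast hs64
  -- the natural number n
  set n : ℕ := r + k - 1 with hn_def
  have hn_eq : n = 2 * k - s - 1 := by omega
  have hkn' : k ≤ n := by omega
  have hn2k : n ≤ 2 * k := by omega
  have hnR : (n:ℝ) = 2*(k:ℝ) - s - 1 := by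
    have h : n + s + 1 = 2 * k := by omega
    have h2 := congrArg (fun m : ℕ => (m:ℝ)) h
    push_cast at h2; linarith
  set c0 : ℕ := (n+1)/2 with hc0
  set t : ℕ := k - c0 with ht
  have hct : c0 + t = k := by omega
  have hnc : n ≤ 2 * c0 := by omega
  have h2t : s ≤ 2 * t := by omega
  have htR : (c0:ℝ) + t = k := by exact_mod_cast hct
  have hB : B = (∑ m ∈ Finset.range k, (n.choose m : ℝ)) / 2 ^ n := rfl
  clear_value t c0 n B r s
  -- central binomial bound for n
  have hmid_choose : (n.choose c0 : ℝ) ≤ (2:ℝ)^n / Real.sqrt ((n:ℝ)+1) := by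
    have hsym : n.choose (n/2) = n.choose c0 := by
      rw [show n/2 = n - c0 from by omega]
      exact Nat.choose_symm (by omega)
    rw [← hsym]
    exact aux_choose_half_le n
  -- decay bound
  have hdec := aux_decay n c0 hnc t
  rw [hct, htR] at hdec
  -- exponential bound
  have hexp : Real.exp (-(t:ℝ)^2 / (k:ℝ)) ≤ 1 / Real.sqrt k := by
    have ht2 : (s:ℝ) ≤ 2 * (t:ℝ) := by exact_mod_cast h2t
    have ht_sq : 2 * (k:ℝ) * Real.log k ≤ 4 * (t:ℝ)^2 := by nlinarith [hx_sq, hs_lb, hx0]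
    have harg : -(t:ℝ)^2 / (k:ℝ) ≤ -(Real.log k / 2) := by
      rw [neg_div, neg_le_neg_iff]
      rw [div_le_div_iff₀ (by norm_num : (0:ℝ) < 2) hk0]
      linarith
    calc Real.exp (-(t:ℝ)^2/(k:ℝ)) ≤ Real.exp (-(Real.log k/2)) := Real.exp_le_exp.2 harg
      _ = 1 / Real.sqrt k := by
          rw [Real.exp_neg]
          congr 1
          rw [Real.sqrt_eq_rpow, Real.rpow_def_of_pos hk0]
          congr 1
          ring
  -- bound on choose n k
  have hCnk : (n.choose k : ℝ) ≤ (2:ℝ)^n / (k:ℝ) := by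
    have h1 : (n.choose k:ℝ) ≤ ((2:ℝ)^n / Real.sqrt ((n:ℝ)+1)) * (1 / Real.sqrt k) := by
      calc (n.choose k:ℝ) ≤ (n.choose c0:ℝ) * Real.exp (-(t:ℝ)^2/(k:ℝ)) := hdec
        _ ≤ ((2:ℝ)^n / Real.sqrt ((n:ℝ)+1)) * (1/Real.sqrt k) :=
            mul_le_mul hmid_choose hexp (Real.exp_nonneg _) (by positivity)
    have h2 : Real.sqrt (k:ℝ) ≤ Real.sqrt ((n:ℝ)+1) := by
      apply Real.sqrt_le_sqrt
      have : (k:ℝ) ≤ (n:ℝ) := by exact_mod_cast hkn'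
      linarith
    have h3 : ((2:ℝ)^n / Real.sqrt ((n:ℝ)+1)) * (1 / Real.sqrt k)
        ≤ ((2:ℝ)^n / Real.sqrt k) * (1 / Real.sqrt k) := by
      gcongr
    have h4 : ((2:ℝ)^n / Real.sqrt k) * (1 / Real.sqrt k) = (2:ℝ)^n / (Real.sqrt k * Real.sqrt k) := by
      rw [div_mul_div_comm, mul_one]
    rw [h4, Real.mul_self_sqrt hk0.le] at h3
    linarith
  -- tail bound
  have h2k1n : 2 * (k:ℝ) + 1 - (n:ℝ) = (s:ℝ) + 2 := by rw [hnR]; ring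
  have htail := aux_tail n k hkn' hn2k
  rw [h2k1n] at htail
  have hpow_pos : (0:ℝ) < (2:ℝ)^n := by positivity
  have hT : (∑ m ∈ Finset.Ico k (n+1), (n.choose m : ℝ)) ≤ (2:ℝ)^n * (2 / Real.sqrt k) := by
    have hs2 : (0:ℝ) < (s:ℝ) + 2 := by linarith
    have step1 : (n.choose k : ℝ) * (((k:ℝ)+1)/((s:ℝ)+2))
        ≤ ((2:ℝ)^n/(k:ℝ)) * (((k:ℝ)+1)/((s:ℝ)+2)) := by
      apply mul_le_mul_of_nonneg_right hCnk
      positivity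
    have step2 : ((2:ℝ)^n/(k:ℝ)) * (((k:ℝ)+1)/((s:ℝ)+2)) ≤ (2:ℝ)^n * (2 / Real.sqrt k) := by
      rw [div_mul_div_comm, mul_div_assoc]
      apply mul_le_mul_of_nonneg_left _ hpow_pos.le
      rw [div_le_div_iff₀ (by positivity) hsqrt_pos]
      have hks : Real.sqrt k ≤ (s:ℝ) + 2 := by linarith
      nlinarith [mul_le_mul_of_nonneg_left hks (by linarith : (0:ℝ) ≤ 2*(k:ℝ)),
        mul_nonneg (by linarith : (0:ℝ) ≤ (k:ℝ) - 1) hsqrt_pos.le]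
    exact (htail.trans step1).trans step2
  -- B lower bound
  have hBsum : (∑ m ∈ Finset.range k, (n.choose m:ℝ))
      + (∑ m ∈ Finset.Ico k (n+1), (n.choose m:ℝ)) = (2:ℝ)^n := by
    rw [Finset.range_eq_Ico, Finset.sum_Ico_consecutive _ (Nat.zero_le k) (by omega : k ≤ n+1),
      ← Finset.range_eq_Ico]
    exact_mod_cast congrArg (fun m : ℕ => (m:ℝ)) (Nat.sum_range_choose n)
  have hB_ge : (1:ℝ) - 2/Real.sqrt k ≤ B := by
    rw [hB, le_div_iff₀ hpow_pos]
    have key : ((1:ℝ) - 2/Real.sqrt k) * 2^n = 2^n - 2^n * (2/Real.sqrt k) := by ring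
    rw [key]
    linarith
  -- middle term bound
  have hr1 : 1 ≤ r := by omega
  have h2r : 2 * Nat.choose (2*r - 1) r = Nat.centralBinom r := by
    obtain ⟨v, rfl⟩ : ∃ v, r = v + 1 := ⟨r - 1, by omega⟩
    have h1 : 2*(v+1) - 1 = 2*v + 1 := by omega
    have key := Nat.choose_succ_succ (2*v+1) v
    simp only [Nat.succ_eq_add_one] at key
    have h3 : (2*v+1).choose v = (2*v+1).choose (v+1) := by
      rw [← Nat.choose_symm (by omega : v+1 ≤ 2*v+1)]
      congr 1
      omega
    have hcb : Nat.centralBinom (v+1) = (2*(v+1)).choose (v+1) := rfl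
    have h2 : 2*(v+1) = 2*v+1+1 := by omega
    rw [h1, hcb, h2]
    omega
  have hrR : (r:ℝ) = (k:ℝ) - s := by
    rw [hr_def, Nat.cast_sub hsk_lt.le]
  have hrk2 : (k:ℝ)/2 ≤ (r:ℝ) := by rw [hrR]; linarith
  have hmid : (Nat.choose (2*r-1) r : ℝ) / 2^(2*r-1) ≤ 2 / Real.sqrt k := by
    have hcb := aux_centralBinom_le r
    have hsq2 : Real.sqrt (k:ℝ) ≤ Real.sqrt (2*(r:ℝ)+1) := by
      apply Real.sqrt_le_sqrt; linarith
    have hc2 : (Nat.choose (2*r-1) r : ℝ) = (Nat.centralBinom r : ℝ)/2 := by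
      have h := congrArg (fun m : ℕ => (m:ℝ)) h2r
      push_cast at h; linarith
    have hpow : (2:ℝ)^(2*r-1) = (4:ℝ)^r / 2 := by
      have h5 : 2*r = 2*r - 1 + 1 := by omega
      calc (2:ℝ)^(2*r-1) = 2^(2*r-1+1)/2 := by rw [pow_succ]; ring
        _ = (4:ℝ)^r/2 := by
            rw [← h5, show (4:ℝ)^r = 2^(2*r) from by
              rw [show (4:ℝ) = 2^2 by norm_num, ← pow_mul]]
    rw [hc2, hpow]
    have h4 : (0:ℝ) < (4:ℝ)^r := by positivity
    have hsp : (0:ℝ) < Real.sqrt (2*(r:ℝ)+1) := by linarith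
    have e1 : (Nat.centralBinom r : ℝ)/2 / ((4:ℝ)^r/2) = (Nat.centralBinom r : ℝ) / (4:ℝ)^r := by
      field_simp
    rw [e1]
    calc (Nat.centralBinom r : ℝ) / (4:ℝ)^r ≤ ((4:ℝ)^r / Real.sqrt (2*(r:ℝ)+1)) / (4:ℝ)^r := by
          gcongr
      _ = 1 / Real.sqrt (2*(r:ℝ)+1) := by
          field_simp
      _ ≤ 1 / Real.sqrt k := one_div_le_one_div_of_le hsqrt_pos hsq2
      _ ≤ 2 / Real.sqrt k := by
          gcongr <;> norm_num
  -- final assembly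
  have hrk_le : (r:ℝ) ≤ (k:ℝ) := by exact_mod_cast Nat.cast_le.2 (by omega : r ≤ k)
  have hr_pos : (0:ℝ) ≤ (r:ℝ) := Nat.cast_nonneg r
  have hksqrt : (k:ℝ)/Real.sqrt k = Real.sqrt k := by
    rw [eq_comm, eq_div_iff hsqrt_pos.ne']
    exact Real.mul_self_sqrt hk0.le
  have hxk : x = Real.sqrt (2*Real.log k/(k:ℝ)) * k := by
    rw [hx_def, show 2*(k:ℝ)*Real.log k = (2*Real.log k/(k:ℝ)) * (k:ℝ)^2 from by field_simp,
      Real.sqrt_mul (by positivity) , Real.sqrt_sq hk0.le]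
  have e1 : (r:ℝ) - (r:ℝ)*(2/Real.sqrt k) ≤ (r:ℝ)*B := by
    nlinarith [mul_le_mul_of_nonneg_left hB_ge hr_pos]
  have e2 : (r:ℝ)*((Nat.choose (2*r-1) r:ℝ)/2^(2*r-1)) ≤ (k:ℝ)*(2/Real.sqrt k) := by
    apply mul_le_mul hrk_le hmid (by positivity) (by positivity)
  have e3 : (r:ℝ)*(2/Real.sqrt k) ≤ (k:ℝ)*(2/Real.sqrt k) :=
    mul_le_mul_of_nonneg_right hrk_le (by positivity)
  rw [ge_iff_le, le_div_iff₀ hk0]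
  have ering : (r:ℝ)*(Nat.choose (2*r-1) r:ℝ)/2^(2*r-1)
      = (r:ℝ)*((Nat.choose (2*r-1) r:ℝ)/2^(2*r-1)) := by ring
  rw [ering]
  have hLHS : (1 - Real.sqrt (2*Real.log k/(k:ℝ)) - 5/Real.sqrt k) * (k:ℝ)
      = (k:ℝ) - Real.sqrt (2*Real.log k/(k:ℝ))*(k:ℝ) - 5*((k:ℝ)/Real.sqrt k) := by ring
  rw [hLHS, hksqrt]
  have ekq : (k:ℝ)*(2/Real.sqrt k) = 2*Real.sqrt k := by
    rw [show (k:ℝ)*(2/Real.sqrt k) = 2*((k:ℝ)/Real.sqrt k) from by ring, hksqrt]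
  linarith [e1, e2, e3, ekq, hrR, hs_ub, hxk, hsqrtk64, hs_lb]
end

section
/- In the pairing model, let k, i, j be integers with 1 ≤ k ≤ n, 1 ≤ i ≤ n, and j − k < i ≤ j. Then Pr(X^i > Y^{j+1−i} and Y^k > X^{i+k}) ≥ (1/2)·Pr(X^i > Y^{j+1−i}). -/
open Finset

attribute [local instance] Classical.propDecidable

/-- The `m`-th largest value among `v 0, …, v (n-1)` (with multiplicity);
equals `0` when `m > n`, matching the convention `X^m = Y^m = 0` for `m > n`. -/
noncomputable def kthLargest {n : ℕ} (v : Fin n → ℝ) (m : ℕ) : ℝ :=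
  sSup {x : ℝ | m ≤ (Finset.univ.filter (fun i => x ≤ v i)).card}

/-- The `X`-set of the assignment `σ`: for each pair `(a i, b i)`, the value `a i` if
`σ i = true`, and `b i` otherwise. -/
def Xvals {n : ℕ} (a b : Fin n → ℝ) (σ : Fin n → Bool) : Fin n → ℝ :=
  fun i => if σ i then a i else b i

/-- The `Y`-set of the assignment `σ`: the values not placed in the `X`-set. -/
def Yvals {n : ℕ} (a b : Fin n → ℝ) (σ : Fin n → Bool) : Fin n → ℝ :=
  fun i => if σ i then b i else a i

/-- `X^m` under assignment `σ`. -/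
noncomputable def XS {n : ℕ} (a b : Fin n → ℝ) (σ : Fin n → Bool) (m : ℕ) : ℝ :=
  kthLargest (Xvals a b σ) m

/-- `Y^m` under assignment `σ`. -/
noncomputable def YS {n : ℕ} (a b : Fin n → ℝ) (σ : Fin n → Bool) (m : ℕ) : ℝ :=
  kthLargest (Yvals a b σ) m

/-- The probability of an event under the uniform random assignment: each of the `n` pairs
is independently assigned with probability `1/2` each way. -/
noncomputable def Pr {n : ℕ} (E : (Fin n → Bool) → Prop) : ℝ :=
  ((Finset.univ.filter E).card : ℝ) / 2 ^ n

section Kth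

variable {ι : Type*} [Fintype ι]

def SsetK (v : ι → ℝ) (m : ℕ) : Set ℝ := {x : ℝ | m ≤ (Finset.univ.filter (fun i => x ≤ v i)).card}

noncomputable def kthG (v : ι → ℝ) (m : ℕ) : ℝ := sSup (SsetK v m)

lemma kthLargest_eq_kthG {n : ℕ} (v : Fin n → ℝ) (m : ℕ) : kthLargest v m = kthG v m := rfl

lemma kth_isGreatest (v : ι → ℝ) (m : ℕ) (h1 : 1 ≤ m) (hm : m ≤ Fintype.card ι) :
    IsGreatest (SsetK v m) (kthG v m) ∧ kthG v m ∈ Set.range v := by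
  classical
  have hne : Nonempty ι := Fintype.card_pos_iff.mp (lt_of_lt_of_le h1 hm)
  have hW : (Finset.univ.image v).Nonempty := (Finset.univ_nonempty).image v
  set W := Finset.univ.image v with hWdef
  set F := W.filter (fun y => m ≤ (Finset.univ.filter (fun i => y ≤ v i)).card) with hFdef
  have hFne : F.Nonempty := by
    refine ⟨W.min' hW, ?_⟩
    rw [hFdef, mem_filter]
    refine ⟨W.min'_mem hW, ?_⟩
    have : (Finset.univ.filter (fun i => W.min' hW ≤ v i)) = Finset.univ := by
      apply Finset.eq_univ_of_forall
      intro i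
      simp only [mem_filter, mem_univ, true_and]
      exact W.min'_le (v i) (mem_image_of_mem v (mem_univ i))
    rw [this, card_univ]
    exact hm
  set e := F.max' hFne with hedef
  have heF : e ∈ F := F.max'_mem hFne
  have heS : e ∈ SsetK v m := by
    rw [hFdef] at heF
    exact (mem_filter.mp heF).2
  have hub : ∀ x ∈ SsetK v m, x ≤ e := by
    intro x hx
    have hG : (Finset.univ.filter (fun i => x ≤ v i)).Nonempty := by
      rw [← card_pos]
      exact lt_of_lt_of_le h1 hx
    set G := Finset.univ.filter (fun i => x ≤ v i) with hGdef
    have hI : (G.image v).Nonempty := hG.image v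
    set y := (G.image v).min' hI with hydef
    have hyI : y ∈ G.image v := (G.image v).min'_mem hI
    have hxy : x ≤ y := by
      obtain ⟨l, hl, hly⟩ := mem_image.mp hyI
      rw [hGdef] at hl
      rw [← hly]
      exact (mem_filter.mp hl).2
    have hyF : y ∈ F := by
      rw [hFdef, mem_filter]
      constructor
      · obtain ⟨l, _, hly⟩ := mem_image.mp hyI
        exact hly ▸ mem_image_of_mem v (mem_univ l)
      · have hsub : G ⊆ Finset.univ.filter (fun i => y ≤ v i) := by
          intro l hl
          simp only [mem_filter, mem_univ, true_and]
          exact (G.image v).min'_le (v l) (mem_image_of_mem v hl)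
        calc m ≤ G.card := hx
          _ ≤ _ := card_le_card hsub
    exact hxy.trans (F.le_max' y hyF)
  have hgr : IsGreatest (SsetK v m) e := ⟨heS, hub⟩
  have : kthG v m = e := hgr.csSup_eq
  rw [this]
  refine ⟨hgr, ?_⟩
  have := (mem_filter.mp heF).1
  obtain ⟨l, _, hl⟩ := mem_image.mp this
  exact ⟨l, hl⟩

lemma kth_count (v : ι → ℝ) (m : ℕ) (h1 : 1 ≤ m) (hm : m ≤ Fintype.card ι) :
    m ≤ (Finset.univ.filter (fun i => kthG v m ≤ v i)).card :=
  (kth_isGreatest v m h1 hm).1.1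

lemma le_kth (v : ι → ℝ) (m : ℕ) (h1 : 1 ≤ m) (hm : m ≤ Fintype.card ι) (x : ℝ)
    (hx : m ≤ (Finset.univ.filter (fun i => x ≤ v i)).card) : x ≤ kthG v m :=
  (kth_isGreatest v m h1 hm).1.2 hx

lemma kth_mem_range (v : ι → ℝ) (m : ℕ) (h1 : 1 ≤ m) (hm : m ≤ Fintype.card ι) :
    kthG v m ∈ Set.range v := (kth_isGreatest v m h1 hm).2

lemma kth_zero_of_gt (v : ι → ℝ) (m : ℕ) (hm : Fintype.card ι < m) : kthG v m = 0 := by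
  have : SsetK v m = ∅ := by
    rw [Set.eq_empty_iff_forall_notMem]
    intro x hx
    have h1 : (Finset.univ.filter (fun i => x ≤ v i)).card ≤ Fintype.card ι := by
      rw [← card_univ]; exact card_le_card (filter_subset _ _)
    exact absurd (hx.trans h1) (not_le.mpr hm)
  rw [kthG, this, Real.sSup_empty]

lemma kth_pos (v : ι → ℝ) (m : ℕ) (hpos : ∀ i, 0 < v i) (h1 : 1 ≤ m)
    (hm : m ≤ Fintype.card ι) : 0 < kthG v m := by
  obtain ⟨l, hl⟩ := kth_mem_range v m h1 hm
  rw [← hl]; exact hpos l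

lemma kth_anti (v : ι → ℝ) (hpos : ∀ i, 0 < v i) (r r' : ℕ) (h1 : 1 ≤ r) (hrr : r ≤ r') :
    kthG v r' ≤ kthG v r := by
  by_cases hr' : r' ≤ Fintype.card ι
  · refine le_kth v r h1 (hrr.trans hr') _ ?_
    exact hrr.trans (kth_count v r' (h1.trans hrr) hr')
  · rw [kth_zero_of_gt v r' (not_le.mp hr')]
    by_cases hr : r ≤ Fintype.card ι
    · exact (kth_pos v r hpos h1 hr).le
    · rw [kth_zero_of_gt v r (not_le.mp hr)]

end Kth

section Char

variable {n : ℕ} (a b : Fin n → ℝ)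

noncomputable def theta (r : ℕ) : ℝ := kthG (Sum.elim a b) r

lemma count_exact (hinj : Function.Injective (Sum.elim a b : Fin n ⊕ Fin n → ℝ))
    (r : ℕ) (hr1 : 1 ≤ r) (hr2 : r ≤ n + n) :
    (Finset.univ.filter (fun l : Fin n ⊕ Fin n => theta a b r ≤ Sum.elim a b l)).card = r := by
  classical
  have hcard : Fintype.card (Fin n ⊕ Fin n) = n + n := by simp
  have hr2' : r ≤ Fintype.card (Fin n ⊕ Fin n) := by rw [hcard]; exact hr2
  have hge : r ≤ (Finset.univ.filter (fun l : Fin n ⊕ Fin n => theta a b r ≤ Sum.elim a b l)).card :=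
    kth_count _ r hr1 hr2'
  refine le_antisymm ?_ hge
  by_contra hlt
  push_neg at hlt
  obtain ⟨l0, hl0⟩ := kth_mem_range (Sum.elim a b) r hr1 hr2'
  set θ := theta a b r with hθdef
  set G := Finset.univ.filter (fun l : Fin n ⊕ Fin n => θ ≤ Sum.elim a b l) with hGdef
  have hl0G : l0 ∈ G := by
    rw [hGdef, mem_filter]
    exact ⟨mem_univ _, le_of_eq hl0.symm⟩
  have hl0' : Sum.elim a b l0 = θ := hl0
  set G' := G.erase l0 with hG'def
  have hcardG' : r ≤ G'.card := by
    rw [hG'def, card_erase_of_mem hl0G]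
    omega
  have hG'ne : G'.Nonempty := by rw [← card_pos]; omega
  have hIne : (G'.image (Sum.elim a b)).Nonempty := hG'ne.image _
  have hymem := (G'.image (Sum.elim a b)).min'_mem hIne
  have hθy : θ < (G'.image (Sum.elim a b)).min' hIne := by
    obtain ⟨l, hl, hly⟩ := mem_image.mp hymem
    have hlG : l ∈ G := mem_of_mem_erase hl
    have hne : l ≠ l0 := ne_of_mem_erase hl
    have h1 : θ ≤ Sum.elim a b l := (mem_filter.mp hlG).2
    have h2 : Sum.elim a b l ≠ θ := fun h => hne (hinj (h.trans hl0'.symm))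
    rw [← hly]
    exact lt_of_le_of_ne h1 (Ne.symm h2)
  have hyS : r ≤ (Finset.univ.filter (fun l : Fin n ⊕ Fin n =>
      (G'.image (Sum.elim a b)).min' hIne ≤ Sum.elim a b l)).card := by
    refine hcardG'.trans (card_le_card ?_)
    intro l hl
    simp only [mem_filter, mem_univ, true_and]
    exact (G'.image (Sum.elim a b)).min'_le _ (mem_image_of_mem _ hl)
  have hle : (G'.image (Sum.elim a b)).min' hIne ≤ θ :=
    le_kth (Sum.elim a b) r hr1 hr2' _ hyS
  exact absurd hθy (not_lt.mpr hle)

lemma count_split (σ : Fin n → Bool) (x : ℝ) :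
    (Finset.univ.filter (fun l : Fin n => x ≤ (if σ l then a l else b l))).card
      + (Finset.univ.filter (fun l : Fin n => x ≤ (if σ l then b l else a l))).card
    = (Finset.univ.filter (fun l : Fin n ⊕ Fin n => x ≤ Sum.elim a b l)).card := by
  classical
  rw [card_filter, card_filter, card_filter, Fintype.sum_sum_type]
  simp only [Sum.elim_inl, Sum.elim_inr]
  rw [← Finset.sum_add_distrib, ← Finset.sum_add_distrib]
  apply Finset.sum_congr rfl
  intro l _
  by_cases h : σ l <;> simp [h, add_comm] <;> congr!

/-- Characterization: `w^q < v^p` iff at least `p` of the top `p+q-1` values lie in `v`. -/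
lemma char_lemma (hpos : ∀ l : Fin n ⊕ Fin n, 0 < Sum.elim a b l)
    (v w : Fin n → ℝ)
    (hvpos : ∀ l, 0 < v l)
    (hsplit : ∀ x : ℝ,
      (Finset.univ.filter (fun l : Fin n => x ≤ v l)).card
        + (Finset.univ.filter (fun l : Fin n => x ≤ w l)).card
      = (Finset.univ.filter (fun l : Fin n ⊕ Fin n => x ≤ Sum.elim a b l)).card)
    (hexact : ∀ r : ℕ, 1 ≤ r → r ≤ n + n →
      (Finset.univ.filter (fun l : Fin n ⊕ Fin n => theta a b r ≤ Sum.elim a b l)).card = r)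
    (p q r : ℕ) (hp1 : 1 ≤ p) (hpn : p ≤ n) (hq1 : 1 ≤ q) (hr : p + q = r + 1)
    (hr2 : r ≤ n + n) :
    kthG w q < kthG v p ↔ p ≤ (Finset.univ.filter (fun l : Fin n => theta a b r ≤ v l)).card := by
  classical
  have hcardF : Fintype.card (Fin n) = n := by simp
  have hr1 : 1 ≤ r := by omega
  set θ := theta a b r with hθdef
  have hθpos : 0 < θ := by
    have hr2' : r ≤ Fintype.card (Fin n ⊕ Fin n) := by simp; omega
    obtain ⟨l, hl⟩ := kth_mem_range (Sum.elim a b) r hr1 hr2'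
    rw [hθdef, theta, ← hl]
    exact hpos l
  have hcnt := hexact r hr1 hr2
  rw [← hθdef] at hcnt
  have hsum := hsplit θ
  set cv := (Finset.univ.filter (fun l : Fin n => θ ≤ v l)).card with hcv
  set cw := (Finset.univ.filter (fun l : Fin n => θ ≤ w l)).card with hcw
  have hcvw : cv + cw = r := by rw [hcv, hcw, hsum, hcnt]
  constructor
  · -- direction ⇒ : by contraposition
    intro hlt
    by_contra hcvp
    push_neg at hcvp
    -- cv ≤ p - 1, so cw ≥ q
    have hcwq : q ≤ cw := by omega
    have hwq : θ ≤ kthG w q := by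
      refine le_kth w q hq1 ?_ θ ?_
      · rw [hcardF]
        -- q ≤ n since cw ≤ n
        have hcwn : cw ≤ n := by
          calc cw ≤ (univ : Finset (Fin n)).card := card_le_card (filter_subset _ _)
            _ = n := by simp
        omega
      · exact hcwq
    have hvp : kthG v p < θ := by
      by_contra hge
      push_neg at hge
      have hmem : p ≤ (Finset.univ.filter (fun l : Fin n => kthG v p ≤ v l)).card :=
        kth_count v p hp1 (by rw [hcardF]; exact hpn)
      have hsub : (Finset.univ.filter (fun l : Fin n => kthG v p ≤ v l))
          ⊆ (Finset.univ.filter (fun l : Fin n => θ ≤ v l)) := by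
        intro l hl
        simp only [mem_filter, mem_univ, true_and] at hl ⊢
        exact hge.trans hl
      have := hmem.trans (card_le_card hsub)
      omega
    exact absurd hlt (not_lt.mpr ((hvp.trans_le hwq).le))
  · intro hcvp
    have hvp : θ ≤ kthG v p := le_kth v p hp1 (by rw [hcardF]; exact hpn) θ hcvp
    have hcwq : cw ≤ q - 1 := by omega
    by_cases hq : q ≤ n
    · have hwmem : q ≤ (Finset.univ.filter (fun l : Fin n => kthG w q ≤ w l)).card :=
        kth_count w q hq1 (by rw [hcardF]; exact hq)
      have hwq : kthG w q < θ := by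
        by_contra hge
        push_neg at hge
        have hsub : (Finset.univ.filter (fun l : Fin n => kthG w q ≤ w l))
            ⊆ (Finset.univ.filter (fun l : Fin n => θ ≤ w l)) := by
          intro l hl
          simp only [mem_filter, mem_univ, true_and] at hl ⊢
          exact hge.trans hl
        have := hwmem.trans (card_le_card hsub)
        omega
      exact hwq.trans_le hvp
    · have : kthG w q = 0 := kth_zero_of_gt w q (by rw [hcardF]; omega)
      rw [this]
      exact lt_of_lt_of_le hθpos hvp

end Char

section Numeric

lemma choose_le_of_le_half (N : ℕ) (q : ℕ) : ∀ p, p ≤ q → 2*q ≤ N →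
    N.choose p ≤ N.choose q := by
  induction q with
  | zero => intro p hp _; simp_all
  | succ q ih =>
    intro p hp h
    rcases Nat.lt_or_ge p (q+1) with hlt | hge
    · exact (ih p (by omega) (by omega)).trans
        (Nat.choose_le_succ_of_lt_half_left (by omega))
    · have : p = q + 1 := by omega
      rw [this]

/-- unimodality of binomial coefficients -/
lemma choose_unimodal (N p q : ℕ) (hpq : p ≤ q) (hsum : p + q ≤ N) :
    N.choose p ≤ N.choose q := by
  rcases le_or_gt (2*q) N with hq | hq
  · exact choose_le_of_le_half N q p hpq hq
  · have hqN : q ≤ N := by omega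
    rw [← Nat.choose_symm hqN]
    exact choose_le_of_le_half N (N-q) p (by omega) (by omega)

end Numeric

section Refl

noncomputable def Dhat (N3 : ℕ) (cG : ℤ) (s : ℕ) : ℤ :=
  ∑ r ∈ range (N3+1), (N3.choose r : ℤ) * (if cG ≤ (s:ℤ) + r then 1 else -1)

lemma Dhat_mono (N3 : ℕ) (cG : ℤ) {s s' : ℕ} (h : s ≤ s') :
    Dhat N3 cG s ≤ Dhat N3 cG s' := by
  apply Finset.sum_le_sum
  intro r _
  have hc : (N3.choose r : ℤ) ≥ 0 := by positivity
  by_cases hif : cG ≤ (s:ℤ) + r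
  · have hif' : cG ≤ (s':ℤ) + r := by
      have : (s:ℤ) ≤ s' := by exact_mod_cast h
      omega
    simp [hif, hif']
  · by_cases hif' : cG ≤ (s':ℤ) + r <;> simp [hif, hif'] <;> omega

lemma Dhat_antisym (N3 : ℕ) (cG : ℤ) (s s' : ℕ)
    (h : (s:ℤ) + s' = 2*cG - N3 - 1) :
    Dhat N3 cG s' = - Dhat N3 cG s := by
  rw [Dhat, Dhat, ← Finset.sum_range_reflect]
  have hterm : ∀ r ∈ range (N3+1),
      (N3.choose (N3+1-1-r) : ℤ) * (if cG ≤ (s':ℤ) + ((N3+1-1-r : ℕ):ℤ) then 1 else -1)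
      = -((N3.choose r : ℤ) * (if cG ≤ (s:ℤ) + r then 1 else -1)) := by
    intro r hr
    have hrN : r ≤ N3 := by simpa [Nat.lt_succ_iff] using hr
    have h1 : N3 + 1 - 1 - r = N3 - r := by omega
    rw [h1, Nat.choose_symm hrN]
    have hcast : ((N3 - r : ℕ) : ℤ) = (N3:ℤ) - r := by
      have : (r:ℤ) ≤ N3 := by exact_mod_cast hrN
      omega
    rw [hcast]
    by_cases hc : cG ≤ (s:ℤ) + r
    · rw [if_neg (by omega), if_pos hc]
      ring
    · rw [if_pos (by omega), if_neg hc]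
      ring
  rw [Finset.sum_congr rfl hterm, Finset.sum_neg_distrib]

lemma bracket_le (N2 N3 : ℕ) (cG : ℤ) (σn : ℕ) (hσ : (σn:ℤ) = 2*cG - N3 - 1)
    (hσN : N2 ≤ σn) (s s' : ℕ) (hss : s + s' = σn) :
    (N2.choose s : ℤ) * Dhat N3 cG s + (N2.choose s' : ℤ) * Dhat N3 cG s' ≤ 0 := by
  have hD : Dhat N3 cG s' = - Dhat N3 cG s := by
    apply Dhat_antisym
    rw [← hσ]
    exact_mod_cast hss
  rw [hD]
  have hkey : (N2.choose s : ℤ) * Dhat N3 cG s + (N2.choose s' : ℤ) * -Dhat N3 cG s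
      = ((N2.choose s : ℤ) - N2.choose s') * Dhat N3 cG s := by ring
  rw [hkey]
  rcases le_total s s' with hle | hle
  · -- Dhat s ≤ 0, choose s' ≤ choose s
    have hDs : Dhat N3 cG s ≤ 0 := by
      have h1 : Dhat N3 cG s ≤ Dhat N3 cG s' := Dhat_mono N3 cG hle
      omega
    have hC : N2.choose s' ≤ N2.choose s := by
      by_cases hsN : s ≤ N2
      · by_cases hs'N : s' ≤ N2
        · rw [← Nat.choose_symm hs'N]
          exact choose_unimodal N2 (N2 - s') s (by omega) (by omega)
        · rw [Nat.choose_eq_zero_of_lt (by omega)]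
          exact Nat.zero_le _
      · rw [Nat.choose_eq_zero_of_lt (by omega), Nat.choose_eq_zero_of_lt (by omega)]
    have h2 : (0:ℤ) ≤ (N2.choose s : ℤ) - N2.choose s' := by
      have : (N2.choose s' : ℤ) ≤ N2.choose s := by exact_mod_cast hC
      omega
    exact mul_nonpos_of_nonneg_of_nonpos h2 hDs
  · have hDs : 0 ≤ Dhat N3 cG s := by
      have h1 : Dhat N3 cG s' ≤ Dhat N3 cG s := Dhat_mono N3 cG hle
      omega
    have hC : N2.choose s ≤ N2.choose s' := by
      by_cases hs'N : s' ≤ N2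
      · by_cases hsN : s ≤ N2
        · rw [← Nat.choose_symm hsN]
          exact choose_unimodal N2 (N2 - s) s' (by omega) (by omega)
        · rw [Nat.choose_eq_zero_of_lt (by omega)]
          exact Nat.zero_le _
      · rw [Nat.choose_eq_zero_of_lt (by omega), Nat.choose_eq_zero_of_lt (by omega)]
    have h2 : (N2.choose s : ℤ) - N2.choose s' ≤ 0 := by
      have : (N2.choose s : ℤ) ≤ N2.choose s' := by exact_mod_cast hC
      omega
    exact mul_nonpos_of_nonpos_of_nonneg h2 hDs

lemma refl_sum (N2 N3 t0 : ℕ) (cG : ℤ) (h : (N2:ℤ) + N3 + 1 + t0 ≤ 2*cG) :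
    ∑ s ∈ Ico t0 (N2+1), (N2.choose s : ℤ) * Dhat N3 cG s ≤ 0 := by
  by_cases ht : N2 + 1 ≤ t0
  · rw [Finset.Ico_eq_empty (by omega)]
    simp
  push_neg at ht
  have ht0 : t0 ≤ N2 := by omega
  set σn : ℕ := (2*cG - N3 - 1).toNat with hσdef
  have hσ : (σn:ℤ) = 2*cG - N3 - 1 := by
    rw [hσdef]
    exact Int.toNat_of_nonneg (by omega)
  have hσge : N2 + t0 ≤ σn := by
    have : ((N2 + t0 : ℕ):ℤ) ≤ σn := by push_cast; omega
    exact_mod_cast this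
  -- extend the sum
  have hext : ∑ s ∈ Ico t0 (N2+1), (N2.choose s : ℤ) * Dhat N3 cG s
      = ∑ s ∈ Ico t0 (σn - t0 + 1), (N2.choose s : ℤ) * Dhat N3 cG s := by
    apply Finset.sum_subset
    · apply Finset.Ico_subset_Ico le_rfl
      omega
    · intro s hs hns
      simp only [mem_Ico] at hs hns
      have : N2 < s := by omega
      rw [Nat.choose_eq_zero_of_lt this]
      simp
  rw [hext]
  rw [Finset.sum_Ico_eq_sum_range]
  set L : ℕ := σn - 2*t0 with hLdef
  have hL : σn - t0 + 1 - t0 = L + 1 := by omega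
  rw [hL]
  have h2S : (∑ u ∈ range (L+1), (N2.choose (t0 + u) : ℤ) * Dhat N3 cG (t0 + u))
      + (∑ u ∈ range (L+1), (N2.choose (t0 + u) : ℤ) * Dhat N3 cG (t0 + u)) ≤ 0 := by
    nth_rewrite 2 [← Finset.sum_range_reflect]
    rw [← Finset.sum_add_distrib]
    apply Finset.sum_nonpos
    intro u hu
    have huL : u ≤ L := by simpa [Nat.lt_succ_iff] using hu
    have h1 : L + 1 - 1 - u = L - u := by omega
    rw [h1]
    have hsum : (t0 + u) + (t0 + (L - u)) = σn := by omega
    exact bracket_le N2 N3 cG σn hσ (by omega) _ _ hsum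
  linarith
end Refl

section Count
variable {N : ℕ}

def cntIn (D : Finset (Fin N)) (ε : Fin N → Bool) (σ : Fin N → Bool) : ℕ :=
  (D.filter (fun l => σ l = ε l)).card

lemma count_fiber (D E : Finset (Fin N)) (hDE : Disjoint D E) (ε : Fin N → Bool) (s r : ℕ) :
    (Finset.univ.filter (fun σ : Fin N → Bool => cntIn D ε σ = s ∧ cntIn E ε σ = r)).card
      = D.card.choose s * E.card.choose r * 2^(N - D.card - E.card) := by
  classical
  set T := ((D.powersetCard s) ×ˢ (E.powersetCard r)) ×ˢ ((Finset.univ \ (D ∪ E)).powerset)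
    with hTdef
  have hcard : T.card = D.card.choose s * E.card.choose r * 2^(N - D.card - E.card) := by
    rw [hTdef, card_product, card_product, Finset.card_powersetCard,
      Finset.card_powersetCard, Finset.card_powerset, card_sdiff_of_subset (subset_univ _),
      card_union_of_disjoint hDE, card_univ, Fintype.card_fin]
    have : N - (D.card + E.card) = N - D.card - E.card := by omega
    rw [this]
  rw [← hcard]
  -- the bijection
  apply Finset.card_bij'
    (i := fun σ _ => ((D.filter (fun l => σ l = ε l), E.filter (fun l => σ l = ε l)),
       (Finset.univ \ (D ∪ E)).filter (fun l => σ l = true)))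
    (j := fun y _ => fun l => if l ∈ D ∪ E then (if l ∈ y.1.1 ∪ y.1.2 then ε l else !(ε l))
       else (if l ∈ y.2 then true else false))
  · -- hi : image in T
    intro σ hσ
    simp only [mem_filter, mem_univ, true_and] at hσ
    rw [hTdef]
    simp only [mem_product, Finset.mem_powersetCard, Finset.mem_powerset]
    exact ⟨⟨⟨filter_subset _ _, hσ.1⟩, ⟨filter_subset _ _, hσ.2⟩⟩, filter_subset _ _⟩
  · -- hj : preimage in source filter
    intro y hy
    rw [hTdef] at hy
    simp only [mem_product, Finset.mem_powersetCard, Finset.mem_powerset] at hy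
    obtain ⟨⟨⟨hU, hUcard⟩, ⟨hV, hVcard⟩⟩, hW⟩ := hy
    simp only [mem_filter, mem_univ, true_and]
    constructor
    · rw [cntIn, ← hUcard]
      congr 1
      ext l
      simp only [mem_filter]
      constructor
      · rintro ⟨hlD, hval⟩
        have hl1 : l ∈ D ∪ E := mem_union_left _ hlD
        rw [if_pos hl1] at hval
        by_contra hlU
        have hlV : l ∉ y.1.2 := fun h => (disjoint_left.mp hDE hlD) (hV h)
        rw [if_neg (by simp [hlU, hlV])] at hval
        exact (Bool.not_ne_self (ε l)) hval
      · intro hlU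
        have hlD : l ∈ D := hU hlU
        refine ⟨hlD, ?_⟩
        rw [if_pos (mem_union_left _ hlD), if_pos (mem_union_left _ hlU)]
    · rw [cntIn, ← hVcard]
      congr 1
      ext l
      simp only [mem_filter]
      constructor
      · rintro ⟨hlE, hval⟩
        have hl1 : l ∈ D ∪ E := mem_union_right _ hlE
        rw [if_pos hl1] at hval
        by_contra hlV
        have hlU : l ∉ y.1.1 := fun h => (disjoint_right.mp hDE hlE) (hU h)
        rw [if_neg (by simp [hlU, hlV])] at hval
        exact (Bool.not_ne_self (ε l)) hval
      · intro hlV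
        have hlE : l ∈ E := hV hlV
        refine ⟨hlE, ?_⟩
        rw [if_pos (mem_union_right _ hlE), if_pos (mem_union_right _ hlV)]
  · -- left inverse
    intro σ hσ
    funext l
    by_cases hl : l ∈ D ∪ E
    · simp only [if_pos hl]
      by_cases hεl : σ l = ε l
      · rw [if_pos]
        · exact hεl.symm
        · rcases mem_union.mp hl with h | h
          · exact mem_union_left _ (mem_filter.mpr ⟨h, hεl⟩)
          · exact mem_union_right _ (mem_filter.mpr ⟨h, hεl⟩)
      · rw [if_neg]
        · cases hε : ε l <;> cases hσl : σ l <;> simp_all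
        · intro hmem
          rcases mem_union.mp hmem with h | h
          · exact hεl (mem_filter.mp h).2
          · exact hεl (mem_filter.mp h).2
    · simp only [if_neg hl]
      by_cases hσl : σ l = true
      · rw [if_pos (mem_filter.mpr ⟨mem_sdiff.mpr ⟨mem_univ _, hl⟩, hσl⟩), hσl]
      · rw [if_neg]
        · simp at hσl; exact hσl.symm
        · intro hmem
          exact hσl (mem_filter.mp hmem).2
  · -- right inverse
    intro y hy
    rw [hTdef] at hy
    simp only [mem_product, Finset.mem_powersetCard, Finset.mem_powerset] at hy
    obtain ⟨⟨⟨hU, hUcard⟩, ⟨hV, hVcard⟩⟩, hW⟩ := hy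
    have hrecU : D.filter (fun l =>
        (if l ∈ D ∪ E then (if l ∈ y.1.1 ∪ y.1.2 then ε l else !(ε l))
          else (if l ∈ y.2 then true else false)) = ε l) = y.1.1 := by
      ext l
      simp only [mem_filter]
      constructor
      · rintro ⟨hlD, hval⟩
        rw [if_pos (mem_union_left _ hlD)] at hval
        by_contra hlU
        have hlV : l ∉ y.1.2 := fun h => (disjoint_left.mp hDE hlD) (hV h)
        rw [if_neg (by simp [hlU, hlV])] at hval
        exact (Bool.not_ne_self (ε l)) hval
      · intro hlU
        have hlD : l ∈ D := hU hlU
        exact ⟨hlD, by rw [if_pos (mem_union_left _ hlD), if_pos (mem_union_left _ hlU)]⟩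
    have hrecV : E.filter (fun l =>
        (if l ∈ D ∪ E then (if l ∈ y.1.1 ∪ y.1.2 then ε l else !(ε l))
          else (if l ∈ y.2 then true else false)) = ε l) = y.1.2 := by
      ext l
      simp only [mem_filter]
      constructor
      · rintro ⟨hlE, hval⟩
        rw [if_pos (mem_union_right _ hlE)] at hval
        by_contra hlV
        have hlU : l ∉ y.1.1 := fun h => (disjoint_right.mp hDE hlE) (hU h)
        rw [if_neg (by simp [hlU, hlV])] at hval
        exact (Bool.not_ne_self (ε l)) hval
      · intro hlV
        have hlE : l ∈ E := hV hlV
        exact ⟨hlE, by rw [if_pos (mem_union_right _ hlE), if_pos (mem_union_right _ hlV)]⟩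
    have hrecW : (Finset.univ \ (D ∪ E)).filter (fun l =>
        (if l ∈ D ∪ E then (if l ∈ y.1.1 ∪ y.1.2 then ε l else !(ε l))
          else (if l ∈ y.2 then true else false)) = true) = y.2 := by
      ext l
      simp only [mem_filter, mem_sdiff, mem_univ, true_and]
      constructor
      · rintro ⟨hl, hval⟩
        rw [if_neg hl] at hval
        by_contra hlW
        rw [if_neg hlW] at hval
        exact Bool.false_ne_true hval
      · intro hlW
        have hl : l ∉ D ∪ E := by
          intro hmem
          exact (mem_sdiff.mp (hW hlW)).2 hmem
        exact ⟨hl, by rw [if_neg hl, if_pos hlW]⟩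
    ext <;> simp only []
    · rw [hrecU]
    · rw [hrecV]
    · rw [hrecW]

end Count

section CountProd
variable {N : ℕ}

lemma count_product (D E : Finset (Fin N)) (hDE : Disjoint D E) (ε : Fin N → Bool)
    (P : ℕ → ℕ → Prop) :
    (Finset.univ.filter (fun σ : Fin N → Bool => P (cntIn D ε σ) (cntIn E ε σ))).card
      = ∑ p ∈ range (D.card+1) ×ˢ range (E.card+1),
          if P p.1 p.2 then D.card.choose p.1 * E.card.choose p.2 * 2^(N - D.card - E.card)
          else 0 := by
  classical
  have hmaps : ∀ σ ∈ Finset.univ.filter (fun σ : Fin N → Bool =>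
      P (cntIn D ε σ) (cntIn E ε σ)),
      (cntIn D ε σ, cntIn E ε σ) ∈ range (D.card+1) ×ˢ range (E.card+1) := by
    intro σ _
    simp only [mem_product, mem_range]
    constructor
    · have : cntIn D ε σ ≤ D.card := card_le_card (filter_subset _ _)
      omega
    · have : cntIn E ε σ ≤ E.card := card_le_card (filter_subset _ _)
      omega
  rw [Finset.card_eq_sum_card_fiberwise hmaps]
  apply Finset.sum_congr rfl
  intro p _
  rw [Finset.filter_filter]
  by_cases hP : P p.1 p.2
  · rw [if_pos hP]
    rw [← count_fiber D E hDE ε p.1 p.2]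
    congr 1
    apply Finset.filter_congr
    intro σ _
    constructor
    · rintro ⟨_, hpair⟩
      exact ⟨congrArg Prod.fst hpair, congrArg Prod.snd hpair⟩
    · rintro ⟨h1, h2⟩
      refine ⟨?_, ?_⟩
      · rw [h1, h2]; exact hP
      · rw [Prod.ext_iff]; exact ⟨h1, h2⟩
  · rw [if_neg hP]
    rw [Finset.card_eq_zero]
    rw [Finset.filter_eq_empty_iff]
    intro σ _
    rintro ⟨hPσ, hpair⟩
    have h1 := congrArg Prod.fst hpair
    have h2 := congrArg Prod.snd hpair
    simp only at h1 h2
    rw [h1, h2] at hPσ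
    exact hP hPσ

end CountProd

section Core
variable {N : ℕ}

lemma core_count (D E : Finset (Fin N)) (hDE : Disjoint D E) (ε : Fin N → Bool)
    (iF cG : ℤ)
    (H1 : (D.card:ℤ) + E.card + 1 + max iF 0 ≤ 2*cG) :
    (Finset.univ.filter (fun σ : Fin N → Bool =>
        iF ≤ (cntIn D ε σ : ℤ) ∧ cG ≤ (cntIn D ε σ : ℤ) + (cntIn E ε σ : ℤ))).card
    ≤ (Finset.univ.filter (fun σ : Fin N → Bool =>
        iF ≤ (cntIn D ε σ : ℤ) ∧ (cntIn D ε σ : ℤ) + (cntIn E ε σ : ℤ) < cG)).card := by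
  classical
  set N2 := D.card with hN2
  set N3 := E.card with hN3
  set M : ℕ → ℕ → ℕ := fun s r => N2.choose s * N3.choose r * 2^(N - N2 - N3) with hM
  have hL := count_product D E hDE ε (fun s r => iF ≤ (s:ℤ) ∧ cG ≤ (s:ℤ) + (r:ℤ))
  have hR := count_product D E hDE ε (fun s r => iF ≤ (s:ℤ) ∧ (s:ℤ) + (r:ℤ) < cG)
  set t0 := iF.toNat with ht0
  have ht0' : (t0:ℤ) = max iF 0 := Int.toNat_eq_max iF
  -- move to ℤ
  have hZ : (∑ p ∈ range (N2+1) ×ˢ range (N3+1),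
        if iF ≤ (p.1:ℤ) ∧ cG ≤ (p.1:ℤ) + (p.2:ℤ) then (M p.1 p.2 : ℤ) else 0)
      ≤ (∑ p ∈ range (N2+1) ×ˢ range (N3+1),
        if iF ≤ (p.1:ℤ) ∧ (p.1:ℤ) + (p.2:ℤ) < cG then (M p.1 p.2 : ℤ) else 0) := by
    rw [← sub_nonpos, ← Finset.sum_sub_distrib]
    have hsplit : ∀ p ∈ range (N2+1) ×ˢ range (N3+1),
        ((if iF ≤ (p.1:ℤ) ∧ cG ≤ (p.1:ℤ) + (p.2:ℤ) then (M p.1 p.2 : ℤ) else 0)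
          - (if iF ≤ (p.1:ℤ) ∧ (p.1:ℤ) + (p.2:ℤ) < cG then (M p.1 p.2 : ℤ) else 0))
        = (if iF ≤ (p.1:ℤ) then
            ((2^(N - N2 - N3) : ℤ) * (N2.choose p.1 : ℤ)) *
              ((N3.choose p.2 : ℤ) * (if cG ≤ (p.1:ℤ) + (p.2:ℤ) then 1 else -1))
          else 0) := by
      intro p _
      by_cases hiF : iF ≤ (p.1:ℤ)
      · by_cases hc : cG ≤ (p.1:ℤ) + (p.2:ℤ)
        · rw [if_pos ⟨hiF, hc⟩, if_neg (by push_neg; intro _; omega), if_pos hiF, if_pos hc,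
            hM]
          push_cast
          ring
        · rw [if_neg (by rintro ⟨_, h⟩; exact hc h), if_pos ⟨hiF, by omega⟩, if_pos hiF,
            if_neg hc, hM]
          push_cast
          ring
      · rw [if_neg (by rintro ⟨h, _⟩; exact hiF h), if_neg (by rintro ⟨h, _⟩; exact hiF h),
          if_neg hiF]
        ring
    rw [Finset.sum_congr rfl hsplit, Finset.sum_product]
    have hinner : ∀ s ∈ range (N2+1),
        (∑ r ∈ range (N3+1), if iF ≤ (s:ℤ) then
            ((2^(N - N2 - N3) : ℤ) * (N2.choose s : ℤ)) *
              ((N3.choose r : ℤ) * (if cG ≤ (s:ℤ) + (r:ℤ) then 1 else -1)) else 0)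
        = (if iF ≤ (s:ℤ) then ((2^(N - N2 - N3) : ℤ) * (N2.choose s : ℤ)) * Dhat N3 cG s
            else 0) := by
      intro s _
      by_cases hiF : iF ≤ (s:ℤ)
      · simp only [if_pos hiF]
        rw [Dhat, Finset.mul_sum]
      · simp only [if_neg hiF]
        exact Finset.sum_const_zero
    rw [Finset.sum_congr rfl hinner]
    have hIco : (range (N2+1)).filter (fun s : ℕ => iF ≤ (s:ℤ)) = Ico t0 (N2+1) := by
      ext s
      simp only [mem_filter, mem_range, mem_Ico]
      constructor
      · rintro ⟨h1, h2⟩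
        exact ⟨Int.toNat_le.mpr h2, h1⟩
      · rintro ⟨h1, h2⟩
        exact ⟨h2, Int.toNat_le.mp h1⟩
    have hconv : (∑ s ∈ range (N2+1), (if iF ≤ (s:ℤ) then
          ((2^(N - N2 - N3) : ℤ) * (N2.choose s : ℤ)) * Dhat N3 cG s else 0))
        = ∑ s ∈ Ico t0 (N2+1), ((2^(N - N2 - N3) : ℤ) * (N2.choose s : ℤ)) * Dhat N3 cG s := by
      rw [← hIco, Finset.sum_filter]
    rw [hconv]
    have hrefl : ∑ s ∈ Ico t0 (N2+1), (N2.choose s : ℤ) * Dhat N3 cG s ≤ 0 := by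
      apply refl_sum
      omega
    calc ∑ s ∈ Ico t0 (N2+1), ((2^(N - N2 - N3) : ℤ) * (N2.choose s : ℤ)) * Dhat N3 cG s
        = (2^(N - N2 - N3) : ℤ) * ∑ s ∈ Ico t0 (N2+1), (N2.choose s : ℤ) * Dhat N3 cG s := by
          rw [Finset.mul_sum]
          apply Finset.sum_congr rfl
          intro s _
          ring
      _ ≤ 0 := mul_nonpos_of_nonneg_of_nonpos (by positivity) hrefl
  have hnat : (∑ p ∈ range (N2+1) ×ˢ range (N3+1),
        if iF ≤ (p.1:ℤ) ∧ cG ≤ (p.1:ℤ) + (p.2:ℤ) then M p.1 p.2 else 0)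
      ≤ (∑ p ∈ range (N2+1) ×ˢ range (N3+1),
        if iF ≤ (p.1:ℤ) ∧ (p.1:ℤ) + (p.2:ℤ) < cG then M p.1 p.2 else 0) := by
    exact_mod_cast hZ
  have e1 : (Finset.univ.filter (fun σ : Fin N → Bool =>
      iF ≤ (cntIn D ε σ : ℤ) ∧ cG ≤ (cntIn D ε σ : ℤ) + (cntIn E ε σ : ℤ))).card
      = (∑ p ∈ range (N2+1) ×ˢ range (N3+1),
        if iF ≤ (p.1:ℤ) ∧ cG ≤ (p.1:ℤ) + (p.2:ℤ) then M p.1 p.2 else 0) := by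
    convert hL using 2 <;> congr!
  have e2 : (Finset.univ.filter (fun σ : Fin N → Bool =>
      iF ≤ (cntIn D ε σ : ℤ) ∧ (cntIn D ε σ : ℤ) + (cntIn E ε σ : ℤ) < cG)).card
      = (∑ p ∈ range (N2+1) ×ˢ range (N3+1),
        if iF ≤ (p.1:ℤ) ∧ (p.1:ℤ) + (p.2:ℤ) < cG then M p.1 p.2 else 0) := by
    convert hR using 2 <;> congr!
  rw [e1, e2]
  exact hnat

end Core

section Abstract
variable {N : ℕ}

def Fsum (φ : Fin N → Bool → ℕ) (σ : Fin N → Bool) : ℕ := ∑ l, φ l (σ l)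

def Qsum (γ : Fin N → Bool → ℕ) : ℕ := ∑ l, (γ l true + γ l false)

def Ksum (φ : Fin N → Bool → ℕ) : ℕ := ∑ l, min (φ l true) (φ l false)

lemma card_split_bool (C : (Fin N → Bool) → Prop) (l : Fin N) :
    (Finset.univ.filter C).card
      = (Finset.univ.filter (fun σ => σ l = true ∧ C σ)).card
        + (Finset.univ.filter (fun σ => σ l = false ∧ C σ)).card := by
  classical
  have h1 : Finset.univ.filter C
      = (Finset.univ.filter (fun σ => σ l = true ∧ C σ))
        ∪ (Finset.univ.filter (fun σ => σ l = false ∧ C σ)) := by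
    rw [← Finset.filter_or]
    apply Finset.filter_congr
    intro σ _
    cases h : σ l <;> simp [h]
  rw [h1, Finset.card_union_of_disjoint]
  refine Finset.disjoint_left.mpr ?_
  intro σ h1 h2
  have e1 := (mem_filter.mp h1).2.1
  have e2 := (mem_filter.mp h2).2.1
  rw [e1] at e2
  exact Bool.true_eq_false_eq_False e2

lemma card_filter_update_eq (C : (Fin N → Bool) → Prop) (l : Fin N)
    (hC : ∀ σ x, C (Function.update σ l x) ↔ C σ) :
    (Finset.univ.filter (fun σ => σ l = true ∧ C σ)).card
      = (Finset.univ.filter (fun σ => σ l = false ∧ C σ)).card := by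
  classical
  apply Finset.card_bij' (i := fun σ _ => Function.update σ l false)
    (j := fun σ _ => Function.update σ l true)
  · intro σ hσ
    simp only [mem_filter, mem_univ, true_and] at hσ
    rw [Function.update_idem, ← hσ.1, Function.update_eq_self]
  · intro σ hσ
    simp only [mem_filter, mem_univ, true_and] at hσ
    rw [Function.update_idem, ← hσ.1, Function.update_eq_self]
  · intro σ hσ
    simp only [mem_filter, mem_univ, true_and] at hσ ⊢
    exact ⟨Function.update_self l false σ, (hC σ false).mpr hσ.2⟩
  · intro σ hσ
    simp only [mem_filter, mem_univ, true_and] at hσ ⊢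
    exact ⟨Function.update_self l true σ, (hC σ true).mpr hσ.2⟩

lemma card_half (C : (Fin N → Bool) → Prop) (l : Fin N)
    (hC : ∀ σ x, C (Function.update σ l x) ↔ C σ) (x : Bool) :
    2 * (Finset.univ.filter (fun σ => σ l = x ∧ C σ)).card
      = (Finset.univ.filter C).card := by
  rw [card_split_bool C l]
  have := card_filter_update_eq C l hC
  cases x
  · rw [← this]; ring
  · rw [this]; ring

lemma Fsum_update (φ : Fin N → Bool → ℕ) (l : Fin N) (σ : Fin N → Bool) :
    Fsum φ σ = φ l (σ l) + Fsum (Function.update φ l (fun _ => 0)) σ := by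
  rw [Fsum, Fsum]
  have h1 : ∀ l' ∈ Finset.univ,
      (Function.update φ l (fun _ => 0)) l' (σ l')
        = Function.update (fun l' => φ l' (σ l')) l 0 l' := by
    intro l' _
    by_cases h : l' = l
    · subst h; simp
    · simp [Function.update_of_ne h]
  rw [Finset.sum_congr rfl h1, Finset.sum_update_of_mem (mem_univ l), zero_add,
    Finset.sdiff_singleton_eq_erase]
  exact (Finset.add_sum_erase _ (fun x => φ x (σ x)) (mem_univ l)).symm

lemma Fsum_invariant (φ : Fin N → Bool → ℕ) (l : Fin N)
    (hconst : ∀ x y, φ l x = φ l y) (σ : Fin N → Bool) (c : Bool) :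
    Fsum φ (Function.update σ l c) = Fsum φ σ := by
  apply Finset.sum_congr rfl
  intro l' _
  by_cases h : l' = l
  · subst h
    simp only [Function.update_self]
    exact hconst c (σ l')
  · simp [Function.update_of_ne h]

lemma Qsum_update (γ : Fin N → Bool → ℕ) (l : Fin N) :
    Qsum γ = (γ l true + γ l false) + Qsum (Function.update γ l (fun _ => 0)) := by
  rw [Qsum, Qsum]
  have h1 : ∀ l' ∈ Finset.univ,
      ((Function.update γ l (fun _ => 0)) l' true + (Function.update γ l (fun _ => 0)) l' false)
        = Function.update (fun l' => γ l' true + γ l' false) l 0 l' := by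
    intro l' _
    by_cases h : l' = l
    · subst h; simp
    · simp [Function.update_of_ne h]
  rw [Finset.sum_congr rfl h1, Finset.sum_update_of_mem (mem_univ l), zero_add,
    Finset.sdiff_singleton_eq_erase]
  exact (Finset.add_sum_erase _ (fun x => γ x true + γ x false) (mem_univ l)).symm

lemma Ksum_update (φ : Fin N → Bool → ℕ) (l : Fin N) :
    Ksum φ = min (φ l true) (φ l false) + Ksum (Function.update φ l (fun _ => 0)) := by
  rw [Ksum, Ksum]
  have h1 : ∀ l' ∈ Finset.univ,
      min ((Function.update φ l (fun _ => 0)) l' true) ((Function.update φ l (fun _ => 0)) l' false)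
        = Function.update (fun l' => min (φ l' true) (φ l' false)) l 0 l' := by
    intro l' _
    by_cases h : l' = l
    · subst h; simp
    · simp [Function.update_of_ne h]
  rw [Finset.sum_congr rfl h1, Finset.sum_update_of_mem (mem_univ l), zero_add,
    Finset.sdiff_singleton_eq_erase]
  exact (Finset.add_sum_erase _ (fun x => min (φ x true) (φ x false)) (mem_univ l)).symm

end Abstract

section AbstractMain
variable {N : ℕ}

lemma ind_bit (γ : Fin N → Bool → ℕ) (hγ1 : ∀ l x, γ l x ≤ 1) (l : Fin N) (ε : Fin N → Bool)
    (hε : ε l = (if γ l true = 1 then true else false))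
    (hsum : γ l true + γ l false = 1) (x : Bool) :
    γ l x = if x = ε l then 1 else 0 := by
  have h1 := hγ1 l true
  have h2 := hγ1 l false
  by_cases ht : γ l true = 1
  · have hf : γ l false = 0 := by omega
    rw [hε, if_pos ht]
    cases x <;> simp [ht, hf]
  · have ht0 : γ l true = 0 := by omega
    have hf : γ l false = 1 := by omega
    rw [hε, if_neg ht]
    cases x <;> simp [ht0, hf]

lemma sum_ind_card (S : Finset (Fin N)) :
    ∑ l : Fin N, (if l ∈ S then (1:ℕ) else 0) = S.card := by
  classical
  rw [← Finset.card_filter]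
  congr 1
  ext l
  simp

lemma abstract_main (Mnc : ℕ) (φ γ : Fin N → Bool → ℕ)
    (hφγ : ∀ l x, φ l x ≤ γ l x) (hγ1 : ∀ l x, γ l x ≤ 1) (iF cG : ℤ)
    (H2 : (Qsum γ : ℤ) + 1 ≤ 2*cG)
    (H1 : (Qsum γ : ℤ) + 1 + iF ≤ 2*cG + (Ksum φ : ℤ))
    (hM : (Finset.univ.filter (fun l => γ l true + γ l false = 2)).card = Mnc) :
    (Finset.univ.filter (fun σ : Fin N → Bool =>
        iF ≤ (Fsum φ σ : ℤ) ∧ cG ≤ (Fsum γ σ : ℤ))).card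
    ≤ (Finset.univ.filter (fun σ : Fin N → Bool =>
        iF ≤ (Fsum φ σ : ℤ) ∧ (Fsum γ σ : ℤ) < cG)).card := by
  classical
  induction Mnc generalizing φ γ iF cG with
  | zero =>
    have hγs : ∀ l, γ l true + γ l false ≤ 1 := by
      intro l
      have h1 := hγ1 l true
      have h2 := hγ1 l false
      by_contra hgt
      push_neg at hgt
      have hl2 : γ l true + γ l false = 2 := by omega
      have hmem : l ∈ Finset.univ.filter (fun l => γ l true + γ l false = 2) :=
        mem_filter.mpr ⟨mem_univ l, hl2⟩
      rw [Finset.card_eq_zero] at hM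
      rw [hM] at hmem
      exact absurd hmem (notMem_empty l)
    set D := Finset.univ.filter (fun l : Fin N => φ l true + φ l false = 1) with hD
    set E := Finset.univ.filter
      (fun l : Fin N => φ l true + φ l false = 0 ∧ γ l true + γ l false = 1) with hE
    set ε : Fin N → Bool := fun l => if γ l true = 1 then true else false with hεdef
    have hDE : Disjoint D E := by
      refine Finset.disjoint_left.mpr ?_
      intro l h1 h2
      rw [hD, mem_filter] at h1
      rw [hE, mem_filter] at h2
      omega
    have hφpt : ∀ l (x : Bool), φ l x = if l ∈ D then (if x = ε l then 1 else 0) else 0 := by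
      intro l x
      by_cases hl : l ∈ D
      · rw [if_pos hl]
        rw [hD, mem_filter] at hl
        have hsum1 : φ l true + φ l false = 1 := hl.2
        have hγsum1 : γ l true + γ l false = 1 := by
          have g1 := hφγ l true
          have g2 := hφγ l false
          have g3 := hγs l
          omega
        have hφγeq : ∀ y, φ l y = γ l y := by
          intro y
          have g1 := hφγ l true
          have g2 := hφγ l false
          have g3 := hγs l
          cases y <;> omega
        rw [hφγeq x]
        exact ind_bit γ hγ1 l ε (by rw [hεdef]) hγsum1 x
      · rw [if_neg hl]
        rw [hD, mem_filter] at hl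
        have g1 := hφγ l true
        have g2 := hφγ l false
        have g3 := hγs l
        have h0 : φ l true + φ l false = 0 := by
          rcases Nat.lt_or_ge (φ l true + φ l false) 1 with h | h
          · omega
          · exfalso; exact hl ⟨mem_univ l, by omega⟩
        cases x <;> omega
    have hγpt : ∀ l (x : Bool), γ l x
        = (if l ∈ D then (if x = ε l then 1 else 0) else 0)
          + (if l ∈ E then (if x = ε l then 1 else 0) else 0) := by
      intro l x
      by_cases hl : l ∈ D
      · rw [if_pos hl, if_neg (Finset.disjoint_left.mp hDE hl)]
        rw [hD, mem_filter] at hl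
        have hγsum1 : γ l true + γ l false = 1 := by
          have g1 := hφγ l true
          have g2 := hφγ l false
          have g3 := hγs l
          omega
        rw [ind_bit γ hγ1 l ε (by rw [hεdef]) hγsum1 x]
        omega
      · rw [if_neg hl]
        by_cases hlE : l ∈ E
        · rw [if_pos hlE]
          rw [hE, mem_filter] at hlE
          rw [ind_bit γ hγ1 l ε (by rw [hεdef]) hlE.2.2 x]
          omega
        · rw [if_neg hlE]
          have g3 := hγs l
          have hφ0 : φ l true + φ l false = 0 := by
            by_contra h
            have g1 := hφγ l true
            have g2 := hφγ l false
            exact hl (by rw [hD, mem_filter]; exact ⟨mem_univ l, by omega⟩)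
          have hγ0 : γ l true + γ l false = 0 := by
            by_contra h
            exact hlE (by rw [hE, mem_filter]; exact ⟨mem_univ l, hφ0, by omega⟩)
          cases x <;> omega
    have hF : ∀ σ, Fsum φ σ = cntIn D ε σ := by
      intro σ
      rw [Fsum, cntIn, Finset.card_filter]
      have e : ∀ l ∈ Finset.univ, φ l (σ l)
          = (if l ∈ D then (if σ l = ε l then 1 else 0) else 0) := fun l _ => hφpt l (σ l)
      rw [Finset.sum_congr rfl e, Finset.sum_ite_mem, Finset.univ_inter]
    have hG : ∀ σ, Fsum γ σ = cntIn D ε σ + cntIn E ε σ := by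
      intro σ
      rw [Fsum, cntIn, cntIn, Finset.card_filter, Finset.card_filter]
      have e : ∀ l ∈ Finset.univ, γ l (σ l)
          = (if l ∈ D then (if σ l = ε l then 1 else 0) else 0)
            + (if l ∈ E then (if σ l = ε l then 1 else 0) else 0) := fun l _ => hγpt l (σ l)
      rw [Finset.sum_congr rfl e, Finset.sum_add_distrib]
      congr 1
      · rw [Finset.sum_ite_mem, Finset.univ_inter]
      · rw [Finset.sum_ite_mem, Finset.univ_inter]
    have hQ : Qsum γ = D.card + E.card := by
      rw [Qsum]
      have e : ∀ l ∈ Finset.univ, γ l true + γ l false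
          = (if l ∈ D then (1:ℕ) else 0) + (if l ∈ E then (1:ℕ) else 0) := by
        intro l _
        rw [hγpt l true, hγpt l false]
        by_cases h1 : l ∈ D
        · rw [if_pos h1, if_pos h1, if_pos h1,
            if_neg (Finset.disjoint_left.mp hDE h1), if_neg (Finset.disjoint_left.mp hDE h1),
            if_neg (Finset.disjoint_left.mp hDE h1)]
          cases hc : ε l <;> simp
        · rw [if_neg h1, if_neg h1, if_neg h1]
          by_cases h2 : l ∈ E
          · rw [if_pos h2, if_pos h2, if_pos h2]
            cases hc : ε l <;> simp
          · rw [if_neg h2, if_neg h2, if_neg h2]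
      rw [Finset.sum_congr rfl e, Finset.sum_add_distrib, sum_ind_card, sum_ind_card]
    have hK : Ksum φ = 0 := by
      rw [Ksum]
      apply Finset.sum_eq_zero
      intro l _
      rw [hφpt l true, hφpt l false]
      by_cases h1 : l ∈ D
      · rw [if_pos h1, if_pos h1]
        cases hc : ε l <;> simp
      · rw [if_neg h1, if_neg h1]
        simp
    have hH : (D.card:ℤ) + E.card + 1 + max iF 0 ≤ 2*cG := by
      have hQ' : (Qsum γ : ℤ) = (D.card:ℤ) + E.card := by exact_mod_cast hQ
      have hK' : (Ksum φ : ℤ) = 0 := by exact_mod_cast hK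
      rcases le_total iF 0 with h | h
      · rw [max_eq_right h]; omega
      · rw [max_eq_left h]; omega
    have goal1 : Finset.univ.filter (fun σ : Fin N → Bool =>
        iF ≤ (Fsum φ σ : ℤ) ∧ cG ≤ (Fsum γ σ : ℤ))
        = Finset.univ.filter (fun σ : Fin N → Bool =>
        iF ≤ (cntIn D ε σ : ℤ) ∧ cG ≤ (cntIn D ε σ : ℤ) + (cntIn E ε σ : ℤ)) := by
      apply Finset.filter_congr
      intro σ _
      rw [hF σ, hG σ]
      constructor
      · rintro ⟨u1, u2⟩; push_cast at u2 ⊢; exact ⟨u1, u2⟩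
      · rintro ⟨u1, u2⟩; push_cast at u2 ⊢; exact ⟨u1, u2⟩
    have goal2 : Finset.univ.filter (fun σ : Fin N → Bool =>
        iF ≤ (Fsum φ σ : ℤ) ∧ (Fsum γ σ : ℤ) < cG)
        = Finset.univ.filter (fun σ : Fin N → Bool =>
        iF ≤ (cntIn D ε σ : ℤ) ∧ (cntIn D ε σ : ℤ) + (cntIn E ε σ : ℤ) < cG) := by
      apply Finset.filter_congr
      intro σ _
      rw [hF σ, hG σ]
      constructor
      · rintro ⟨u1, u2⟩; push_cast at u2 ⊢; exact ⟨u1, u2⟩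
      · rintro ⟨u1, u2⟩; push_cast at u2 ⊢; exact ⟨u1, u2⟩
    rw [goal1, goal2]
    exact core_count D E hDE ε iF cG hH
  | succ M ih =>
    -- peel a coordinate with γ-sum 2
    have hpos : 0 < (Finset.univ.filter (fun l => γ l true + γ l false = 2)).card := by omega
    obtain ⟨l, hl⟩ := Finset.card_pos.mp hpos
    have hlγ : γ l true + γ l false = 2 := (mem_filter.mp hl).2
    have hlγt : γ l true = 1 := by have := hγ1 l true; have := hγ1 l false; omega
    have hlγf : γ l false = 1 := by have := hγ1 l true; have := hγ1 l false; omega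
    set φ' := Function.update φ l (fun _ => 0) with hφ'
    set γ' := Function.update γ l (fun _ => 0) with hγ'
    have hφ'γ' : ∀ l' x, φ' l' x ≤ γ' l' x := by
      intro l' x
      by_cases h : l' = l
      · subst h; simp [hφ', hγ']
      · simp [hφ', hγ', Function.update_of_ne h]; exact hφγ l' x
    have hγ'1 : ∀ l' x, γ' l' x ≤ 1 := by
      intro l' x
      by_cases h : l' = l
      · subst h; simp [hγ']
      · simp [hγ', Function.update_of_ne h]; exact hγ1 l' x
    have hγ'const : ∀ x y, γ' l x = γ' l y := by
      intro x y; simp [hγ']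
    have hφ'const : ∀ x y, φ' l x = φ' l y := by
      intro x y; simp [hφ']
    have hQ' : Qsum γ = 2 + Qsum γ' := by
      rw [Qsum_update γ l, hlγt, hlγf]
    have hK' : Ksum φ = min (φ l true) (φ l false) + Ksum φ' := Ksum_update φ l
    have hMeas : (Finset.univ.filter (fun l' => γ' l' true + γ' l' false = 2)).card = M := by
      have he : Finset.univ.filter (fun l' => γ' l' true + γ' l' false = 2)
          = (Finset.univ.filter (fun l' => γ l' true + γ l' false = 2)).erase l := by
        ext l'
        rw [Finset.mem_erase, mem_filter, mem_filter]
        by_cases h : l' = l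
        · subst h
          simp [hγ']
        · simp [hγ', Function.update_of_ne h, h]
      rw [he, Finset.card_erase_of_mem hl, hM]
      omega
    -- branch decomposition
    have hbranchL : ∀ (x : Bool) (σ : Fin N → Bool), σ l = x →
        ((iF ≤ (Fsum φ σ : ℤ) ∧ cG ≤ (Fsum γ σ : ℤ))
          ↔ (iF - (φ l x : ℤ) ≤ (Fsum φ' σ : ℤ) ∧ cG - 1 ≤ (Fsum γ' σ : ℤ))) := by
      intro x σ hσl
      have e1 : Fsum φ σ = φ l x + Fsum φ' σ := by
        rw [Fsum_update φ l σ, hσl, hφ']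
      have e2 : Fsum γ σ = 1 + Fsum γ' σ := by
        rw [Fsum_update γ l σ, hσl, hγ']
        cases x
        · rw [hlγf]
        · rw [hlγt]
      rw [e1, e2]
      push_cast
      omega
    have hbranchR : ∀ (x : Bool) (σ : Fin N → Bool), σ l = x →
        ((iF ≤ (Fsum φ σ : ℤ) ∧ (Fsum γ σ : ℤ) < cG)
          ↔ (iF - (φ l x : ℤ) ≤ (Fsum φ' σ : ℤ) ∧ (Fsum γ' σ : ℤ) < cG - 1)) := by
      intro x σ hσl
      have e1 : Fsum φ σ = φ l x + Fsum φ' σ := by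
        rw [Fsum_update φ l σ, hσl, hφ']
      have e2 : Fsum γ σ = 1 + Fsum γ' σ := by
        rw [Fsum_update γ l σ, hσl, hγ']
        cases x
        · rw [hlγf]
        · rw [hlγt]
      rw [e1, e2]
      push_cast
      omega
    have hinv : ∀ (x : Bool) (σ : Fin N → Bool) (c : Bool),
        ((iF - (φ l x : ℤ) ≤ (Fsum φ' (Function.update σ l c) : ℤ)
          ∧ cG - 1 ≤ (Fsum γ' (Function.update σ l c) : ℤ))
        ↔ (iF - (φ l x : ℤ) ≤ (Fsum φ' σ : ℤ) ∧ cG - 1 ≤ (Fsum γ' σ : ℤ))) := by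
      intro x σ c
      rw [Fsum_invariant φ' l hφ'const σ c, Fsum_invariant γ' l hγ'const σ c]
    have hinvR : ∀ (x : Bool) (σ : Fin N → Bool) (c : Bool),
        ((iF - (φ l x : ℤ) ≤ (Fsum φ' (Function.update σ l c) : ℤ)
          ∧ (Fsum γ' (Function.update σ l c) : ℤ) < cG - 1)
        ↔ (iF - (φ l x : ℤ) ≤ (Fsum φ' σ : ℤ) ∧ (Fsum γ' σ : ℤ) < cG - 1)) := by
      intro x σ c
      rw [Fsum_invariant φ' l hφ'const σ c, Fsum_invariant γ' l hγ'const σ c]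
    have stepL : ∀ x : Bool,
        2 * (Finset.univ.filter (fun σ : Fin N → Bool =>
            σ l = x ∧ (iF ≤ (Fsum φ σ : ℤ) ∧ cG ≤ (Fsum γ σ : ℤ)))).card
        = (Finset.univ.filter (fun σ : Fin N → Bool =>
            iF - (φ l x : ℤ) ≤ (Fsum φ' σ : ℤ) ∧ cG - 1 ≤ (Fsum γ' σ : ℤ))).card := by
      intro x
      have e : Finset.univ.filter (fun σ : Fin N → Bool =>
            σ l = x ∧ (iF ≤ (Fsum φ σ : ℤ) ∧ cG ≤ (Fsum γ σ : ℤ)))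
          = Finset.univ.filter (fun σ : Fin N → Bool =>
            σ l = x ∧ (iF - (φ l x : ℤ) ≤ (Fsum φ' σ : ℤ) ∧ cG - 1 ≤ (Fsum γ' σ : ℤ))) := by
        apply Finset.filter_congr
        intro σ _
        constructor
        · rintro ⟨h1, h2⟩; exact ⟨h1, (hbranchL x σ h1).mp h2⟩
        · rintro ⟨h1, h2⟩; exact ⟨h1, (hbranchL x σ h1).mpr h2⟩
      rw [e]
      have hc := card_half (fun σ : Fin N → Bool =>
        iF - (φ l x : ℤ) ≤ (Fsum φ' σ : ℤ) ∧ cG - 1 ≤ (Fsum γ' σ : ℤ)) l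
        (fun σ c => hinv x σ c) x
      convert hc using 3 <;> congr!
    have stepR : ∀ x : Bool,
        2 * (Finset.univ.filter (fun σ : Fin N → Bool =>
            σ l = x ∧ (iF ≤ (Fsum φ σ : ℤ) ∧ (Fsum γ σ : ℤ) < cG))).card
        = (Finset.univ.filter (fun σ : Fin N → Bool =>
            iF - (φ l x : ℤ) ≤ (Fsum φ' σ : ℤ) ∧ (Fsum γ' σ : ℤ) < cG - 1)).card := by
      intro x
      have e : Finset.univ.filter (fun σ : Fin N → Bool =>
            σ l = x ∧ (iF ≤ (Fsum φ σ : ℤ) ∧ (Fsum γ σ : ℤ) < cG))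
          = Finset.univ.filter (fun σ : Fin N → Bool =>
            σ l = x ∧ (iF - (φ l x : ℤ) ≤ (Fsum φ' σ : ℤ) ∧ (Fsum γ' σ : ℤ) < cG - 1)) := by
        apply Finset.filter_congr
        intro σ _
        constructor
        · rintro ⟨h1, h2⟩; exact ⟨h1, (hbranchR x σ h1).mp h2⟩
        · rintro ⟨h1, h2⟩; exact ⟨h1, (hbranchR x σ h1).mpr h2⟩
      rw [e]
      have hc := card_half (fun σ : Fin N → Bool =>
        iF - (φ l x : ℤ) ≤ (Fsum φ' σ : ℤ) ∧ (Fsum γ' σ : ℤ) < cG - 1) l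
        (fun σ c => hinvR x σ c) x
      convert hc using 3 <;> congr!
    have hIH : ∀ x : Bool,
        (Finset.univ.filter (fun σ : Fin N → Bool =>
            iF - (φ l x : ℤ) ≤ (Fsum φ' σ : ℤ) ∧ cG - 1 ≤ (Fsum γ' σ : ℤ))).card
        ≤ (Finset.univ.filter (fun σ : Fin N → Bool =>
            iF - (φ l x : ℤ) ≤ (Fsum φ' σ : ℤ) ∧ (Fsum γ' σ : ℤ) < cG - 1)).card := by
      intro x
      have hmin : min (φ l true) (φ l false) ≤ φ l x := by
        cases x
        · exact min_le_right _ _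
        · exact min_le_left _ _
      apply ih φ' γ' hφ'γ' hγ'1 (iF - (φ l x : ℤ)) (cG - 1) ?_ ?_ hMeas
      · have : (Qsum γ : ℤ) = 2 + Qsum γ' := by exact_mod_cast hQ'
        omega
      · have e1 : (Qsum γ : ℤ) = 2 + Qsum γ' := by exact_mod_cast hQ'
        have e2 : (Ksum φ : ℤ) = (min (φ l true) (φ l false) : ℕ) + Ksum φ' := by
          exact_mod_cast hK'
        have e3 : ((min (φ l true) (φ l false) : ℕ) : ℤ) ≤ (φ l x : ℤ) := by
          exact_mod_cast hmin
        omega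
    have finL : (Finset.univ.filter (fun σ : Fin N → Bool =>
        iF ≤ (Fsum φ σ : ℤ) ∧ cG ≤ (Fsum γ σ : ℤ))).card
        = (Finset.univ.filter (fun σ : Fin N → Bool =>
            σ l = true ∧ (iF ≤ (Fsum φ σ : ℤ) ∧ cG ≤ (Fsum γ σ : ℤ)))).card
          + (Finset.univ.filter (fun σ : Fin N → Bool =>
            σ l = false ∧ (iF ≤ (Fsum φ σ : ℤ) ∧ cG ≤ (Fsum γ σ : ℤ)))).card := by
      have h := card_split_bool (fun σ : Fin N → Bool =>
        iF ≤ (Fsum φ σ : ℤ) ∧ cG ≤ (Fsum γ σ : ℤ)) l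
      convert h using 2 <;> congr!
    have finR : (Finset.univ.filter (fun σ : Fin N → Bool =>
        iF ≤ (Fsum φ σ : ℤ) ∧ (Fsum γ σ : ℤ) < cG)).card
        = (Finset.univ.filter (fun σ : Fin N → Bool =>
            σ l = true ∧ (iF ≤ (Fsum φ σ : ℤ) ∧ (Fsum γ σ : ℤ) < cG))).card
          + (Finset.univ.filter (fun σ : Fin N → Bool =>
            σ l = false ∧ (iF ≤ (Fsum φ σ : ℤ) ∧ (Fsum γ σ : ℤ) < cG))).card := by
      have h := card_split_bool (fun σ : Fin N → Bool =>
        iF ≤ (Fsum φ σ : ℤ) ∧ (Fsum γ σ : ℤ) < cG) l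
      convert h using 2 <;> congr!
    have h2L := stepL true
    have h2L' := stepL false
    have h2R := stepR true
    have h2R' := stepR false
    have hi1 := hIH true
    have hi2 := hIH false
    linarith

section Main

variable {n : ℕ} (a b : Fin n → ℝ)

lemma card_split_pred (P Q : (Fin n → Bool) → Prop) :
    (Finset.univ.filter P).card
      = (Finset.univ.filter (fun σ => P σ ∧ Q σ)).card
        + (Finset.univ.filter (fun σ => P σ ∧ ¬ Q σ)).card := by
  classical
  have h1 : Finset.univ.filter P
      = (Finset.univ.filter (fun σ => P σ ∧ Q σ))
        ∪ (Finset.univ.filter (fun σ => P σ ∧ ¬ Q σ)) := by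
    rw [← Finset.filter_or]
    apply Finset.filter_congr
    intro σ _
    by_cases h : Q σ <;> simp [h]
  rw [h1, Finset.card_union_of_disjoint]
  refine Finset.disjoint_left.mpr ?_
  intro σ h1 h2
  exact (mem_filter.mp h2).2.2 (mem_filter.mp h1).2.2

end Main

/-- De-correlation lemma: if `j − k < i ≤ j`, then
`Pr(X^i > Y^{j+1−i} and Y^k > X^{i+k}) ≥ (1/2)·Pr(X^i > Y^{j+1−i})`. -/
theorem decoram_half
    (n : ℕ) (hn : 1 ≤ n) (a b : Fin n → ℝ)
    (ha : ∀ i, 0 < a i) (hb : ∀ i, 0 < b i)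
    (hdistinct : Function.Injective (Sum.elim a b : Fin n ⊕ Fin n → ℝ))
    (k i j : ℕ) (hk1 : 1 ≤ k) (hkn : k ≤ n) (hi1 : 1 ≤ i) (hin : i ≤ n)
    (hjk : j - k < i) (hij : i ≤ j) :
    (1 / 2) * Pr (fun σ => YS a b σ (j + 1 - i) < XS a b σ i)
      ≤ Pr (fun σ => YS a b σ (j + 1 - i) < XS a b σ i ∧
          XS a b σ (i + k) < YS a b σ k) := by
  classical
  have habpos : ∀ l : Fin n ⊕ Fin n, 0 < Sum.elim a b l := by
    rintro (l | l)
    · exact ha l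
    · exact hb l
  have hexact := fun (r : ℕ) (h1 : 1 ≤ r) (h2 : r ≤ n + n) =>
    count_exact a b hdistinct r h1 h2
  have hjk' : j + 1 ≤ i + k := by omega
  -- the main cardinality inequality
  have hmain : (Finset.univ.filter (fun σ : Fin n → Bool =>
        (YS a b σ (j + 1 - i) < XS a b σ i) ∧ ¬ (XS a b σ (i + k) < YS a b σ k))).card
      ≤ (Finset.univ.filter (fun σ : Fin n → Bool =>
        (YS a b σ (j + 1 - i) < XS a b σ i) ∧ (XS a b σ (i + k) < YS a b σ k))).card := by
    rcases lt_or_ge n (i + k) with hik | hik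
    · -- B always holds
      have hB : ∀ σ : Fin n → Bool, XS a b σ (i + k) < YS a b σ k := by
        intro σ
        have h0 : XS a b σ (i + k) = 0 := by
          rw [XS, kthLargest_eq_kthG]
          exact kth_zero_of_gt _ _ (by simp [hik])
        have h1 : 0 < YS a b σ k := by
          rw [YS, kthLargest_eq_kthG]
          apply kth_pos
          · intro l
            rw [Yvals]
            by_cases h : σ l <;> simp [h, ha l, hb l]
          · exact hk1
          · simp [hkn]
        rw [h0]; exact h1
      have he : Finset.univ.filter (fun σ : Fin n → Bool =>
          (YS a b σ (j + 1 - i) < XS a b σ i) ∧ ¬ (XS a b σ (i + k) < YS a b σ k)) = ∅ := by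
        rw [Finset.filter_eq_empty_iff]
        intro σ _
        rintro ⟨_, hnB⟩
        exact hnB (hB σ)
      rw [he]
      simp
    · -- main case : i + k ≤ n
      set mB := i + 2*k - 1 with hmB
      have hmB1 : mB + 1 = i + 2*k := by omega
      have hmB2n : mB ≤ n + n := by omega
      have hj2n : j ≤ n + n := by omega
      have hj1 : 1 ≤ j := by omega
      have hjm : j ≤ mB := by omega
      set θj := theta a b j with hθj
      set θm := theta a b mB with hθm
      have hθmj : θm ≤ θj := by
        rw [hθm, hθj, theta, theta]
        exact kth_anti (Sum.elim a b) habpos j mB hj1 hjm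
      set φ : Fin n → Bool → ℕ :=
        fun l x => if θj ≤ (if x then a l else b l) then 1 else 0 with hφ
      set γ : Fin n → Bool → ℕ :=
        fun l x => if θm ≤ (if x then a l else b l) then 1 else 0 with hγ
      have hφγ : ∀ l x, φ l x ≤ γ l x := by
        intro l x
        rw [hφ, hγ]
        simp only
        by_cases h : θj ≤ (if x then a l else b l)
        · rw [if_pos h, if_pos (hθmj.trans h)]
        · rw [if_neg h]
          exact Nat.zero_le _
      have hγ1 : ∀ l x, γ l x ≤ 1 := by
        intro l x
        rw [hγ]
        simp only
        by_cases h : θm ≤ (if x then a l else b l) <;> simp [h]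
      -- identification of Fsum with counting
      have hFφ : ∀ σ : Fin n → Bool, Fsum φ σ
          = (Finset.univ.filter (fun l => θj ≤ Xvals a b σ l)).card := by
        intro σ
        rw [Fsum, Finset.card_filter]
        apply Finset.sum_congr rfl
        intro l _
        simp only [hφ, Xvals]
        congr!
      have hFγ : ∀ σ : Fin n → Bool, Fsum γ σ
          = (Finset.univ.filter (fun l => θm ≤ Xvals a b σ l)).card := by
        intro σ
        rw [Fsum, Finset.card_filter]
        apply Finset.sum_congr rfl
        intro l _
        simp only [hγ, Xvals]
        congr!
      -- Qsum identification
      have hQ : Qsum γ = mB := by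
        rw [Qsum]
        have e : ∀ l ∈ Finset.univ, γ l true + γ l false
            = ((if θm ≤ a l then 1 else 0) + (if θm ≤ b l then 1 else 0)) := by
          intro l _
          simp only [hγ]
          norm_num
        rw [Finset.sum_congr rfl e, Finset.sum_add_distrib]
        have e2 : (∑ l : Fin n, (if θm ≤ a l then (1:ℕ) else 0))
            + (∑ l : Fin n, (if θm ≤ b l then (1:ℕ) else 0))
            = (Finset.univ.filter (fun l : Fin n ⊕ Fin n => θm ≤ Sum.elim a b l)).card := by
          rw [Finset.card_filter, Fintype.sum_sum_type]
          simp only [Sum.elim_inl, Sum.elim_inr]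
          congr!
        rw [e2, hθm, theta]
        exact hexact mB (by omega) hmB2n
      -- counting identities per σ
      have hcount : ∀ σ : Fin n → Bool, ∀ x : ℝ,
          (Finset.univ.filter (fun l => x ≤ Xvals a b σ l)).card
            + (Finset.univ.filter (fun l => x ≤ Yvals a b σ l)).card
          = (Finset.univ.filter (fun l : Fin n ⊕ Fin n => x ≤ Sum.elim a b l)).card := by
        intro σ x
        exact count_split a b σ x
      have hXpos : ∀ σ : Fin n → Bool, ∀ l, 0 < Xvals a b σ l := by
        intro σ l
        rw [Xvals]
        by_cases h : σ l <;> simp [h, ha l, hb l]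
      have hYpos : ∀ σ : Fin n → Bool, ∀ l, 0 < Yvals a b σ l := by
        intro σ l
        rw [Yvals]
        by_cases h : σ l <;> simp [h, ha l, hb l]
      -- event A characterization
      have hAiff : ∀ σ : Fin n → Bool,
          (YS a b σ (j + 1 - i) < XS a b σ i) ↔
            ((i:ℤ) ≤ (Fsum φ σ : ℤ)) := by
        intro σ
        rw [YS, XS, kthLargest_eq_kthG, kthLargest_eq_kthG]
        rw [char_lemma a b habpos (Xvals a b σ) (Yvals a b σ) (hXpos σ)
          (hcount σ) hexact i (j + 1 - i) j hi1 hin (by omega) (by omega) hj2n]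
        rw [hFφ σ, hθj]
        constructor
        · intro h; exact_mod_cast h
        · intro h; exact_mod_cast h
      -- event B characterization
      have hBiff : ∀ σ : Fin n → Bool,
          (XS a b σ (i + k) < YS a b σ k) ↔
            ((Fsum γ σ : ℤ) < ((i:ℤ) + (k:ℤ))) := by
        intro σ
        rw [YS, XS, kthLargest_eq_kthG, kthLargest_eq_kthG]
        have hsplitY : ∀ x : ℝ,
            (Finset.univ.filter (fun l => x ≤ Yvals a b σ l)).card
              + (Finset.univ.filter (fun l => x ≤ Xvals a b σ l)).card
            = (Finset.univ.filter (fun l : Fin n ⊕ Fin n => x ≤ Sum.elim a b l)).card := by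
          intro x
          rw [add_comm]
          exact hcount σ x
        rw [char_lemma a b habpos (Yvals a b σ) (Xvals a b σ) (hYpos σ)
          hsplitY hexact k (i + k) mB hk1 hkn (by omega) (by omega) hmB2n]
        have hid : (Finset.univ.filter (fun l => θm ≤ Xvals a b σ l)).card
            + (Finset.univ.filter (fun l => theta a b mB ≤ Yvals a b σ l)).card = mB := by
          have h1 := hcount σ θm
          have h2 := hexact mB (by omega) hmB2n
          rw [hθm] at *
          omega
        rw [hFγ σ]
        constructor
        · intro h
          have : (Finset.univ.filter (fun l => θm ≤ Xvals a b σ l)).card + k ≤ mB := by omega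
          have hc : (Finset.univ.filter (fun l => θm ≤ Xvals a b σ l)).card ≤ i + k - 1 := by
            omega
          have := hc
          push_cast
          omega
        · intro h
          have hc : (Finset.univ.filter (fun l => θm ≤ Xvals a b σ l)).card + 1 ≤ i + k := by
            exact_mod_cast h
          omega
      -- rewrite the two filters
      have e1 : Finset.univ.filter (fun σ : Fin n → Bool =>
            (YS a b σ (j + 1 - i) < XS a b σ i) ∧ ¬ (XS a b σ (i + k) < YS a b σ k))
          = Finset.univ.filter (fun σ : Fin n → Bool =>
            ((i:ℤ) ≤ (Fsum φ σ : ℤ)) ∧ (((i:ℤ) + (k:ℤ)) ≤ (Fsum γ σ : ℤ))) := by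
        apply Finset.filter_congr
        intro σ _
        rw [hAiff σ]
        constructor
        · rintro ⟨h1, h2⟩
          refine ⟨h1, ?_⟩
          rw [hBiff σ] at h2
          omega
        · rintro ⟨h1, h2⟩
          refine ⟨h1, ?_⟩
          rw [hBiff σ]
          omega
      have e2 : Finset.univ.filter (fun σ : Fin n → Bool =>
            (YS a b σ (j + 1 - i) < XS a b σ i) ∧ (XS a b σ (i + k) < YS a b σ k))
          = Finset.univ.filter (fun σ : Fin n → Bool =>
            ((i:ℤ) ≤ (Fsum φ σ : ℤ)) ∧ ((Fsum γ σ : ℤ) < (i:ℤ) + (k:ℤ))) := by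
        apply Finset.filter_congr
        intro σ _
        rw [hAiff σ, hBiff σ]
      rw [e1, e2]
      -- apply the abstract lemma
      have habs := abstract_main
        ((Finset.univ.filter (fun l : Fin n => γ l true + γ l false = 2)).card)
        φ γ hφγ hγ1 (i:ℤ) ((i:ℤ) + (k:ℤ)) ?_ ?_ rfl
      · exact habs
      · rw [hQ]
        push_cast
        omega
      · rw [hQ]
        have : (0:ℤ) ≤ (Ksum φ : ℤ) := by positivity
        push_cast
        omega
  -- arithmetic with Pr
  have hPr : ∀ E : (Fin n → Bool) → Prop, Pr E = ((Finset.univ.filter E).card : ℝ) / 2 ^ n :=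
    fun _ => rfl
  rw [hPr, hPr]
  have hsplit := card_split_pred (fun σ : Fin n → Bool =>
      YS a b σ (j + 1 - i) < XS a b σ i)
    (fun σ : Fin n → Bool => XS a b σ (i + k) < YS a b σ k)
  have h2n : (0:ℝ) < 2 ^ n := by positivity
  have hmain2 : (Finset.univ.filter (fun σ : Fin n → Bool =>
        (YS a b σ (j + 1 - i) < XS a b σ i) ∧ ¬ (XS a b σ (i + k) < YS a b σ k))).card
      ≤ (Finset.univ.filter (fun σ : Fin n → Bool =>
        (YS a b σ (j + 1 - i) < XS a b σ i) ∧ (XS a b σ (i + k) < YS a b σ k))).card := hmain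
  have hnat : (Finset.univ.filter (fun σ : Fin n → Bool =>
        YS a b σ (j + 1 - i) < XS a b σ i)).card
      ≤ 2 * (Finset.univ.filter (fun σ : Fin n → Bool =>
        (YS a b σ (j + 1 - i) < XS a b σ i) ∧ (XS a b σ (i + k) < YS a b σ k))).card := by
    omega
  have final : (1:ℝ)/2 * (((Finset.univ.filter (fun σ : Fin n → Bool =>
        YS a b σ (j + 1 - i) < XS a b σ i)).card : ℝ) / 2^n)
      ≤ ((Finset.univ.filter (fun σ : Fin n → Bool =>
        (YS a b σ (j + 1 - i) < XS a b σ i) ∧ (XS a b σ (i + k) < YS a b σ k))).card : ℝ) / 2^n := by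
    rw [show (1:ℝ)/2 * (((Finset.univ.filter (fun σ : Fin n → Bool =>
        YS a b σ (j + 1 - i) < XS a b σ i)).card : ℝ) / 2^n)
      = (((Finset.univ.filter (fun σ : Fin n → Bool =>
        YS a b σ (j + 1 - i) < XS a b σ i)).card : ℝ)/2) / 2^n by ring]
    refine (div_le_div_iff_of_pos_right h2n).mpr ?_
    have hc : ((Finset.univ.filter (fun σ : Fin n → Bool =>
        YS a b σ (j + 1 - i) < XS a b σ i)).card : ℝ)
        ≤ 2 * ((Finset.univ.filter (fun σ : Fin n → Bool =>
        (YS a b σ (j + 1 - i) < XS a b σ i) ∧ (XS a b σ (i + k) < YS a b σ k))).card : ℝ) := by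
      exact_mod_cast hnat
    linarith
  convert final using 2 <;> congr!
end AbstractMain
end

section
/- In the pairing model, let i, j, k be integers with 1 ≤ i ≤ j ≤ k ≤ n. Then Pr(X^i > Y^j > X^k) ≥ Pr(X^i > Y^k > X^k). -/
open Finset

attribute [local instance] Classical.propDecidable

namespace Aux


/-- number of indices with `x ≤ v i` -/
noncomputable def cnt {N : ℕ} (v : Fin N → ℝ) (x : ℝ) : ℕ :=
  (Finset.univ.filter (fun i => x ≤ v i)).card

variable {N : ℕ} {v : Fin N → ℝ} {m : ℕ}

lemma cnt_anti (v : Fin N → ℝ) {x y : ℝ} (h : x ≤ y) : cnt v y ≤ cnt v x := by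
  apply Finset.card_le_card
  intro i hi
  simp only [cnt, Finset.mem_filter] at *
  exact ⟨hi.1, le_trans h hi.2⟩

lemma kth_spec (hm : 1 ≤ m) (hmN : m ≤ N) :
    kthLargest v m ∈ Set.range v ∧ m ≤ cnt v (kthLargest v m) ∧
      ∀ x, m ≤ cnt v x → x ≤ kthLargest v m := by
  have hN : 1 ≤ N := le_trans hm hmN
  -- the minimum index
  have hne : (Finset.univ : Finset (Fin N)).Nonempty := by
    rw [Finset.univ_nonempty_iff]
    exact Fin.pos_iff_nonempty.mp hN
  obtain ⟨i0, -, hi0⟩ := Finset.exists_min_image Finset.univ v hne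
  set T : Finset (Fin N) := Finset.univ.filter (fun i => m ≤ cnt v (v i)) with hT
  have hi0T : i0 ∈ T := by
    rw [hT, Finset.mem_filter]
    refine ⟨Finset.mem_univ _, ?_⟩
    have : (Finset.univ.filter (fun i => v i0 ≤ v i)) = Finset.univ := by
      apply Finset.filter_true_of_mem
      intro i hi; exact hi0 i hi
    unfold cnt
    rw [this, Finset.card_univ, Fintype.card_fin]
    exact hmN
  have hTim : (T.image v).Nonempty := ⟨v i0, Finset.mem_image_of_mem v hi0T⟩
  set K := (T.image v).max' hTim with hK
  have hKmem : K ∈ T.image v := Finset.max'_mem _ _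
  obtain ⟨iK, hiKT, hiK⟩ := Finset.mem_image.mp hKmem
  have hKcnt : m ≤ cnt v K := by
    rw [hT, Finset.mem_filter] at hiKT
    rw [← hiK]; exact hiKT.2
  have hub : ∀ x, m ≤ cnt v x → x ≤ K := by
    intro x hx
    have hne2 : (Finset.univ.filter (fun i => x ≤ v i)).Nonempty := by
      rw [← Finset.card_pos]
      exact lt_of_lt_of_le hm hx
    obtain ⟨i1, hi1mem, hi1⟩ := Finset.exists_min_image _ v hne2
    have hxle : x ≤ v i1 := (Finset.mem_filter.mp hi1mem).2
    have hcnt1 : m ≤ cnt v (v i1) := by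
      refine le_trans hx (Finset.card_le_card ?_)
      intro i hi
      have hi' := hi
      rw [Finset.mem_filter] at hi'
      exact Finset.mem_filter.mpr ⟨hi'.1, hi1 i hi⟩
    have : v i1 ∈ T.image v :=
      Finset.mem_image_of_mem v (Finset.mem_filter.mpr ⟨Finset.mem_univ _, hcnt1⟩)
    exact le_trans hxle (Finset.le_max' _ _ this)
  have hkth : kthLargest v m = K := by
    unfold kthLargest
    apply le_antisymm
    · apply csSup_le ⟨K, hKcnt⟩
      intro x hx; exact hub x hx
    · exact le_csSup ⟨K, fun x hx => hub x hx⟩ hKcnt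
  rw [hkth]
  exact ⟨⟨iK, hiK⟩, hKcnt, hub⟩

lemma kth_mem_range (hm : 1 ≤ m) (hmN : m ≤ N) : kthLargest v m ∈ Set.range v :=
  (kth_spec hm hmN).1

lemma le_kth_iff (hm : 1 ≤ m) (hmN : m ≤ N) {x : ℝ} :
    x ≤ kthLargest v m ↔ m ≤ cnt v x := by
  obtain ⟨-, h2, h3⟩ := kth_spec (v := v) hm hmN
  constructor
  · intro hx; exact le_trans h2 (cnt_anti v hx)
  · exact h3 x

lemma lt_kth (hm : 1 ≤ m) (hmN : m ≤ N) {x : ℝ}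
    (h : m ≤ (Finset.univ.filter (fun i => x < v i)).card) : x < kthLargest v m := by
  have hne2 : (Finset.univ.filter (fun i => x < v i)).Nonempty := by
    rw [← Finset.card_pos]; exact lt_of_lt_of_le hm h
  obtain ⟨i1, hi1mem, hi1⟩ := Finset.exists_min_image _ v hne2
  have hxlt : x < v i1 := (Finset.mem_filter.mp hi1mem).2
  have hcnt1 : m ≤ cnt v (v i1) := by
    refine le_trans h (Finset.card_le_card ?_)
    intro i hi
    have hi' := hi
    rw [Finset.mem_filter] at hi'
    exact Finset.mem_filter.mpr ⟨hi'.1, hi1 i hi⟩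
  exact lt_of_lt_of_le hxlt ((le_kth_iff hm hmN).mpr hcnt1)

/-- antitone in the rank -/
lemma kth_anti {m' : ℕ} (hm : 1 ≤ m) (hm' : m ≤ m') (hmN : m' ≤ N) :
    kthLargest v m' ≤ kthLargest v m := by
  have h1 : 1 ≤ m' := le_trans hm hm'
  rw [le_kth_iff hm (le_trans hm' hmN)]
  exact le_trans hm' ((le_kth_iff h1 hmN).mp (le_refl _))

/-- uniqueness : a value in the range with count exactly m is the m-th largest -/
lemma eq_kth_of_cnt (hv : Function.Injective v) (hm : 1 ≤ m) (hmN : m ≤ N)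
    {u : ℝ} (hu : u ∈ Set.range v) (hc : cnt v u = m) : u = kthLargest v m := by
  obtain ⟨iu, hiu⟩ := hu
  have h1 : u ≤ kthLargest v m := (le_kth_iff hm hmN).mpr (le_of_eq hc.symm)
  rcases eq_or_lt_of_le h1 with h | h
  · exact h
  · exfalso
    -- then cnt v u ≥ m + 1
    have hsub : Finset.univ.filter (fun i => kthLargest v m ≤ v i)
        ⊆ Finset.univ.filter (fun i => u < v i) := by
      intro i hi
      rw [Finset.mem_filter] at *
      exact ⟨hi.1, lt_of_lt_of_le h hi.2⟩
    have hK : m ≤ (Finset.univ.filter (fun i => u < v i)).card :=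
      le_trans ((le_kth_iff hm hmN).mp (le_refl _)) (Finset.card_le_card hsub)
    have hins : insert iu (Finset.univ.filter (fun i => u < v i))
        ⊆ Finset.univ.filter (fun i => u ≤ v i) := by
      intro i hi
      rcases Finset.mem_insert.mp hi with rfl | hi
      · exact Finset.mem_filter.mpr ⟨Finset.mem_univ _, le_of_eq hiu.symm⟩
      · rw [Finset.mem_filter] at *
        exact ⟨hi.1, le_of_lt hi.2⟩
    have hiunot : iu ∉ Finset.univ.filter (fun i => u < v i) := by
      rw [Finset.mem_filter]; push_neg
      intro _; rw [hiu]
    have := Finset.card_le_card hins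
    rw [Finset.card_insert_of_notMem hiunot] at this
    have : m + 1 ≤ cnt v u := le_trans (by omega) this
    omega

/-- the count at the m-th largest is exactly m (for injective v) -/
lemma cnt_kth (hv : Function.Injective v) (hm : 1 ≤ m) (hmN : m ≤ N) :
    cnt v (kthLargest v m) = m := by
  obtain ⟨hrange, h2, -⟩ := kth_spec (v := v) hm hmN
  obtain ⟨iK, hiK⟩ := hrange
  set K := kthLargest v m with hK
  by_contra hne
  have hKm : m + 1 ≤ cnt v K := by omega
  -- strict count at K is ≥ m
  have hsplit : Finset.univ.filter (fun i => K ≤ v i)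
      ⊆ insert iK (Finset.univ.filter (fun i => K < v i)) := by
    intro i hi
    rw [Finset.mem_filter] at hi
    rcases eq_or_lt_of_le hi.2 with h | h
    · have : i = iK := hv (by rw [hiK, ← h])
      exact Finset.mem_insert.mpr (Or.inl this)
    · exact Finset.mem_insert.mpr (Or.inr (Finset.mem_filter.mpr ⟨hi.1, h⟩))
  have hcard : m + 1 ≤ (insert iK (Finset.univ.filter (fun i => K < v i))).card :=
    le_trans hKm (Finset.card_le_card hsplit)
  have : m ≤ (Finset.univ.filter (fun i => K < v i)).card := by
    have := Finset.card_insert_le iK (Finset.univ.filter (fun i => K < v i))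
    omega
  exact absurd (lt_kth hm hmN this) (lt_irrefl K)



variable {n : ℕ}

/-- number of σ agreeing with h on S -/
lemma card_fix (S : Finset (Fin n)) (h : Fin n → Bool) :
    (univ.filter fun σ : Fin n → Bool => ∀ q ∈ S, σ q = h q).card = 2 ^ (n - S.card) := by
  classical
  induction S using Finset.induction_on with
  | empty =>
    simp only [Finset.notMem_empty, false_implies, implies_true, Finset.filter_true_of_mem,
      Finset.mem_univ, Finset.card_univ, Finset.card_empty, Nat.sub_zero]
    rw [Fintype.card_fun]
    simp
  | @insert q S hq ih =>
    set A := (univ.filter fun σ : Fin n → Bool => ∀ x ∈ S, σ x = h x) with hA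
    have hcardS : S.card + 1 ≤ n := by
      have := Finset.card_le_card (Finset.subset_univ (insert q S))
      rwa [Finset.card_insert_of_notMem hq, Finset.card_univ, Fintype.card_fin] at this
    have hsplit : (A.filter fun σ => σ q = h q).card
        + (A.filter fun σ => ¬ (σ q = h q)).card = A.card :=
      Finset.card_filter_add_card_filter_not (s := A) (p := fun σ => σ q = h q)
    have hbij : (A.filter fun σ => σ q = h q).card
        = (A.filter fun σ => ¬ (σ q = h q)).card := by
      refine Finset.card_bij' (fun σ _ => Function.update σ q (!(σ q)))
        (fun σ _ => Function.update σ q (!(σ q))) ?_ ?_ ?_ ?_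
      · intro σ hσ
        simp only [hA, Finset.mem_filter, Finset.mem_univ, true_and] at hσ ⊢
        constructor
        · intro x hx
          rw [Function.update_of_ne (by rintro rfl; exact hq hx)]
          exact hσ.1 x hx
        · rw [Function.update_self, hσ.2]
          simp
      · intro σ hσ
        simp only [hA, Finset.mem_filter, Finset.mem_univ, true_and] at hσ ⊢
        constructor
        · intro x hx
          rw [Function.update_of_ne (by rintro rfl; exact hq hx)]
          exact hσ.1 x hx
        · rw [Function.update_self]
          rcases Bool.eq_false_or_eq_true (σ q) with h1 | h1 <;>
            rcases Bool.eq_false_or_eq_true (h q) with h2 | h2 <;>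
              simp_all
      · intro σ _
        funext x
        by_cases hx : x = q
        · subst hx; simp [Function.update_self]
        · simp [Function.update_of_ne hx]
      · intro σ _
        funext x
        by_cases hx : x = q
        · subst hx; simp [Function.update_self]
        · simp [Function.update_of_ne hx]
    have htarget : (univ.filter fun σ : Fin n → Bool => ∀ x ∈ insert q S, σ x = h x)
        = A.filter fun σ => σ q = h q := by
      rw [hA, Finset.filter_filter]
      apply Finset.filter_congr
      intro σ _
      simp only [Finset.mem_insert]
      constructor
      · intro hall
        exact ⟨fun x hx => hall x (Or.inr hx), hall q (Or.inl rfl)⟩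
      · rintro ⟨h1, h2⟩ x (rfl | hx)
        · exact h2
        · exact h1 x hx
    rw [htarget]
    have h2 : 2 * (A.filter fun σ => σ q = h q).card = 2 ^ (n - S.card) := by
      rw [← ih, ← hsplit, ← hbij]; ring
    have hpow : 2 ^ (n - S.card) = 2 * 2 ^ (n - (insert q S).card) := by
      rw [Finset.card_insert_of_notMem hq]
      have h1 : n - (S.card + 1) + 1 = n - S.card := by clear * - hcardS; omega
      calc 2 ^ (n - S.card) = 2 ^ (n - (S.card + 1) + 1) := by rw [h1]
        _ = 2 * 2 ^ (n - (S.card + 1)) := by rw [pow_succ']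
    rw [hpow] at h2
    exact Nat.eq_of_mul_eq_mul_left (by norm_num) h2

/-- the master counting lemma -/
lemma card_cnt (S : Finset (Fin n)) (f : Fin n → Bool) (r : ℕ) :
    (univ.filter fun σ : Fin n → Bool => (S.filter fun q => σ q = f q).card = r).card
      = S.card.choose r * 2 ^ (n - S.card) := by
  classical
  have hset : (univ.filter fun σ : Fin n → Bool => (S.filter fun q => σ q = f q).card = r)
      = (S.powersetCard r).biUnion (fun T =>
          univ.filter fun σ : Fin n → Bool => ∀ q ∈ S, σ q = if q ∈ T then f q else !(f q)) := by
    ext σ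
    simp only [Finset.mem_biUnion, Finset.mem_filter, Finset.mem_univ, true_and,
      Finset.mem_powersetCard]
    constructor
    · intro hr
      refine ⟨S.filter fun q => σ q = f q, ⟨Finset.filter_subset _ _, hr⟩, ?_⟩
      intro q hq
      by_cases hT : q ∈ S.filter fun q => σ q = f q
      · rw [if_pos hT]
        exact (Finset.mem_filter.mp hT).2
      · rw [if_neg hT]
        have : ¬ (σ q = f q) := fun hc => hT (Finset.mem_filter.mpr ⟨hq, hc⟩)
        rcases Bool.eq_false_or_eq_true (σ q) with h1 | h1 <;>
          rcases Bool.eq_false_or_eq_true (f q) with h2 | h2 <;> simp_all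
    · rintro ⟨T, ⟨hTS, hTr⟩, hσ⟩
      have : (S.filter fun q => σ q = f q) = T := by
        ext q
        simp only [Finset.mem_filter]
        constructor
        · rintro ⟨hqS, hqf⟩
          by_contra hqT
          rw [hσ q hqS, if_neg hqT] at hqf
          exact (Bool.not_ne_self (f q)).elim (by simpa using hqf.symm)
        · intro hqT
          have hqS := hTS hqT
          exact ⟨hqS, by rw [hσ q hqS, if_pos hqT]⟩
      rw [this, hTr]
  rw [hset, Finset.card_biUnion]
  · rw [Finset.sum_congr rfl (fun T _ => card_fix S (fun q => if q ∈ T then f q else !(f q)))]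
    rw [Finset.sum_const, Finset.card_powersetCard, smul_eq_mul]
  · intro T hT T' hT' hne
    simp only [Finset.mem_coe, Finset.mem_powersetCard] at hT hT'
    apply Finset.disjoint_left.mpr
    intro σ hσ1 hσ2
    simp only [Finset.mem_filter, Finset.mem_univ, true_and] at hσ1 hσ2
    apply hne
    have key : ∀ (U : Finset (Fin n)), U ⊆ S →
        (∀ q ∈ S, σ q = if q ∈ U then f q else !(f q)) →
        (S.filter fun q => σ q = f q) = U := by
      intro U hUS hall
      ext q
      simp only [Finset.mem_filter]
      constructor
      · rintro ⟨hqS, hqf⟩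
        by_contra hqU
        rw [hall q hqS, if_neg hqU] at hqf
        exact (Bool.not_ne_self (f q)).elim (by simpa using hqf.symm)
      · intro hqU
        have hqS := hUS hqU
        exact ⟨hqS, by rw [hall q hqS, if_pos hqU]⟩
    rw [← key T hT.1 hσ1, ← key T' hT'.1 hσ2]

/-- halving lemma -/
lemma card_half (q0 : Fin n) (e0 : Bool) (P : (Fin n → Bool) → Prop) [DecidablePred P]
    (hP : ∀ σ v, P (Function.update σ q0 v) ↔ P σ) :
    2 * (univ.filter fun σ : Fin n → Bool => σ q0 = e0 ∧ P σ).card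
      = (univ.filter fun σ : Fin n → Bool => P σ).card := by
  classical
  have hsplit : (((univ.filter fun σ : Fin n → Bool => P σ)).filter fun σ => σ q0 = e0).card
      + (((univ.filter fun σ : Fin n → Bool => P σ)).filter fun σ => ¬ (σ q0 = e0)).card
      = ((univ.filter fun σ : Fin n → Bool => P σ)).card :=
    Finset.card_filter_add_card_filter_not
      (s := univ.filter fun σ : Fin n → Bool => P σ) (p := fun σ => σ q0 = e0)
  have he1 : ((univ.filter fun σ : Fin n → Bool => P σ).filter fun σ => σ q0 = e0)
      = univ.filter fun σ : Fin n → Bool => σ q0 = e0 ∧ P σ := by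
    rw [Finset.filter_filter]
    apply Finset.filter_congr; intro σ _; tauto
  have hbij : ((univ.filter fun σ : Fin n → Bool => P σ).filter fun σ => σ q0 = e0).card
      = ((univ.filter fun σ : Fin n → Bool => P σ).filter fun σ => ¬(σ q0 = e0)).card := by
    refine Finset.card_bij' (fun σ _ => Function.update σ q0 (!(σ q0)))
      (fun σ _ => Function.update σ q0 (!(σ q0))) ?_ ?_ ?_ ?_
    · intro σ hσ
      simp only [Finset.mem_filter, Finset.mem_univ, true_and] at hσ ⊢
      refine ⟨(hP σ _).mpr hσ.1, ?_⟩
      rw [Function.update_self, hσ.2]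
      simp
    · intro σ hσ
      simp only [Finset.mem_filter, Finset.mem_univ, true_and] at hσ ⊢
      refine ⟨(hP σ _).mpr hσ.1, ?_⟩
      rw [Function.update_self]
      rcases Bool.eq_false_or_eq_true (σ q0) with h1 | h1 <;>
        rcases Bool.eq_false_or_eq_true e0 with h2 | h2 <;> simp_all
    · intro σ _
      funext x
      by_cases hx : x = q0
      · subst hx; simp [Function.update_self]
      · simp [Function.update_of_ne hx]
    · intro σ _
      funext x
      by_cases hx : x = q0
      · subst hx; simp [Function.update_self]
      · simp [Function.update_of_ne hx]
  rw [← he1, two_mul]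
  nth_rewrite 2 [hbij]
  exact hsplit

/-- counting with one fixed coordinate outside S -/
lemma card_cnt_out (S : Finset (Fin n)) (f : Fin n → Bool) (r : ℕ) (q0 : Fin n) (e0 : Bool)
    (hq0 : q0 ∉ S) :
    (univ.filter fun σ : Fin n → Bool =>
        σ q0 = e0 ∧ (S.filter fun q => σ q = f q).card = r).card
      = S.card.choose r * 2 ^ (n - S.card - 1) := by
  classical
  have hinv : ∀ (σ : Fin n → Bool) v,
      ((S.filter fun q => (Function.update σ q0 v) q = f q).card = r)
        ↔ ((S.filter fun q => σ q = f q).card = r) := by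
    intro σ v
    have : (S.filter fun q => (Function.update σ q0 v) q = f q)
        = (S.filter fun q => σ q = f q) := by
      apply Finset.filter_congr
      intro q hq
      rw [Function.update_of_ne (by rintro rfl; exact hq0 hq)]
    rw [this]
  have h2 : 2 * (univ.filter fun σ : Fin n → Bool =>
        σ q0 = e0 ∧ (S.filter fun q => σ q = f q).card = r).card
      = (univ.filter fun σ : Fin n → Bool => (S.filter fun q => σ q = f q).card = r).card :=
    card_half q0 e0 (fun σ => (S.filter fun q => σ q = f q).card = r) hinv
  rw [card_cnt S f r] at h2
  have hcard : S.card ≤ n - 1 := by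
    have hsub : S ⊆ univ.erase q0 := by
      intro x hx
      exact Finset.mem_erase.mpr ⟨by rintro rfl; exact hq0 hx, Finset.mem_univ _⟩
    have hle := Finset.card_le_card hsub
    rw [Finset.card_erase_of_mem (Finset.mem_univ _), Finset.card_univ, Fintype.card_fin] at hle
    clear * - hle; omega
  have hpow : 2 ^ (n - S.card) = 2 * 2 ^ (n - S.card - 1) := by
    have hn : 0 < n := q0.pos
    have h1 : n - S.card - 1 + 1 = n - S.card := by clear * - hcard hn; omega
    calc 2 ^ (n - S.card) = 2 ^ (n - S.card - 1 + 1) := by rw [h1]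
      _ = 2 * 2 ^ (n - S.card - 1) := by rw [pow_succ']
  rw [hpow] at h2
  apply Nat.eq_of_mul_eq_mul_left (show 0 < 2 by norm_num)
  rw [h2]; ring

/-- counting with fixed coordinate inside S, consistent orientation, r = 0 : impossible -/
lemma card_cnt_in_zero (S : Finset (Fin n)) (f : Fin n → Bool) (q0 : Fin n) (e0 : Bool)
    (hq0 : q0 ∈ S) (hf : f q0 = e0) :
    (univ.filter fun σ : Fin n → Bool =>
        σ q0 = e0 ∧ (S.filter fun q => σ q = f q).card = 0).card = 0 := by
  classical
  rw [Finset.card_eq_zero]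
  rw [Finset.filter_eq_empty_iff]
  rintro σ - ⟨h1, h2⟩
  rw [Finset.card_eq_zero] at h2
  have : q0 ∈ S.filter fun q => σ q = f q :=
    Finset.mem_filter.mpr ⟨hq0, by rw [h1, hf]⟩
  rw [h2] at this
  exact absurd this (Finset.notMem_empty _)

/-- counting with fixed coordinate inside S, consistent orientation -/
lemma card_cnt_in (S : Finset (Fin n)) (f : Fin n → Bool) (r : ℕ) (q0 : Fin n) (e0 : Bool)
    (hq0 : q0 ∈ S) (hf : f q0 = e0) (hr : 1 ≤ r) :
    (univ.filter fun σ : Fin n → Bool =>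
        σ q0 = e0 ∧ (S.filter fun q => σ q = f q).card = r).card
      = (S.card - 1).choose (r - 1) * 2 ^ (n - S.card) := by
  classical
  have hSpos : 1 ≤ S.card := Finset.card_pos.mpr ⟨q0, hq0⟩
  have hSn : S.card ≤ n := by
    have := Finset.card_le_card (Finset.subset_univ S)
    rwa [Finset.card_univ, Fintype.card_fin] at this
  have hstep : (univ.filter fun σ : Fin n → Bool =>
        σ q0 = e0 ∧ (S.filter fun q => σ q = f q).card = r)
      = (univ.filter fun σ : Fin n → Bool =>
        σ q0 = e0 ∧ ((S.erase q0).filter fun q => σ q = f q).card = r - 1) := by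
    apply Finset.filter_congr
    intro σ _
    constructor
    · rintro ⟨h1, h2⟩
      refine ⟨h1, ?_⟩
      have hins : S.filter (fun q => σ q = f q)
          = insert q0 ((S.erase q0).filter fun q => σ q = f q) := by
        ext q
        simp only [Finset.mem_filter, Finset.mem_insert, Finset.mem_erase]
        constructor
        · rintro ⟨hqS, hqf⟩
          by_cases hq : q = q0
          · exact Or.inl hq
          · exact Or.inr ⟨⟨hq, hqS⟩, hqf⟩
        · rintro (rfl | ⟨⟨-, hqS⟩, hqf⟩)
          · exact ⟨hq0, by rw [h1, hf]⟩
          · exact ⟨hqS, hqf⟩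
      have hnotmem : q0 ∉ (S.erase q0).filter fun q => σ q = f q := by
        simp [Finset.mem_filter, Finset.mem_erase]
      rw [hins, Finset.card_insert_of_notMem hnotmem] at h2
      omega
    · rintro ⟨h1, h2⟩
      refine ⟨h1, ?_⟩
      have hins : S.filter (fun q => σ q = f q)
          = insert q0 ((S.erase q0).filter fun q => σ q = f q) := by
        ext q
        simp only [Finset.mem_filter, Finset.mem_insert, Finset.mem_erase]
        constructor
        · rintro ⟨hqS, hqf⟩
          by_cases hq : q = q0
          · exact Or.inl hq
          · exact Or.inr ⟨⟨hq, hqS⟩, hqf⟩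
        · rintro (rfl | ⟨⟨-, hqS⟩, hqf⟩)
          · exact ⟨hq0, by rw [h1, hf]⟩
          · exact ⟨hqS, hqf⟩
      have hnotmem : q0 ∉ (S.erase q0).filter fun q => σ q = f q := by
        simp [Finset.mem_filter, Finset.mem_erase]
      rw [hins, Finset.card_insert_of_notMem hnotmem]
      omega
  rw [hstep, card_cnt_out (S.erase q0) f (r-1) q0 e0 (Finset.notMem_erase _ _)]
  rw [Finset.card_erase_of_mem hq0]
  have hSmem : 1 ≤ S.card := Finset.card_pos.mpr ⟨q0, hq0⟩
  rw [show n - (S.card - 1) - 1 = n - S.card from by clear * - hSmem hSn; omega]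


section Model

variable {n : ℕ} {a b : Fin n → ℝ}

/-- all 2n values as one function -/
noncomputable def allv (a b : Fin n → ℝ) : Fin (n + n) → ℝ :=
  fun idx => Sum.elim a b (finSumFinEquiv.symm idx)

lemma allv_inj (hdist : Function.Injective (Sum.elim a b : Fin n ⊕ Fin n → ℝ)) :
    Function.Injective (allv a b) :=
  hdist.comp (Equiv.injective _)

lemma elim_eq_allv (z : Fin n ⊕ Fin n) : Sum.elim a b z = allv a b (finSumFinEquiv z) := by
  simp [allv]

lemma Xvals_eq (σ : Fin n → Bool) (q : Fin n) :
    Xvals a b σ q = Sum.elim a b (if σ q then Sum.inl q else Sum.inr q) := by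
  cases h : σ q <;> simp [Xvals, h]

lemma Yvals_eq (σ : Fin n → Bool) (q : Fin n) :
    Yvals a b σ q = Sum.elim a b (if σ q then Sum.inr q else Sum.inl q) := by
  cases h : σ q <;> simp [Yvals, h]

section inj
variable (hdist : Function.Injective (Sum.elim a b : Fin n ⊕ Fin n → ℝ))
include hdist

lemma Xvals_inj (σ : Fin n → Bool) : Function.Injective (Xvals a b σ) := by
  intro q q' h
  rw [Xvals_eq, Xvals_eq] at h
  have := hdist h
  cases hq : σ q <;> cases hq' : σ q' <;> rw [hq, hq'] at this <;> simp_all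

lemma Yvals_inj (σ : Fin n → Bool) : Function.Injective (Yvals a b σ) := by
  intro q q' h
  rw [Yvals_eq, Yvals_eq] at h
  have := hdist h
  cases hq : σ q <;> cases hq' : σ q' <;> rw [hq, hq'] at this <;> simp_all

lemma X_ne_Y (σ : Fin n → Bool) (q q' : Fin n) : Xvals a b σ q ≠ Yvals a b σ q' := by
  intro h
  rw [Xvals_eq, Yvals_eq] at h
  have := hdist h
  cases hq : σ q <;> cases hq' : σ q' <;> rw [hq, hq'] at this <;> simp_all

end inj

lemma mem_range_allv_of_X (σ : Fin n → Bool) (q : Fin n) :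
    Xvals a b σ q ∈ Set.range (allv a b) := by
  rw [Xvals_eq]
  exact ⟨finSumFinEquiv _, (elim_eq_allv _).symm⟩

lemma mem_range_allv_of_Y (σ : Fin n → Bool) (q : Fin n) :
    Yvals a b σ q ∈ Set.range (allv a b) := by
  rw [Yvals_eq]
  exact ⟨finSumFinEquiv _, (elim_eq_allv _).symm⟩

lemma cnt_allv_split (σ : Fin n → Bool) (x : ℝ) :
    cnt (allv a b) x = cnt (Xvals a b σ) x + cnt (Yvals a b σ) x := by
  unfold cnt
  rw [Finset.card_filter, Finset.card_filter, Finset.card_filter]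
  rw [← Equiv.sum_comp finSumFinEquiv (fun idx => if x ≤ allv a b idx then (1:ℕ) else 0)]
  have : ∀ z : Fin n ⊕ Fin n, (if x ≤ allv a b (finSumFinEquiv z) then (1:ℕ) else 0)
      = (if x ≤ Sum.elim a b z then (1:ℕ) else 0) := by
    intro z; rw [← elim_eq_allv]
  rw [Fintype.sum_congr _ _ this]
  rw [Fintype.sum_sum_type]
  have key : ∀ q : Fin n, ((if x ≤ Sum.elim a b (Sum.inl q) then (1:ℕ) else 0)
        + (if x ≤ Sum.elim a b (Sum.inr q) then (1:ℕ) else 0))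
      = ((if x ≤ Xvals a b σ q then (1:ℕ) else 0) + (if x ≤ Yvals a b σ q then (1:ℕ) else 0)) := by
    intro q
    cases h : σ q <;> simp [Xvals, Yvals, h] <;> by_cases hA : x ≤ a q <;> by_cases hB : x ≤ b q <;> simp [hA, hB]
  calc (∑ q : Fin n, (if x ≤ Sum.elim a b (Sum.inl q) then (1:ℕ) else 0))
        + (∑ q : Fin n, (if x ≤ Sum.elim a b (Sum.inr q) then (1:ℕ) else 0))
      = ∑ q : Fin n, ((if x ≤ Sum.elim a b (Sum.inl q) then (1:ℕ) else 0)
        + (if x ≤ Sum.elim a b (Sum.inr q) then (1:ℕ) else 0)) := Finset.sum_add_distrib.symm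
    _ = ∑ q : Fin n, ((if x ≤ Xvals a b σ q then (1:ℕ) else 0)
        + (if x ≤ Yvals a b σ q then (1:ℕ) else 0)) :=
        Finset.sum_congr rfl (fun q _ => key q)
    _ = (∑ q : Fin n, (if x ≤ Xvals a b σ q then (1:ℕ) else 0))
        + (∑ q : Fin n, (if x ≤ Yvals a b σ q then (1:ℕ) else 0)) := Finset.sum_add_distrib

lemma cnt_allv_pair (x : ℝ) :
    cnt (allv a b) x = ∑ q : Fin n,
      ((if x ≤ a q then (1:ℕ) else 0) + (if x ≤ b q then (1:ℕ) else 0)) := by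
  unfold cnt
  rw [Finset.card_filter]
  rw [← Equiv.sum_comp finSumFinEquiv (fun idx => if x ≤ allv a b idx then (1:ℕ) else 0)]
  have : ∀ z : Fin n ⊕ Fin n, (if x ≤ allv a b (finSumFinEquiv z) then (1:ℕ) else 0)
      = (if x ≤ Sum.elim a b z then (1:ℕ) else 0) := by
    intro z; rw [← elim_eq_allv]
  rw [Fintype.sum_congr _ _ this]
  rw [Fintype.sum_sum_type]
  calc (∑ q : Fin n, (if x ≤ Sum.elim a b (Sum.inl q) then (1:ℕ) else 0))
        + (∑ q : Fin n, (if x ≤ Sum.elim a b (Sum.inr q) then (1:ℕ) else 0))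
      = ∑ q : Fin n, ((if x ≤ Sum.elim a b (Sum.inl q) then (1:ℕ) else 0)
        + (if x ≤ Sum.elim a b (Sum.inr q) then (1:ℕ) else 0)) := Finset.sum_add_distrib.symm
    _ = ∑ q : Fin n, ((if x ≤ a q then (1:ℕ) else 0) + (if x ≤ b q then (1:ℕ) else 0)) := by
        apply Finset.sum_congr rfl
        intro q _
        simp
        by_cases hA : x ≤ a q <;> by_cases hB : x ≤ b q <;> simp [hA, hB]

/-- flip all pairs -/
lemma Xvals_flip (σ : Fin n → Bool) : Xvals a b (fun q => !(σ q)) = Yvals a b σ := by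
  funext q; cases h : σ q <;> simp [Xvals, Yvals, h]

lemma Yvals_flip (σ : Fin n → Bool) : Yvals a b (fun q => !(σ q)) = Xvals a b σ := by
  funext q; cases h : σ q <;> simp [Xvals, Yvals, h]

lemma XS_flip (σ : Fin n → Bool) (m : ℕ) : XS a b (fun q => !(σ q)) m = YS a b σ m := by
  unfold XS YS; rw [Xvals_flip]

lemma YS_flip (σ : Fin n → Bool) (m : ℕ) : YS a b (fun q => !(σ q)) m = XS a b σ m := by
  unfold XS YS; rw [Yvals_flip]

end Model


section Ffun

variable {n : ℕ} {a b : Fin n → ℝ}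

/-- the number of assignments with `X^s < Y^r` -/
noncomputable def Fc (a b : Fin n → ℝ) (r s : ℕ) : ℕ :=
  (univ.filter fun σ : Fin n → Bool => XS a b σ s < YS a b σ r).card

variable (hdist : Function.Injective (Sum.elim a b : Fin n ⊕ Fin n → ℝ))
include hdist

lemma XS_ne_YS (σ : Fin n → Bool) {r s : ℕ} (hr : 1 ≤ r) (hrn : r ≤ n)
    (hs : 1 ≤ s) (hsn : s ≤ n) : XS a b σ s ≠ YS a b σ r := by
  obtain ⟨q, hq⟩ := kth_mem_range (v := Xvals a b σ) hs hsn
  obtain ⟨q', hq'⟩ := kth_mem_range (v := Yvals a b σ) hr hrn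
  rw [XS, YS, ← hq, ← hq']
  exact X_ne_Y hdist σ q q'

lemma F_flip {r s : ℕ} (hr : 1 ≤ r) (hrn : r ≤ n) (hs : 1 ≤ s) (hsn : s ≤ n) :
    Fc a b r s + Fc a b s r = 2 ^ n := by
  classical
  have hsplit : ((univ : Finset (Fin n → Bool)).filter
        fun σ => XS a b σ s < YS a b σ r).card
      + ((univ : Finset (Fin n → Bool)).filter
        fun σ => ¬ (XS a b σ s < YS a b σ r)).card
      = (univ : Finset (Fin n → Bool)).card :=
    Finset.card_filter_add_card_filter_not (p := fun σ => XS a b σ s < YS a b σ r)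
  have huniv : (univ : Finset (Fin n → Bool)).card = 2 ^ n := by
    rw [Finset.card_univ, Fintype.card_fun]
    simp
  have hneg : ((univ : Finset (Fin n → Bool)).filter
        fun σ => ¬ (XS a b σ s < YS a b σ r)).card = Fc a b s r := by
    have hcongr : ((univ : Finset (Fin n → Bool)).filter
          fun σ => ¬ (XS a b σ s < YS a b σ r))
        = ((univ : Finset (Fin n → Bool)).filter
          fun σ => YS a b σ r < XS a b σ s) := by
      apply Finset.filter_congr
      intro σ _
      constructor
      · intro h
        exact ((XS_ne_YS hdist σ hr hrn hs hsn).lt_or_gt).resolve_left h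
      · intro h hlt
        exact absurd (lt_trans h hlt) (lt_irrefl _)
    rw [hcongr]
    unfold Fc
    refine Finset.card_bij' (fun σ _ => (fun q => !(σ q))) (fun σ _ => (fun q => !(σ q)))
      ?_ ?_ ?_ ?_
    · intro σ hσ
      simp only [Finset.mem_filter, Finset.mem_univ, true_and] at hσ ⊢
      rw [XS_flip, YS_flip]
      exact hσ
    · intro σ hσ
      simp only [Finset.mem_filter, Finset.mem_univ, true_and] at hσ ⊢
      rw [XS_flip, YS_flip]
      exact hσ
    · intro σ _; funext q; simp
    · intro σ _; funext q; simp
  rw [Fc, ← hneg, hsplit, huniv]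

/-- splitting lemma: `#{X^s < Y^r < X^s'} + #{X^s' < Y^r} = #{X^s < Y^r}` for `s' ≤ s` -/
lemma F_split {r s s' : ℕ} (hr : 1 ≤ r) (hrn : r ≤ n) (hs' : 1 ≤ s') (hss : s' ≤ s)
    (hsn : s ≤ n) :
    ((univ : Finset (Fin n → Bool)).filter
        fun σ => XS a b σ s < YS a b σ r ∧ YS a b σ r < XS a b σ s').card
      + Fc a b r s' = Fc a b r s := by
  classical
  set A := (univ : Finset (Fin n → Bool)).filter fun σ => XS a b σ s < YS a b σ r with hA
  have hsplit : (A.filter fun σ => YS a b σ r < XS a b σ s').card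
      + (A.filter fun σ => ¬ (YS a b σ r < XS a b σ s')).card = A.card :=
    Finset.card_filter_add_card_filter_not (p := fun σ => YS a b σ r < XS a b σ s')
  have h1 : A.filter (fun σ => YS a b σ r < XS a b σ s')
      = (univ : Finset (Fin n → Bool)).filter
        fun σ => XS a b σ s < YS a b σ r ∧ YS a b σ r < XS a b σ s' := by
    rw [hA, Finset.filter_filter]
  have h2 : A.filter (fun σ => ¬ (YS a b σ r < XS a b σ s'))
      = (univ : Finset (Fin n → Bool)).filter fun σ => XS a b σ s' < YS a b σ r := by
    rw [hA, Finset.filter_filter]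
    apply Finset.filter_congr
    intro σ _
    constructor
    · rintro ⟨-, hnlt⟩
      exact ((XS_ne_YS hdist σ hr hrn hs' (le_trans hss hsn)).lt_or_gt).resolve_right hnlt
    · intro h
      have hanti : XS a b σ s ≤ XS a b σ s' := kth_anti (v := Xvals a b σ) hs' hss hsn
      exact ⟨lt_of_le_of_lt hanti h, fun hlt => absurd (lt_trans h hlt) (lt_irrefl _)⟩
  rw [h1, h2] at hsplit
  exact hsplit

end Ffun

section Cutoff

variable {n : ℕ} {a b : Fin n → ℝ}

/-- pairs entirely above the cutoff -/
noncomputable def InS (a b : Fin n → ℝ) (x : ℝ) : Finset (Fin n) :=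
  univ.filter fun q => x ≤ a q ∧ x ≤ b q

/-- pairs split by the cutoff -/
noncomputable def SpS (a b : Fin n → ℝ) (x : ℝ) : Finset (Fin n) :=
  univ.filter fun q => (x ≤ a q ∧ ¬ x ≤ b q) ∨ (¬ x ≤ a q ∧ x ≤ b q)

/-- orientation putting the top of a split pair into the Y-set -/
noncomputable def ftop (b : Fin n → ℝ) (x : ℝ) : Fin n → Bool :=
  fun q => if x ≤ b q then true else false

lemma InS_disj_SpS (x : ℝ) : Disjoint (InS a b x) (SpS a b x) := by
  rw [Finset.disjoint_left]
  intro q hq1 hq2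
  rw [InS, Finset.mem_filter] at hq1
  rw [SpS, Finset.mem_filter] at hq2
  tauto

/-- decomposition of the count of Y-values above a cutoff -/
lemma cntY_decomp (σ : Fin n → Bool) (x : ℝ) :
    cnt (Yvals a b σ) x
      = (InS a b x).card + ((SpS a b x).filter fun q => σ q = ftop b x q).card := by
  classical
  have hset : univ.filter (fun q => x ≤ Yvals a b σ q)
      = InS a b x ∪ ((SpS a b x).filter fun q => σ q = ftop b x q) := by
    ext q
    simp only [Finset.mem_filter, Finset.mem_univ, true_and, Finset.mem_union,
      InS, SpS, ftop]
    by_cases h1 : x ≤ a q <;> by_cases h2 : x ≤ b q <;> cases hσ : σ q <;>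
      simp [Yvals, h1, h2, hσ] <;> linarith
  rw [cnt, hset, Finset.card_union_of_disjoint]
  exact Finset.disjoint_of_subset_right (Finset.filter_subset _ _) (InS_disj_SpS x)

/-- the total count of values above a cutoff in terms of pair categories -/
lemma cnt_allv_decomp (x : ℝ) :
    cnt (allv a b) x = 2 * (InS a b x).card + (SpS a b x).card := by
  classical
  rw [cnt_allv_pair (a := a) (b := b) x]
  rw [InS, SpS, Finset.card_filter, Finset.card_filter]
  rw [Finset.mul_sum, ← Finset.sum_add_distrib]
  apply Finset.sum_congr rfl
  intro q _
  by_cases h1 : x ≤ a q <;> by_cases h2 : x ≤ b q <;> simp [h1, h2]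

/-- the pair containing a given value, with the orientation placing it in `Y`,
and the partner value -/
lemma pair_of_val (hdist : Function.Injective (Sum.elim a b : Fin n ⊕ Fin n → ℝ))
    {x : ℝ} (hx : x ∈ Set.range (allv a b)) :
    ∃ (q0 : Fin n) (e0 : Bool) (pv : ℝ),
      (∀ σ : Fin n → Bool, (∃ q, Yvals a b σ q = x) ↔ σ q0 = e0) ∧
      ((e0 = false ∧ a q0 = x ∧ b q0 = pv) ∨ (e0 = true ∧ b q0 = x ∧ a q0 = pv)) ∧
      (∀ q, q ≠ q0 → a q ≠ x ∧ b q ≠ x) ∧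
      pv ∈ Set.range (allv a b) ∧ pv ≠ x := by
  obtain ⟨idx, hidx⟩ := hx
  obtain ⟨z, hzval⟩ : ∃ z : Fin n ⊕ Fin n, Sum.elim a b z = x :=
    ⟨finSumFinEquiv.symm idx, hidx⟩
  have hinj : ∀ (u u' : Fin n ⊕ Fin n), Sum.elim a b u = Sum.elim a b u' → u = u' :=
    fun u u' h => hdist h
  clear hidx
  rcases z with q0 | q0
  · -- x = a q0
    refine ⟨q0, false, b q0, ?_, ?_, ?_, ?_, ?_⟩
    · intro σ
      constructor
      · rintro ⟨q, hq⟩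
        rw [Yvals_eq] at hq
        have := hinj _ _ (hq.trans hzval.symm)
        cases hσ : σ q <;> rw [hσ] at this <;> simp_all
      · intro hσ
        exact ⟨q0, by simp [Yvals, hσ, hzval.symm]⟩
    · left; exact ⟨rfl, hzval, rfl⟩

    · intro q hq
      constructor
      · intro haq
        have := hinj (Sum.inl q) (Sum.inl q0) (by simpa using haq.trans hzval.symm)
        simp_all
      · intro hbq
        have := hinj (Sum.inr q) (Sum.inl q0) (by simpa using hbq.trans hzval.symm)
        simp_all
    · exact ⟨finSumFinEquiv (Sum.inr q0), ((elim_eq_allv (Sum.inr q0)).symm : _)⟩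
    · intro hbq
      have := hinj (Sum.inr q0) (Sum.inl q0) (by simpa using hbq.trans hzval.symm)
      simp_all
  · -- x = b q0
    refine ⟨q0, true, a q0, ?_, ?_, ?_, ?_, ?_⟩
    · intro σ
      constructor
      · rintro ⟨q, hq⟩
        rw [Yvals_eq] at hq
        have := hinj _ _ (hq.trans hzval.symm)
        cases hσ : σ q <;> rw [hσ] at this <;> simp_all
      · intro hσ
        exact ⟨q0, by simp [Yvals, hσ, hzval.symm]⟩
    · right; exact ⟨rfl, hzval, rfl⟩
    · intro q hq
      constructor
      · intro haq
        have := hinj (Sum.inl q) (Sum.inr q0) (by simpa using haq.trans hzval.symm)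
        simp_all
      · intro hbq
        have := hinj (Sum.inr q) (Sum.inr q0) (by simpa using hbq.trans hzval.symm)
        simp_all
    · exact ⟨finSumFinEquiv (Sum.inl q0), ((elim_eq_allv (Sum.inl q0)).symm : _)⟩
    · intro haq
      have := hinj (Sum.inl q0) (Sum.inr q0) (by simpa using haq.trans hzval.symm)
      simp_all

end Cutoff

section Event

variable {n : ℕ} {a b : Fin n → ℝ}

/-- the event `X^{s+1} < Y^m < X^s` holds iff the `(s+m)`-th largest overall value
is a `Y`-value and there are exactly `m` `Y`-values above it -/
lemma event_iff (hdist : Function.Injective (Sum.elim a b : Fin n ⊕ Fin n → ℝ))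
    {m s : ℕ} (hm : 1 ≤ m) (hmn : m ≤ n) (hs1 : 1 ≤ s) (hsn : s + 1 ≤ n)
    (hpnn : s + m ≤ n + n) (σ : Fin n → Bool) :
    (XS a b σ (s+1) < YS a b σ m ∧ YS a b σ m < XS a b σ s)
      ↔ ((∃ q, Yvals a b σ q = kthLargest (allv a b) (s+m))
          ∧ cnt (Yvals a b σ) (kthLargest (allv a b) (s+m)) = m) := by
  have hp1 : 1 ≤ s + m := by omega
  set ww := kthLargest (allv a b) (s+m) with hww
  constructor
  · rintro ⟨h1, h2⟩
    obtain ⟨qy, hqy⟩ := kth_mem_range (v := Yvals a b σ) hm hmn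
    have hcY : cnt (Yvals a b σ) (YS a b σ m) = m := cnt_kth (Yvals_inj hdist σ) hm hmn
    have hXge : s ≤ cnt (Xvals a b σ) (YS a b σ m) :=
      (le_kth_iff hs1 (by omega)).mp (le_of_lt h2)
    have hXlt : ¬ (s + 1 ≤ cnt (Xvals a b σ) (YS a b σ m)) := fun hcon =>
      absurd ((le_kth_iff (by omega) hsn).mpr hcon) (not_le_of_gt h1)
    have hall : cnt (allv a b) (YS a b σ m) = s + m := by
      have := cnt_allv_split (a := a) (b := b) σ (YS a b σ m)
      omega
    have hy_all : YS a b σ m ∈ Set.range (allv a b) := by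
      show kthLargest (Yvals a b σ) m ∈ _
      rw [← hqy]
      exact mem_range_allv_of_Y σ qy
    have heq : YS a b σ m = ww := eq_kth_of_cnt (allv_inj hdist) hp1 hpnn hy_all hall
    exact ⟨⟨qy, hqy.trans heq⟩, heq ▸ hcY⟩
  · rintro ⟨⟨qy, hqy⟩, hcY⟩
    have hYS : ww = YS a b σ m := eq_kth_of_cnt (Yvals_inj hdist σ) hm hmn ⟨qy, hqy⟩ hcY
    have hallc : cnt (allv a b) ww = s + m := cnt_kth (allv_inj hdist) hp1 hpnn
    have hX : cnt (Xvals a b σ) ww = s := by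
      have := cnt_allv_split (a := a) (b := b) σ ww
      omega
    have h2 : ww < XS a b σ s := by
      have hle : ww ≤ XS a b σ s := (le_kth_iff hs1 (by omega)).mpr (le_of_eq hX.symm)
      rcases eq_or_lt_of_le hle with h | h
      · exfalso
        obtain ⟨qx, hqx⟩ := kth_mem_range (v := Xvals a b σ) hs1 (by omega : s ≤ n)
        apply X_ne_Y hdist σ qx qy
        have hqx' : Xvals a b σ qx = XS a b σ s := hqx
        rw [hqx', ← h, hqy]
      · exact h
    have h1 : XS a b σ (s+1) < ww := by
      apply lt_of_not_ge
      intro hcon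
      have := (le_kth_iff (by omega : 1 ≤ s+1) hsn).mp hcon
      omega
    exact ⟨hYS ▸ h1, hYS ▸ h2⟩

end Event

section CoreCount

variable {n : ℕ} {a b : Fin n → ℝ}

lemma choose_step {T R : ℕ} (h : 2 * R + 2 ≤ T) : T.choose R ≤ T.choose (R + 1) :=
  Nat.choose_le_succ_of_lt_half_left (by omega)

lemma core_count (hdist : Function.Injective (Sum.elim a b : Fin n ⊕ Fin n → ℝ))
    {w w' : ℝ} {m s : ℕ} (hm : 1 ≤ m) (hms : m + 1 ≤ s)
    (hw_range : w ∈ Set.range (allv a b)) (hw'_range : w' ∈ Set.range (allv a b))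
    (hw_cnt : cnt (allv a b) w = s + m) (hw'_cnt : cnt (allv a b) w' = s + m + 1)
    (hww' : w' < w)
    (hGap : ∀ u, u ∈ Set.range (allv a b) → w' ≤ u → (w ≤ u ∨ u = w')) :
    (univ.filter fun σ : Fin n → Bool =>
        (∃ q, Yvals a b σ q = w) ∧ cnt (Yvals a b σ) w = m).card
      ≤ (univ.filter fun σ : Fin n → Bool =>
        (∃ q, Yvals a b σ q = w') ∧ cnt (Yvals a b σ) w' = m + 1).card := by
  classical
  obtain ⟨q0, e0, pv, hmemY, hside, huniq, hpv_range, hpv_ne⟩ := pair_of_val hdist hw_range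
  obtain ⟨q1, e1, pv1, hmemY1, hside1, huniq1, hpv1_range, hpv1_ne⟩ :=
    pair_of_val hdist hw'_range
  -- category counts at cutoff w
  have hpt : 2 * (InS a b w).card + (SpS a b w).card = s + m := by
    have h := cnt_allv_decomp (a := a) (b := b) w
    rw [hw_cnt] at h
    omega
  -- rewrite the left event
  have hNm : (univ.filter fun σ : Fin n → Bool =>
        (∃ q, Yvals a b σ q = w) ∧ cnt (Yvals a b σ) w = m)
      = (univ.filter fun σ : Fin n → Bool =>
        σ q0 = e0 ∧ (InS a b w).card
          + ((SpS a b w).filter fun q => σ q = ftop b w q).card = m) := by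
    apply Finset.filter_congr
    intro σ _
    rw [hmemY σ, cntY_decomp σ w]
  -- rewrite the right event
  have hNm1 : (univ.filter fun σ : Fin n → Bool =>
        (∃ q, Yvals a b σ q = w') ∧ cnt (Yvals a b σ) w' = m + 1)
      = (univ.filter fun σ : Fin n → Bool =>
        σ q1 = e1 ∧ (InS a b w').card
          + ((SpS a b w').filter fun q => σ q = ftop b w' q).card = m + 1) := by
    apply Finset.filter_congr
    intro σ _
    rw [hmemY1 σ, cntY_decomp σ w']
  rw [hNm, hNm1]
  -- trivial case : too many inner pairs
  by_cases hdm : m < (InS a b w).card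
  · have hempty : (univ.filter fun σ : Fin n → Bool =>
        σ q0 = e0 ∧ (InS a b w).card
          + ((SpS a b w).filter fun q => σ q = ftop b w q).card = m) = ∅ := by
      rw [Finset.filter_eq_empty_iff]
      rintro σ - ⟨-, hcon⟩
      omega
    rw [hempty]
    exact Nat.zero_le _
  push_neg at hdm
  -- side facts for the pair of w
  have hq0sides : (a q0 = w ∧ b q0 = pv) ∨ (b q0 = w ∧ a q0 = pv) := by
    rcases hside with ⟨-, h1, h2⟩ | ⟨-, h1, h2⟩
    · exact Or.inl ⟨h1, h2⟩
    · exact Or.inr ⟨h1, h2⟩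
  have hq1sides : (a q1 = w' ∧ b q1 = pv1) ∨ (b q1 = w' ∧ a q1 = pv1) := by
    rcases hside1 with ⟨-, h1, h2⟩ | ⟨-, h1, h2⟩
    · exact Or.inl ⟨h1, h2⟩
    · exact Or.inr ⟨h1, h2⟩
  -- the iff transfer between the two cutoffs away from q1
  have hiffa : ∀ q, q ≠ q1 → (w' ≤ a q ↔ w ≤ a q) := by
    intro q hq
    constructor
    · intro h
      rcases hGap (a q) ⟨finSumFinEquiv (Sum.inl q), (elim_eq_allv (Sum.inl q)).symm⟩ h with
        h2 | h2
      · exact h2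
      · exact absurd h2 (huniq1 q hq).1
    · intro h
      exact le_trans (le_of_lt hww') h
  have hiffb : ∀ q, q ≠ q1 → (w' ≤ b q ↔ w ≤ b q) := by
    intro q hq
    constructor
    · intro h
      rcases hGap (b q) ⟨finSumFinEquiv (Sum.inr q), (elim_eq_allv (Sum.inr q)).symm⟩ h with
        h2 | h2
      · exact h2
      · exact absurd h2 (huniq1 q hq).2
    · intro h
      exact le_trans (le_of_lt hww') h
  -- reshape the left event
  have ht2r : 2 * (m - (InS a b w).card) + 1 ≤ (SpS a b w).card := by
    clear * - hpt hdm hms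
    omega
  have hshape : (univ.filter fun σ : Fin n → Bool =>
        σ q0 = e0 ∧ (InS a b w).card
          + ((SpS a b w).filter fun q => σ q = ftop b w q).card = m)
      = (univ.filter fun σ : Fin n → Bool =>
        σ q0 = e0 ∧ ((SpS a b w).filter fun q => σ q = ftop b w q).card
          = m - (InS a b w).card) := by
    apply Finset.filter_congr
    intro σ _
    constructor
    · rintro ⟨h1, h2⟩
      exact ⟨h1, by clear * - h2 hdm; omega⟩
    · rintro ⟨h1, h2⟩
      exact ⟨h1, by clear * - h2 hdm; omega⟩
  have hpow2 : ∀ u : ℕ, 1 ≤ u → 2 ^ u = 2 * 2 ^ (u - 1) := by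
    intro u hu
    obtain ⟨U, rfl⟩ : ∃ U, u = U + 1 := ⟨u - 1, by omega⟩
    rw [pow_succ']
    simp
  have hB : ((univ.filter fun σ : Fin n → Bool =>
        σ q0 = e0 ∧ (InS a b w).card
          + ((SpS a b w).filter fun q => σ q = ftop b w q).card = m).card
      ≤ ((SpS a b w).card - 1).choose (m - (InS a b w).card)
          * 2 ^ (n - (SpS a b w).card))
      ∧ (1 ≤ n - (SpS a b w).card →
        (univ.filter fun σ : Fin n → Bool =>
        σ q0 = e0 ∧ (InS a b w).card
          + ((SpS a b w).filter fun q => σ q = ftop b w q).card = m).card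
      ≤ (SpS a b w).card.choose (m - (InS a b w).card)
          * 2 ^ (n - (SpS a b w).card - 1)) := by
    rw [hshape]
    by_cases hq0c : w ≤ pv
    · -- pair of w is inner at w
      have hq0In : q0 ∈ InS a b w := by
        simp only [InS, Finset.mem_filter, Finset.mem_univ, true_and]
        rcases hq0sides with ⟨h1, h2⟩ | ⟨h1, h2⟩
        · rw [h1, h2]; exact ⟨le_refl w, hq0c⟩
        · rw [h1, h2]; exact ⟨hq0c, le_refl w⟩
      have hq0notSp : q0 ∉ SpS a b w :=
        fun hcon => (Finset.disjoint_left.mp (InS_disj_SpS w)) hq0In hcon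
      have hval := card_cnt_out (SpS a b w) (ftop b w) (m - (InS a b w).card) q0 e0 hq0notSp
      rw [hval]
      have htn : (SpS a b w).card + 1 ≤ n := by
        have hsub : SpS a b w ⊆ univ.erase q0 := by
          intro x hx
          exact Finset.mem_erase.mpr ⟨by rintro rfl; exact hq0notSp hx, Finset.mem_univ _⟩
        have hle := Finset.card_le_card hsub
        rw [Finset.card_erase_of_mem (Finset.mem_univ _), Finset.card_univ,
          Fintype.card_fin] at hle
        have hn : 0 < n := q0.pos
        clear * - hle hn
        omega
      constructor
      · -- choose (t, r) * 2^(n-t-1) ≤ choose (t-1, r) * 2^(n-t)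
        have hchoose : (SpS a b w).card.choose (m - (InS a b w).card)
            ≤ 2 * ((SpS a b w).card - 1).choose (m - (InS a b w).card) := by
          rcases Nat.eq_zero_or_pos (m - (InS a b w).card) with hz | hpos
          · rw [hz]; simp
          · obtain ⟨R, hR⟩ : ∃ R, m - (InS a b w).card = R + 1 :=
              ⟨m - (InS a b w).card - 1, by clear * - hpos; omega⟩
            obtain ⟨T, hT⟩ : ∃ T, (SpS a b w).card = T + 1 :=
              ⟨(SpS a b w).card - 1, by clear * - ht2r; omega⟩
            rw [hR, hT, Nat.choose_succ_succ, Nat.add_sub_cancel]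
            simp only [Nat.succ_eq_add_one]
            have hstep : T.choose R ≤ T.choose (R + 1) := by
              apply choose_step
              clear * - ht2r hR hT
              omega
            clear * - hstep
            omega
        calc (SpS a b w).card.choose (m - (InS a b w).card)
              * 2 ^ (n - (SpS a b w).card - 1)
            ≤ (2 * ((SpS a b w).card - 1).choose (m - (InS a b w).card))
              * 2 ^ (n - (SpS a b w).card - 1) := Nat.mul_le_mul_right _ hchoose
          _ = ((SpS a b w).card - 1).choose (m - (InS a b w).card)
              * (2 * 2 ^ (n - (SpS a b w).card - 1)) := by ring
          _ = ((SpS a b w).card - 1).choose (m - (InS a b w).card)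
              * 2 ^ (n - (SpS a b w).card) := by
              rw [← hpow2 (n - (SpS a b w).card) (by clear * - htn; omega)]
      · intro _
        exact le_refl _
    · -- pair of w is split at w
      have hq0Sp : q0 ∈ SpS a b w ∧ ftop b w q0 = e0 := by
        rcases hside with ⟨he0, h1, h2⟩ | ⟨he0, h1, h2⟩
        · constructor
          · simp only [SpS, Finset.mem_filter, Finset.mem_univ, true_and]
            left
            rw [h1, h2]
            exact ⟨le_refl w, hq0c⟩
          · rw [ftop, he0]
            simp only [h2]
            rw [if_neg hq0c]
        · constructor
          · simp only [SpS, Finset.mem_filter, Finset.mem_univ, true_and]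
            right
            rw [h1, h2]
            exact ⟨hq0c, le_refl w⟩
          · rw [ftop, he0]
            simp only [h1]
            rw [if_pos (le_refl w)]
      rcases Nat.eq_zero_or_pos (m - (InS a b w).card) with hz | hpos
      · rw [hz]
        rw [card_cnt_in_zero (SpS a b w) (ftop b w) q0 e0 hq0Sp.1 hq0Sp.2]
        exact ⟨Nat.zero_le _, fun _ => Nat.zero_le _⟩
      · have hval := card_cnt_in (SpS a b w) (ftop b w) (m - (InS a b w).card) q0 e0
          hq0Sp.1 hq0Sp.2 hpos
        rw [hval]
        obtain ⟨R, hR⟩ : ∃ R, m - (InS a b w).card = R + 1 :=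
          ⟨m - (InS a b w).card - 1, by clear * - hpos; omega⟩
        obtain ⟨T, hT⟩ : ∃ T, (SpS a b w).card = T + 1 :=
          ⟨(SpS a b w).card - 1, by clear * - ht2r; omega⟩
        have hTR : 2 * R + 2 ≤ T := by clear * - ht2r hR hT; omega
        constructor
        · apply Nat.mul_le_mul_right
          rw [hR, hT, Nat.add_sub_cancel, Nat.add_sub_cancel]
          exact choose_step hTR
        · intro hroom
          rw [hT] at hroom
          rw [hR, hT, Nat.add_sub_cancel, Nat.add_sub_cancel,
            Nat.choose_succ_succ, hpow2 (n - (T+1)) hroom]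
          simp only [Nat.succ_eq_add_one]
          calc T.choose R * (2 * 2 ^ (n - (T + 1) - 1))
              = (2 * T.choose R) * 2 ^ (n - (T + 1) - 1) := by ring
            _ ≤ (T.choose R + T.choose (R + 1)) * 2 ^ (n - (T + 1) - 1) := by
                apply Nat.mul_le_mul_right
                have := choose_step hTR
                clear * - this
                omega
  by_cases hc : w ≤ pv1
  · -- CASE I : the partner of w' is above w
    have hq1Spw : q1 ∈ SpS a b w := by
      simp only [SpS, Finset.mem_filter, Finset.mem_univ, true_and]
      rcases hq1sides with ⟨h1, h2⟩ | ⟨h1, h2⟩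
      · right
        rw [h1, h2]
        exact ⟨not_le.mpr hww', hc⟩
      · left
        rw [h1, h2]
        exact ⟨hc, not_le.mpr hww'⟩
    have hq1notInw : q1 ∉ InS a b w := by
      simp only [InS, Finset.mem_filter, Finset.mem_univ, true_and]
      rcases hq1sides with ⟨h1, h2⟩ | ⟨h1, h2⟩
      · rw [h1, h2]; rintro ⟨hcon, -⟩; exact absurd hcon (not_le.mpr hww')
      · rw [h1, h2]; rintro ⟨-, hcon⟩; exact absurd hcon (not_le.mpr hww')
    have hInw' : InS a b w' = insert q1 (InS a b w) := by
      ext q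
      by_cases hqq : q = q1
      · subst hqq
        apply iff_of_true
        · simp only [InS, Finset.mem_filter, Finset.mem_univ, true_and]
          rcases hq1sides with ⟨h1, h2⟩ | ⟨h1, h2⟩
          · rw [h1, h2]; exact ⟨le_refl _, le_trans (le_of_lt hww') hc⟩
          · rw [h1, h2]; exact ⟨le_trans (le_of_lt hww') hc, le_refl _⟩
        · exact Finset.mem_insert_self _ _
      · simp only [Finset.mem_insert, InS, Finset.mem_filter, Finset.mem_univ, true_and]
        rw [hiffa q hqq, hiffb q hqq]
        simp [hqq]
    have hInCard : (InS a b w').card = (InS a b w).card + 1 := by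
      rw [hInw', Finset.card_insert_of_notMem hq1notInw]
    have hSpw' : SpS a b w' = (SpS a b w).erase q1 := by
      ext q
      by_cases hqq : q = q1
      · subst hqq
        apply iff_of_false
        · simp only [SpS, Finset.mem_filter, Finset.mem_univ, true_and]
          rcases hq1sides with ⟨h1, h2⟩ | ⟨h1, h2⟩
          · rw [h1, h2]
            rintro (⟨-, hcon⟩ | ⟨hcon, -⟩)
            · exact hcon (le_trans (le_of_lt hww') hc)
            · exact hcon (le_refl _)
          · rw [h1, h2]
            rintro (⟨-, hcon⟩ | ⟨hcon, -⟩)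
            · exact hcon (le_refl _)
            · exact hcon (le_trans (le_of_lt hww') hc)
        · exact Finset.notMem_erase _ _
      · simp only [Finset.mem_erase, SpS, Finset.mem_filter, Finset.mem_univ, true_and, hqq]
        rw [hiffa q hqq, hiffb q hqq]
        simp [hqq]
    have hshape1 : (univ.filter fun σ : Fin n → Bool =>
          σ q1 = e1 ∧ (InS a b w').card
            + ((SpS a b w').filter fun q => σ q = ftop b w' q).card = m + 1)
        = (univ.filter fun σ : Fin n → Bool =>
          σ q1 = e1 ∧ (((SpS a b w).erase q1).filter fun q => σ q = ftop b w' q).card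
            = m - (InS a b w).card) := by
      apply Finset.filter_congr
      intro σ _
      rw [hSpw', hInCard]
      constructor
      · rintro ⟨h1, h2⟩
        exact ⟨h1, by clear * - h2 hdm; omega⟩
      · rintro ⟨h1, h2⟩
        exact ⟨h1, by clear * - h2 hdm; omega⟩
    rw [hshape1, card_cnt_out ((SpS a b w).erase q1) (ftop b w') (m - (InS a b w).card)
      q1 e1 (Finset.notMem_erase _ _), Finset.card_erase_of_mem hq1Spw]
    have hexp : n - ((SpS a b w).card - 1) - 1 = n - (SpS a b w).card := by
      have ht1 : 1 ≤ (SpS a b w).card := Finset.card_pos.mpr ⟨q1, hq1Spw⟩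
      have htn : (SpS a b w).card ≤ n := by
        have := Finset.card_le_card (Finset.subset_univ (SpS a b w))
        rwa [Finset.card_univ, Fintype.card_fin] at this
      clear * - ht1 htn
      omega
    rw [hexp]
    exact hB.1
  · -- CASE II : the partner of w' is below w'
    have hpv1ltw' : ¬ w' ≤ pv1 := by
      intro h
      rcases hGap pv1 hpv1_range h with h2 | h2
      · exact hc h2
      · exact hpv1_ne h2
    have hq1f : ftop b w' q1 = e1 := by
      rcases hside1 with ⟨he1, h1, h2⟩ | ⟨he1, h1, h2⟩
      · rw [ftop, he1]
        simp only [h2]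
        rw [if_neg hpv1ltw']
      · rw [ftop, he1]
        simp only [h1]
        rw [if_pos (le_refl w')]
    have hq1notSpw : q1 ∉ SpS a b w := by
      simp only [SpS, Finset.mem_filter, Finset.mem_univ, true_and]
      rcases hq1sides with ⟨h1, h2⟩ | ⟨h1, h2⟩ <;> rw [h1, h2]
      · rintro (⟨hcon, -⟩ | ⟨-, hcon⟩)
        · exact absurd hcon (not_le.mpr hww')
        · exact hc hcon
      · rintro (⟨hcon, -⟩ | ⟨-, hcon⟩)
        · exact hc hcon
        · exact absurd hcon (not_le.mpr hww')
    have hInw'2 : InS a b w' = InS a b w := by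
      ext q
      by_cases hqq : q = q1
      · subst hqq
        simp only [InS, Finset.mem_filter, Finset.mem_univ, true_and]
        apply iff_of_false
        · rcases hq1sides with ⟨h1, h2⟩ | ⟨h1, h2⟩ <;> rw [h1, h2]
          · rintro ⟨-, hcon⟩; exact hpv1ltw' hcon
          · rintro ⟨hcon, -⟩; exact hpv1ltw' hcon
        · rcases hq1sides with ⟨h1, h2⟩ | ⟨h1, h2⟩ <;> rw [h1, h2]
          · rintro ⟨hcon, -⟩; exact absurd hcon (not_le.mpr hww')
          · rintro ⟨-, hcon⟩; exact absurd hcon (not_le.mpr hww')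
      · simp only [InS, Finset.mem_filter, Finset.mem_univ, true_and]
        rw [hiffa q hqq, hiffb q hqq]
    have hSpw'2 : SpS a b w' = insert q1 (SpS a b w) := by
      ext q
      by_cases hqq : q = q1
      · subst hqq
        apply iff_of_true
        · simp only [SpS, Finset.mem_filter, Finset.mem_univ, true_and]
          rcases hq1sides with ⟨h1, h2⟩ | ⟨h1, h2⟩ <;> rw [h1, h2]
          · exact Or.inl ⟨le_refl _, hpv1ltw'⟩
          · exact Or.inr ⟨hpv1ltw', le_refl _⟩
        · exact Finset.mem_insert_self _ _
      · simp only [Finset.mem_insert, SpS, Finset.mem_filter, Finset.mem_univ, true_and]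
        rw [hiffa q hqq, hiffb q hqq]
        simp [hqq]
    have htn : (SpS a b w).card + 1 ≤ n := by
      have hsub : SpS a b w ⊆ univ.erase q1 := by
        intro x hx
        exact Finset.mem_erase.mpr ⟨by rintro rfl; exact hq1notSpw hx, Finset.mem_univ _⟩
      have hle := Finset.card_le_card hsub
      rw [Finset.card_erase_of_mem (Finset.mem_univ _), Finset.card_univ,
        Fintype.card_fin] at hle
      have hn : 0 < n := q1.pos
      clear * - hle hn
      omega
    have hshape2 : (univ.filter fun σ : Fin n → Bool =>
          σ q1 = e1 ∧ (InS a b w').card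
            + ((SpS a b w').filter fun q => σ q = ftop b w' q).card = m + 1)
        = (univ.filter fun σ : Fin n → Bool =>
          σ q1 = e1 ∧ ((insert q1 (SpS a b w)).filter fun q => σ q = ftop b w' q).card
            = (m - (InS a b w).card) + 1) := by
      apply Finset.filter_congr
      intro σ _
      rw [hSpw'2, hInw'2]
      constructor
      · rintro ⟨h1, h2⟩
        exact ⟨h1, by clear * - h2 hdm; omega⟩
      · rintro ⟨h1, h2⟩
        exact ⟨h1, by clear * - h2 hdm; omega⟩
    rw [hshape2, card_cnt_in (insert q1 (SpS a b w)) (ftop b w')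
      ((m - (InS a b w).card) + 1) q1 e1 (Finset.mem_insert_self _ _) hq1f
      (Nat.succ_le_succ (Nat.zero_le _)),
      Finset.card_insert_of_notMem hq1notSpw, Nat.add_sub_cancel, Nat.add_sub_cancel]
    have hexp2 : n - ((SpS a b w).card + 1) = n - (SpS a b w).card - 1 := by
      clear * -
      omega
    rw [hexp2]
    exact hB.2 (by clear * - htn; omega)

end CoreCount

section Core

variable {n : ℕ} {a b : Fin n → ℝ}

lemma core (hdist : Function.Injective (Sum.elim a b : Fin n ⊕ Fin n → ℝ))
    {m s : ℕ} (hm : 1 ≤ m) (hms : m + 1 ≤ s) (hsn : s + 1 ≤ n) :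
    (univ.filter fun σ : Fin n → Bool =>
        XS a b σ (s+1) < YS a b σ m ∧ YS a b σ m < XS a b σ s).card
      ≤ (univ.filter fun σ : Fin n → Bool =>
        XS a b σ (s+1) < YS a b σ (m+1) ∧ YS a b σ (m+1) < XS a b σ s).card := by
  have hallinj := allv_inj hdist
  have hmn : m ≤ n := by omega
  have hm1n : m + 1 ≤ n := by omega
  have hs1 : 1 ≤ s := by omega
  have hp1 : 1 ≤ s + m := by omega
  have hpnn : s + m ≤ n + n := by omega
  have hp1nn : s + (m + 1) ≤ n + n := by omega
  have hsm1 : s + (m + 1) = (s + m) + 1 := by omega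
  have h1 : (univ.filter fun σ : Fin n → Bool =>
        XS a b σ (s+1) < YS a b σ m ∧ YS a b σ m < XS a b σ s)
      = (univ.filter fun σ : Fin n → Bool =>
        (∃ q, Yvals a b σ q = kthLargest (allv a b) (s+m))
          ∧ cnt (Yvals a b σ) (kthLargest (allv a b) (s+m)) = m) :=
    Finset.filter_congr fun σ _ => event_iff hdist hm hmn hs1 hsn hpnn σ
  have h2 : (univ.filter fun σ : Fin n → Bool =>
        XS a b σ (s+1) < YS a b σ (m+1) ∧ YS a b σ (m+1) < XS a b σ s)
      = (univ.filter fun σ : Fin n → Bool =>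
        (∃ q, Yvals a b σ q = kthLargest (allv a b) ((s+m)+1))
          ∧ cnt (Yvals a b σ) (kthLargest (allv a b) ((s+m)+1)) = m + 1) := by
    refine Finset.filter_congr fun σ _ => ?_
    have := event_iff hdist (by omega : 1 ≤ m + 1) hm1n hs1 hsn hp1nn σ
    rwa [hsm1] at this
  rw [h1, h2]
  -- facts about the two cutoffs
  have hw_range := kth_mem_range (v := allv a b) hp1 hpnn
  have hw'_range := kth_mem_range (v := allv a b) (by omega : 1 ≤ (s+m)+1)
    (by omega : (s+m)+1 ≤ n + n)
  have hw_cnt : cnt (allv a b) (kthLargest (allv a b) (s+m)) = s + m :=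
    cnt_kth hallinj hp1 hpnn
  have hw'_cnt : cnt (allv a b) (kthLargest (allv a b) ((s+m)+1)) = s + m + 1 :=
    cnt_kth hallinj (by omega) (by omega)
  have hww' : kthLargest (allv a b) ((s+m)+1) < kthLargest (allv a b) (s+m) := by
    have hle : kthLargest (allv a b) ((s+m)+1) ≤ kthLargest (allv a b) (s+m) :=
      kth_anti hp1 (Nat.le_succ _) (by omega)
    rcases eq_or_lt_of_le hle with h | h
    · exfalso
      rw [h, hw_cnt] at hw'_cnt
      omega
    · exact h
  -- the gap property
  have hGap : ∀ u, u ∈ Set.range (allv a b) →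
      kthLargest (allv a b) ((s+m)+1) ≤ u →
      (kthLargest (allv a b) (s+m) ≤ u ∨ u = kthLargest (allv a b) ((s+m)+1)) := by
    obtain ⟨i', hi'⟩ := hw'_range
    have hi'notw : i' ∉ (univ.filter fun idx =>
        kthLargest (allv a b) (s+m) ≤ allv a b idx) := by
      simp only [Finset.mem_filter, Finset.mem_univ, true_and]
      rw [hi']
      exact not_le.mpr hww'
    have hsub : insert i' (univ.filter fun idx =>
          kthLargest (allv a b) (s+m) ≤ allv a b idx)
        ⊆ (univ.filter fun idx => kthLargest (allv a b) ((s+m)+1) ≤ allv a b idx) := by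
      intro idx hidx
      rcases Finset.mem_insert.mp hidx with rfl | hidx
      · simp only [Finset.mem_filter, Finset.mem_univ, true_and]
        rw [hi']
      · simp only [Finset.mem_filter, Finset.mem_univ, true_and] at hidx ⊢
        exact le_trans (le_of_lt hww') hidx
    have hcards : (univ.filter fun idx =>
          kthLargest (allv a b) ((s+m)+1) ≤ allv a b idx).card
        ≤ (insert i' (univ.filter fun idx =>
          kthLargest (allv a b) (s+m) ≤ allv a b idx)).card := by
      rw [Finset.card_insert_of_notMem hi'notw]
      have hc1 : (univ.filter fun idx =>
          kthLargest (allv a b) (s+m) ≤ allv a b idx).card = s + m := hw_cnt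
      have hc2 : (univ.filter fun idx =>
          kthLargest (allv a b) ((s+m)+1) ≤ allv a b idx).card = s + m + 1 := hw'_cnt
      rw [hc1, hc2]
    have heq := Finset.eq_of_subset_of_card_le hsub hcards
    intro u hu hle
    obtain ⟨iu, hiu⟩ := hu
    have hmem : iu ∈ (univ.filter fun idx =>
        kthLargest (allv a b) ((s+m)+1) ≤ allv a b idx) := by
      simp only [Finset.mem_filter, Finset.mem_univ, true_and]
      rw [hiu]
      exact hle
    rw [← heq] at hmem
    rcases Finset.mem_insert.mp hmem with rfl | hmem
    · right
      rw [← hiu, hi']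
    · left
      simp only [Finset.mem_filter, Finset.mem_univ, true_and] at hmem
      rw [← hiu]
      exact hmem
  exact core_count hdist hm hms hw_range hw'_range hw_cnt hw'_cnt hww' hGap

end Core

section Chain

variable {n : ℕ} {a b : Fin n → ℝ}

/-- monotonicity of the "sandwich" count in the middle rank -/
lemma h_mono (hdist : Function.Injective (Sum.elim a b : Fin n ⊕ Fin n → ℝ))
    {i j s : ℕ} (hi : 1 ≤ i) (hij : i ≤ j) (hjs : j ≤ s) (hsn : s + 1 ≤ n) :
    (univ.filter fun σ : Fin n → Bool =>
        XS a b σ (s+1) < YS a b σ i ∧ YS a b σ i < XS a b σ s).card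
      ≤ (univ.filter fun σ : Fin n → Bool =>
        XS a b σ (s+1) < YS a b σ j ∧ YS a b σ j < XS a b σ s).card := by
  induction j, hij using Nat.le_induction with
  | base => exact le_refl _
  | succ j hij ih =>
    have hjs' : j ≤ s := by omega
    exact le_trans (ih hjs') (core hdist (by omega) (by omega) hsn)

/-- the telescoped inequality : `F i K + F j j ≤ F j K + F i j` for `j ≤ K ≤ n` -/
lemma F_chain (hdist : Function.Injective (Sum.elim a b : Fin n ⊕ Fin n → ℝ))
    {i j K : ℕ} (hi : 1 ≤ i) (hij : i ≤ j) (hjK : j ≤ K) (hKn : K ≤ n) :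
    Fc a b i K + Fc a b j j ≤ Fc a b j K + Fc a b i j := by
  induction K, hjK using Nat.le_induction with
  | base => omega
  | succ K hjK ih =>
    have hKn' : K ≤ n := by omega
    have hik := ih hKn'
    have hj1 : 1 ≤ j := by omega
    have hK1 : 1 ≤ K := by omega
    have hsplit_i : (univ.filter fun σ : Fin n → Bool =>
          XS a b σ (K+1) < YS a b σ i ∧ YS a b σ i < XS a b σ K).card
        + Fc a b i K = Fc a b i (K+1) :=
      F_split hdist hi (by omega) hK1 (Nat.le_succ K) (by omega)
    have hsplit_j : (univ.filter fun σ : Fin n → Bool =>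
          XS a b σ (K+1) < YS a b σ j ∧ YS a b σ j < XS a b σ K).card
        + Fc a b j K = Fc a b j (K+1) :=
      F_split hdist hj1 (by omega) hK1 (Nat.le_succ K) (by omega)
    have hcore := h_mono hdist hi hij hjK (by omega : K + 1 ≤ n)
    omega

end Chain

end Aux

/-- decidable instances don't matter for counting -/
lemma Aux.card_filter_irrel {α : Type*} [Fintype α] (p : α → Prop) (h1 h2 : DecidablePred p) :
    (@Finset.filter α p h1 Finset.univ).card = (@Finset.filter α p h2 Finset.univ).card := by
  rw [Subsingleton.elim h1 h2]

/-- If `1 ≤ i ≤ j ≤ k ≤ n` then `Pr(X^i > Y^j > X^k) ≥ Pr(X^i > Y^k > X^k)`. -/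
theorem inbetween_rank
    (n : ℕ) (hn : 1 ≤ n) (a b : Fin n → ℝ)
    (ha : ∀ i, 0 < a i) (hb : ∀ i, 0 < b i)
    (hdistinct : Function.Injective (Sum.elim a b : Fin n ⊕ Fin n → ℝ))
    (i j k : ℕ) (hi1 : 1 ≤ i) (hij : i ≤ j) (hjk : j ≤ k) (hkn : k ≤ n) :
    Pr (fun σ => XS a b σ k < YS a b σ k ∧ YS a b σ k < XS a b σ i)
      ≤ Pr (fun σ => XS a b σ k < YS a b σ j ∧ YS a b σ j < XS a b σ i) := by
  classical
  have hj1 : 1 ≤ j := le_trans hi1 hij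
  have hk1 : 1 ≤ k := le_trans hj1 hjk
  have hin : i ≤ n := by omega
  have hjn : j ≤ n := by omega
  -- main counting inequality
  have hmain : (Finset.univ.filter (fun σ : Fin n → Bool =>
        XS a b σ k < YS a b σ k ∧ YS a b σ k < XS a b σ i)).card
      ≤ (Finset.univ.filter (fun σ : Fin n → Bool =>
        XS a b σ k < YS a b σ j ∧ YS a b σ j < XS a b σ i)).card := by
    have hA : (Finset.univ.filter (fun σ : Fin n → Bool =>
          XS a b σ k < YS a b σ k ∧ YS a b σ k < XS a b σ i)).card
        + Aux.Fc a b k i = Aux.Fc a b k k :=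
      Aux.F_split hdistinct hk1 hkn hi1 (le_trans hij hjk) hkn
    have hB : (Finset.univ.filter (fun σ : Fin n → Bool =>
          XS a b σ k < YS a b σ j ∧ YS a b σ j < XS a b σ i)).card
        + Aux.Fc a b j i = Aux.Fc a b j k :=
      Aux.F_split hdistinct hj1 hjn hi1 (le_trans hij hjk) hkn
    have hchain : Aux.Fc a b i k + Aux.Fc a b j j ≤ Aux.Fc a b j k + Aux.Fc a b i j :=
      Aux.F_chain hdistinct hi1 hij hjk hkn
    have hflip1 : Aux.Fc a b i k + Aux.Fc a b k i = 2 ^ n :=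
      Aux.F_flip hdistinct hi1 hin hk1 hkn
    have hflip2 : Aux.Fc a b j i + Aux.Fc a b i j = 2 ^ n :=
      Aux.F_flip hdistinct hj1 hjn hi1 hin
    have hflip3 : Aux.Fc a b k k + Aux.Fc a b k k = 2 ^ n :=
      Aux.F_flip hdistinct hk1 hkn hk1 hkn
    have hflip4 : Aux.Fc a b j j + Aux.Fc a b j j = 2 ^ n :=
      Aux.F_flip hdistinct hj1 hjn hj1 hjn
    generalize hGen : (2:ℕ) ^ n = C at hflip1 hflip2 hflip3 hflip4
    omega
  -- pass to probabilities
  rw [Pr, Pr]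
  have hpos : (0:ℝ) < 2 ^ n := by positivity
  rw [div_le_div_iff_of_pos_right hpos]
  have e1 := Aux.card_filter_irrel (fun σ : Fin n → Bool =>
      XS a b σ k < YS a b σ k ∧ YS a b σ k < XS a b σ i)
    (fun σ => Classical.propDecidable _) inferInstance
  have e2 := Aux.card_filter_irrel (fun σ : Fin n → Bool =>
      XS a b σ k < YS a b σ j ∧ YS a b σ j < XS a b σ i)
    (fun σ => Classical.propDecidable _) inferInstance
  exact_mod_cast le_trans (le_of_eq e1) (le_trans hmain (le_of_eq e2.symm))
end
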